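/- arXiv:1504.04682 — 8 statements merged into one kernel-verified Lean document; each statement's English description precedes it below -/
import Mathlib

section
/- The functions F and G are classical solutions of the ordinary differential equation (σ²/2)·u''(x) + μ(θ − x)·u'(x) − r·u(x) = 0 for all x ∈ ℝ. -/
open Real MeasureTheory Set Filter

open Topology

private lemma cont_aux (p b : ℝ) : ContinuousOn (fun u : ℝ => u ^ p * Real.exp (b * u - u ^ 2 / 2)) (Ioi 0) := by
  apply ContinuousOn.mul
  · intro u hu
    exact (Real.continuousAt_rpow_const u p (Or.inl (ne_of_gt hu))).continuousWithinAt
  · exact (Real.continuous_exp.comp (by continuity)).continuousOn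

private lemma integ_aux {p : ℝ} (b : ℝ) (hp : -1 < p) :
    IntegrableOn (fun u : ℝ => u ^ p * Real.exp (b * u - u ^ 2 / 2)) (Ioi 0) := by
  have hg : IntegrableOn
      (fun u : ℝ => Real.exp (b ^ 2) * (u ^ p * Real.exp (-(1/4 : ℝ) * u ^ 2))) (Ioi 0) :=
    (integrableOn_rpow_mul_exp_neg_mul_sq (by norm_num) hp).const_mul _
  refine hg.mono' ((cont_aux p b).aestronglyMeasurable measurableSet_Ioi) ?_
  filter_upwards [ae_restrict_mem measurableSet_Ioi] with u hu
  have hup : 0 ≤ u ^ p := Real.rpow_nonneg (le_of_lt hu) p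
  rw [Real.norm_eq_abs, abs_mul, abs_of_nonneg hup, abs_of_nonneg (Real.exp_pos _).le]
  have h1 : b * u - u ^ 2 / 2 ≤ b ^ 2 + (-(1/4) * u ^ 2) := by nlinarith [sq_nonneg (u/2 - b)]
  calc u ^ p * Real.exp (b * u - u ^ 2 / 2)
      ≤ u ^ p * Real.exp (b ^ 2 + (-(1/4) * u ^ 2)) :=
        mul_le_mul_of_nonneg_left (Real.exp_le_exp.2 h1) hup
    _ = Real.exp (b ^ 2) * (u ^ p * Real.exp (-(1/4) * u ^ 2)) := by rw [Real.exp_add]; ring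

private lemma tendsto_aux (p b : ℝ) :
    Tendsto (fun u : ℝ => u ^ p * Real.exp (b * u - u ^ 2 / 2)) atTop (𝓝 0) := by
  apply squeeze_zero' (g := fun u : ℝ => u ^ p * Real.exp (-1 * u))
  · filter_upwards [eventually_ge_atTop (0:ℝ)] with u hu
    exact mul_nonneg (Real.rpow_nonneg hu p) (Real.exp_pos _).le
  · filter_upwards [eventually_ge_atTop (max (2*b+2) 0)] with u hu
    have hu0 : (0:ℝ) ≤ u := le_trans (le_max_right _ _) hu
    have hub : 2*b+2 ≤ u := le_trans (le_max_left _ _) hu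
    have h1 : b * u - u^2/2 ≤ -1 * u := by nlinarith [mul_nonneg hu0 (show (0:ℝ) ≤ u - (2*b+2) by linarith)]
    exact mul_le_mul_of_nonneg_left (Real.exp_le_exp.2 h1) (Real.rpow_nonneg hu0 p)
  · exact tendsto_rpow_mul_exp_neg_mul_atTop_nhds_zero p 1 one_pos

private lemma deriv_step (k θ : ℝ) {p : ℝ} (hp : -1 < p) (x₀ : ℝ) :
    HasDerivAt (fun y => ∫ u in Ioi (0:ℝ), u ^ p * Real.exp (k * (y - θ) * u - u ^ 2 / 2))
      (∫ u in Ioi (0:ℝ), (k * u) * (u ^ p * Real.exp (k * (x₀ - θ) * u - u ^ 2 / 2))) x₀ := by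
  set B : ℝ := |k| * (1 + |x₀| + |θ|) with hB
  have main := hasDerivAt_integral_of_dominated_loc_of_deriv_le
    (μ := volume.restrict (Ioi (0:ℝ))) (x₀ := x₀) (s := Metric.ball x₀ 1)
    (F := fun y u => u ^ p * Real.exp (k * (y - θ) * u - u ^ 2 / 2))
    (F' := fun y u => (k * u) * (u ^ p * Real.exp (k * (y - θ) * u - u ^ 2 / 2)))
    (bound := fun u => |k| * (u ^ (p+1) * Real.exp (B * u - u ^ 2 / 2)))
    (Metric.ball_mem_nhds x₀ one_pos) ?_ ?_ ?_ ?_ ?_ ?_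
  · exact main.2
  · exact Eventually.of_forall fun y =>
      (cont_aux p (k * (y - θ))).aestronglyMeasurable measurableSet_Ioi
  · exact integ_aux (k * (x₀ - θ)) hp
  · apply ContinuousOn.aestronglyMeasurable _ measurableSet_Ioi
    exact (continuous_const.mul continuous_id).continuousOn.mul (cont_aux p (k * (x₀ - θ)))
  · filter_upwards [ae_restrict_mem measurableSet_Ioi] with u hu
    intro y hy
    have hu0 : (0:ℝ) < u := hu
    have hpow : u ^ (p+1) = u ^ p * u := Real.rpow_add_one (ne_of_gt hu0) p
    have hnorm : ‖(k * u) * (u ^ p * Real.exp (k * (y - θ) * u - u ^ 2 / 2))‖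
        = |k| * (u ^ p * u * Real.exp (k * (y - θ) * u - u ^ 2 / 2)) := by
      rw [Real.norm_eq_abs, abs_mul, abs_mul, abs_of_pos hu0,
        abs_mul, abs_of_nonneg (Real.rpow_nonneg hu0.le p),
        abs_of_nonneg (Real.exp_pos _).le]
      ring
    rw [hnorm, hpow]
    have hyb : k * (y - θ) ≤ B := by
      calc k * (y - θ) ≤ |k * (y - θ)| := le_abs_self _
        _ = |k| * |y - θ| := abs_mul _ _
        _ ≤ |k| * (1 + |x₀| + |θ|) := by
            apply mul_le_mul_of_nonneg_left _ (abs_nonneg k)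
            have h1 : |y - θ| ≤ |y - x₀| + |x₀| + |θ| := by
              calc |y - θ| = |(y - x₀) + (x₀ - θ)| := by ring_nf
                _ ≤ |y - x₀| + |x₀ - θ| := abs_add_le _ _
                _ ≤ |y - x₀| + (|x₀| + |θ|) := by
                    have := abs_sub x₀ θ
                    linarith
                _ = |y - x₀| + |x₀| + |θ| := by ring
            have h2 : |y - x₀| ≤ 1 := le_of_lt (by simpa [Real.dist_eq] using Metric.mem_ball.1 hy)
            linarith
    have : k * (y - θ) * u ≤ B * u := mul_le_mul_of_nonneg_right hyb hu0.le
    have := Real.exp_le_exp.2 (by linarith : k * (y - θ) * u - u^2/2 ≤ B * u - u^2/2)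
    have hx := mul_le_mul_of_nonneg_left this
      (mul_nonneg (Real.rpow_nonneg hu0.le p) hu0.le)
    calc |k| * (u ^ p * u * Real.exp (k * (y - θ) * u - u ^ 2 / 2))
        ≤ |k| * (u ^ p * u * Real.exp (B * u - u ^ 2 / 2)) :=
          mul_le_mul_of_nonneg_left hx (abs_nonneg k)
      _ = |k| * (u ^ p * u * Real.exp (B * u - u ^ 2 / 2)) := rfl
  · apply Integrable.const_mul
    exact integ_aux B (by linarith)
  · filter_upwards [ae_restrict_mem measurableSet_Ioi] with u hu
    intro y hy
    have h1 : HasDerivAt (fun y : ℝ => k * (y - θ) * u - u ^ 2 / 2) (k * u) y := by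
      simpa using ((((hasDerivAt_id y).sub_const θ).const_mul k).mul_const u).sub_const (u^2/2)
    have h2 := (h1.exp).const_mul (u ^ p)
    exact h2.congr_deriv (by ring)

private lemma rpow_succ_aux {u : ℝ} (hu : u ≠ 0) (q : ℝ) : u ^ (q + 1) = u ^ q * u :=
  Real.rpow_add_one hu q

private lemma boundary {s : ℝ} (hs : 0 < s) (b : ℝ) :
    s * (∫ u in Ioi (0:ℝ), u ^ (s-1) * Real.exp (b * u - u ^ 2 / 2))
      + b * (∫ u in Ioi (0:ℝ), u ^ s * Real.exp (b * u - u ^ 2 / 2))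
      - (∫ u in Ioi (0:ℝ), u ^ (s+1) * Real.exp (b * u - u ^ 2 / 2)) = 0 := by
  have key : ∫ u in Ioi (0:ℝ),
      (s * (u ^ (s-1) * Real.exp (b * u - u ^ 2 / 2))
        + b * (u ^ s * Real.exp (b * u - u ^ 2 / 2))
          - u ^ (s+1) * Real.exp (b * u - u ^ 2 / 2)) = 0 := by
    have := integral_Ioi_of_hasDerivAt_of_tendsto (a := (0:ℝ)) (m := 0)
      (f := fun u => u ^ s * Real.exp (b * u - u ^ 2 / 2))
      (f' := fun u => s * (u ^ (s-1) * Real.exp (b * u - u ^ 2 / 2))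
        + b * (u ^ s * Real.exp (b * u - u ^ 2 / 2))
          - u ^ (s+1) * Real.exp (b * u - u ^ 2 / 2)) ?_ ?_ ?_ ?_
    · rw [this, Real.zero_rpow (ne_of_gt hs)]
      simp
    · apply ContinuousWithinAt.mul
      · exact (Real.continuousAt_rpow_const 0 s (Or.inr hs.le)).continuousWithinAt
      · exact (Real.continuous_exp.comp (by continuity)).continuousWithinAt
    · intro u hu
      have hu0 : (0:ℝ) < u := hu
      have h1 : HasDerivAt (fun u : ℝ => b * u - u ^ 2 / 2) (b - u) u := by
        exact (((hasDerivAt_id u).const_mul b).sub ((hasDerivAt_pow 2 u).div_const 2)).congr_deriv (by norm_num)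
      have h2 : HasDerivAt (fun u : ℝ => u ^ s) (s * u ^ (s-1)) u :=
        Real.hasDerivAt_rpow_const (Or.inl (ne_of_gt hu0))
      have h3 := h2.mul h1.exp
      exact h3.congr_deriv (by rw [rpow_succ_aux (ne_of_gt hu0)]; ring)
    · have hi1 := (integ_aux b (by linarith : (-1:ℝ) < s - 1)).const_mul s
      have hi2 := (integ_aux b (by linarith : (-1:ℝ) < s)).const_mul b
      have hi3 := integ_aux b (by linarith : (-1:ℝ) < s + 1)
      exact (hi1.add hi2).sub hi3
    · exact tendsto_aux s b
  have hi1 := (integ_aux b (by linarith : (-1:ℝ) < s - 1)).const_mul s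
  have hi2 := (integ_aux b (by linarith : (-1:ℝ) < s)).const_mul b
  have hi3 := integ_aux b (by linarith : (-1:ℝ) < s + 1)
  have hi12 : Integrable (fun u : ℝ => s * (u ^ (s-1) * Real.exp (b * u - u ^ 2 / 2))
      + b * (u ^ s * Real.exp (b * u - u ^ 2 / 2))) (volume.restrict (Ioi 0)) := hi1.add hi2
  rw [integral_sub hi12 hi3, integral_add hi1 hi2,
    integral_const_mul, integral_const_mul] at key
  linarith

private lemma master {k s : ℝ} (θ : ℝ) (hk : k ≠ 0) (hs : 0 < s) :
    ∃ Ψ' Ψ'' : ℝ → ℝ,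
      (∀ x, HasDerivAt
        (fun y => ∫ u in Ioi (0:ℝ), u ^ (s-1) * Real.exp (k * (y - θ) * u - u ^ 2 / 2))
        (Ψ' x) x) ∧
      (∀ x, HasDerivAt Ψ' (Ψ'' x) x) ∧
      (∀ x, Ψ'' x / k ^ 2 + (θ - x) * Ψ' x
        - s * (∫ u in Ioi (0:ℝ), u ^ (s-1) * Real.exp (k * (x - θ) * u - u ^ 2 / 2)) = 0) := by
  have hcongr : ∀ (q : ℝ) (x : ℝ),
      ∫ u in Ioi (0:ℝ), (k * u) * (u ^ q * Real.exp (k * (x - θ) * u - u ^ 2 / 2))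
        = k * ∫ u in Ioi (0:ℝ), u ^ (q+1) * Real.exp (k * (x - θ) * u - u ^ 2 / 2) := by
    intro q x
    rw [← integral_const_mul]
    apply setIntegral_congr_fun measurableSet_Ioi
    intro u hu
    simp only [rpow_succ_aux (ne_of_gt hu)]
    ring
  refine ⟨fun x => k * ∫ u in Ioi (0:ℝ), u ^ s * Real.exp (k * (x - θ) * u - u ^ 2 / 2),
    fun x => k ^ 2 * ∫ u in Ioi (0:ℝ), u ^ (s+1) * Real.exp (k * (x - θ) * u - u ^ 2 / 2),
    fun x => ?_, fun x => ?_, fun x => ?_⟩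
  · have h := deriv_step k θ (by linarith : (-1:ℝ) < s - 1) x
    rw [hcongr (s-1) x, show s - 1 + 1 = s by ring] at h
    exact h
  · have h := (deriv_step k θ (by linarith : (-1:ℝ) < s) x).const_mul k
    rw [hcongr s x] at h
    exact h.congr_deriv (by ring)
  · have hb := boundary hs (k * (x - θ))
    simp only
    rw [mul_div_cancel_left₀ _ (pow_ne_zero 2 hk)]
    linear_combination -hb

private lemma ode_scale {μ σ r A B C : ℝ} (hμ : 0 < μ) (hσ : 0 < σ)
    (h : A / (2*μ/σ^2) + B - (r/μ) * C = 0) :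
    σ^2/2 * A + μ * B - r * C = 0 := by
  have hμ0 : μ ≠ 0 := ne_of_gt hμ
  have hσ0 : σ ≠ 0 := ne_of_gt hσ
  have e1 : A / (2*μ/σ^2) = σ^2/(2*μ) * A := by field_simp
  rw [e1] at h
  have e2 : σ^2/2 * A + μ * B - r * C = μ * (σ^2/(2*μ) * A + B - (r/μ) * C) := by
    field_simp
  rw [e2, h, mul_zero]



/-- F and G are classical solutions of
(σ²/2)·u''(x) + μ(θ − x)·u'(x) − r·u(x) = 0 on ℝ. -/
theorem stmt1
    (μ σ θ r c_s c_b : ℝ)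
    (hμ : 0 < μ) (hσ : 0 < σ) (hr : 0 < r) (hcs : 0 < c_s) (hcb : 0 < c_b)
    (F G : ℝ → ℝ)
    (hF : ∀ x : ℝ, F x = ∫ u in Ioi (0:ℝ),
        u ^ (r / μ - 1) * Real.exp (Real.sqrt (2 * μ / σ ^ 2) * (x - θ) * u - u ^ 2 / 2))
    (hG : ∀ x : ℝ, G x = ∫ u in Ioi (0:ℝ),
        u ^ (r / μ - 1) * Real.exp (Real.sqrt (2 * μ / σ ^ 2) * (θ - x) * u - u ^ 2 / 2)) :
    (∀ x, DifferentiableAt ℝ F x) ∧ (∀ x, DifferentiableAt ℝ (deriv F) x) ∧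
    (∀ x, DifferentiableAt ℝ G x) ∧ (∀ x, DifferentiableAt ℝ (deriv G) x) ∧
    (∀ x : ℝ, σ ^ 2 / 2 * deriv (deriv F) x + μ * (θ - x) * deriv F x - r * F x = 0) ∧
    (∀ x : ℝ, σ ^ 2 / 2 * deriv (deriv G) x + μ * (θ - x) * deriv G x - r * G x = 0) := by
  set k : ℝ := Real.sqrt (2 * μ / σ ^ 2) with hkdef
  have hk2 : k ^ 2 = 2 * μ / σ ^ 2 := Real.sq_sqrt (by positivity)
  have hk : k ≠ 0 := by
    have : (0:ℝ) < k := Real.sqrt_pos.mpr (by positivity)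
    exact ne_of_gt this
  have hs : 0 < r / μ := div_pos hr hμ
  -- F part
  obtain ⟨F', F'', hF1, hF2, hFode⟩ := master (k := k) (s := r / μ) θ hk hs
  have hFfun : F = fun y => ∫ u in Ioi (0:ℝ),
      u ^ (r / μ - 1) * Real.exp (k * (y - θ) * u - u ^ 2 / 2) := funext hF
  have hdF : ∀ x, HasDerivAt F (F' x) x := fun x => by rw [hFfun]; exact hF1 x
  have hderivF : deriv F = F' := funext fun x => (hdF x).deriv
  have hdF2 : ∀ x, HasDerivAt (deriv F) (F'' x) x := fun x => by rw [hderivF]; exact hF2 x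
  -- G part
  have hk' : -k ≠ 0 := neg_ne_zero.mpr hk
  obtain ⟨G', G'', hG1, hG2, hGode⟩ := master (k := -k) (s := r / μ) θ hk' hs
  have hG' : ∀ x : ℝ, G x = ∫ u in Ioi (0:ℝ),
      u ^ (r / μ - 1) * Real.exp (-k * (x - θ) * u - u ^ 2 / 2) := by
    intro x
    rw [hG x]
    refine setIntegral_congr_fun measurableSet_Ioi fun u hu => ?_
    congr 2
    ring
  have hGfun : G = fun y => ∫ u in Ioi (0:ℝ),
      u ^ (r / μ - 1) * Real.exp (-k * (y - θ) * u - u ^ 2 / 2) := funext hG'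
  have hdG : ∀ x, HasDerivAt G (G' x) x := fun x => by rw [hGfun]; exact hG1 x
  have hderivG : deriv G = G' := funext fun x => (hdG x).deriv
  have hdG2 : ∀ x, HasDerivAt (deriv G) (G'' x) x := fun x => by rw [hderivG]; exact hG2 x
  refine ⟨fun x => (hdF x).differentiableAt, fun x => (hdF2 x).differentiableAt,
    fun x => (hdG x).differentiableAt, fun x => (hdG2 x).differentiableAt, fun x => ?_, fun x => ?_⟩
  · have hb := hFode x
    rw [hk2] at hb
    rw [hderivF, (hF2 x).deriv, hF x]
    linear_combination ode_scale hμ hσ hb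
  · have hb := hGode x
    rw [neg_sq, hk2] at hb
    rw [hderivG, (hG2 x).deriv, hG' x]
    linear_combination ode_scale hμ hσ hb
end

section
/- The function ψ(x) = F(x)/G(x) is strictly positive and strictly increasing on ℝ, ψ(x) → 0 as x → −∞, and ψ(x) → +∞ as x → +∞; consequently ψ is a continuous bijection from ℝ onto (0, +∞). -/
open Real MeasureTheory Set Filter

namespace Stmt2Aux

noncomputable def g (p a u : ℝ) : ℝ := u ^ (p - 1) * Real.exp (a * u - u ^ 2 / 2)

lemma g_nonneg (p a : ℝ) {u : ℝ} (hu : 0 < u) : 0 ≤ g p a u :=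
  mul_nonneg (Real.rpow_nonneg hu.le _) (Real.exp_pos _).le

lemma g_contOn (p a : ℝ) : ContinuousOn (g p a) (Ioi 0) := by
  unfold g
  refine ContinuousOn.mul ?_ (by fun_prop)
  exact fun x hx => ((Real.continuousAt_rpow_const x _ (Or.inl (ne_of_gt hx))).continuousWithinAt)

lemma g_meas (p a : ℝ) : AEStronglyMeasurable (g p a) (volume.restrict (Ioi 0)) :=
  (g_contOn p a).aestronglyMeasurable measurableSet_Ioi

lemma g_integrable {p : ℝ} (hp : 0 < p) (a : ℝ) : IntegrableOn (g p a) (Ioi 0) := by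
  have hΓ : IntegrableOn (fun u : ℝ => Real.exp (-u) * u ^ (p - 1)) (Ioi 0) :=
    Real.GammaIntegral_convergent hp
  refine ((hΓ.const_mul (Real.exp ((a + 1) ^ 2 / 2))).mono' (g_meas p a) ?_)
  filter_upwards [ae_restrict_mem measurableSet_Ioi] with u hu
  rw [Real.norm_of_nonneg (g_nonneg p a hu)]
  have h1 : Real.exp (a * u - u ^ 2 / 2) ≤ Real.exp ((a + 1) ^ 2 / 2) * Real.exp (-u) := by
    rw [← Real.exp_add, Real.exp_le_exp]; nlinarith [sq_nonneg (a + 1 - u)]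
  calc g p a u ≤ u ^ (p - 1) * (Real.exp ((a + 1) ^ 2 / 2) * Real.exp (-u)) :=
        mul_le_mul_of_nonneg_left h1 (Real.rpow_nonneg hu.le _)
    _ = Real.exp ((a + 1) ^ 2 / 2) * (Real.exp (-u) * u ^ (p - 1)) := by ring


noncomputable def Phi (p a : ℝ) : ℝ := ∫ u in Ioi (0:ℝ), g p a u

lemma g_lower {p a u : ℝ} (hu : u ∈ Ioc (1:ℝ) 2) :
    min 1 (2 ^ (p - 1)) * Real.exp (min a (2 * a) - 2) ≤ g p a u := by
  obtain ⟨hu1, hu2⟩ := hu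
  have hup : (0:ℝ) < u := lt_trans one_pos hu1
  have h1 : min 1 (2 ^ (p - 1)) ≤ u ^ (p - 1) := by
    rcases le_or_gt 0 (p - 1) with h | h
    · exact le_trans (min_le_left _ _) (by
        calc (1:ℝ) = 1 ^ (p - 1) := (Real.one_rpow _).symm
        _ ≤ u ^ (p - 1) := Real.rpow_le_rpow zero_le_one hu1.le h)
    · exact le_trans (min_le_right _ _) (Real.rpow_le_rpow_of_nonpos hup hu2 h.le)
  have h2 : Real.exp (min a (2 * a) - 2) ≤ Real.exp (a * u - u ^ 2 / 2) := by
    rw [Real.exp_le_exp]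
    rcases le_or_gt 0 a with h | h
    · have := min_le_left a (2 * a); nlinarith
    · have := min_le_right a (2 * a); nlinarith
  calc min 1 (2 ^ (p - 1)) * Real.exp (min a (2 * a) - 2)
      ≤ u ^ (p - 1) * Real.exp (a * u - u ^ 2 / 2) := by
        apply mul_le_mul h1 h2 (Real.exp_pos _).le (Real.rpow_nonneg hup.le _)
    _ = g p a u := rfl

lemma Phi_lower {p : ℝ} (hp : 0 < p) (a : ℝ) :
    min 1 (2 ^ (p - 1)) * Real.exp (min a (2 * a) - 2) ≤ Phi p a := by
  have hIoc : IntegrableOn (g p a) (Ioc 1 2) :=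
    (g_integrable hp a).mono_set (fun u hu => lt_trans one_pos hu.1)
  have h1 : ∫ _ in Ioc (1:ℝ) 2, min 1 (2 ^ (p - 1)) * Real.exp (min a (2 * a) - 2)
      ≤ ∫ u in Ioc (1:ℝ) 2, g p a u := by
    refine setIntegral_mono_on (integrableOn_const ?_) hIoc measurableSet_Ioc
      (fun u hu => g_lower hu)
    simp [Real.volume_Ioc]
  have h2 : ∫ u in Ioc (1:ℝ) 2, g p a u ≤ Phi p a := by
    refine setIntegral_mono_set (g_integrable hp a) ?_ ?_
    · filter_upwards [ae_restrict_mem measurableSet_Ioi] with u hu using g_nonneg p a hu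
    · exact HasSubset.Subset.eventuallyLE (fun u hu => lt_trans one_pos hu.1)
  rw [setIntegral_const, measureReal_def, Real.volume_Ioc] at h1
  norm_num at h1
  linarith

lemma min_pos {p : ℝ} : (0:ℝ) < min 1 (2 ^ (p - 1)) :=
  lt_min one_pos (Real.rpow_pos_of_pos two_pos _)

lemma Phi_pos {p : ℝ} (hp : 0 < p) (a : ℝ) : 0 < Phi p a :=
  lt_of_lt_of_le (mul_pos min_pos (Real.exp_pos _)) (Phi_lower hp a)

lemma Phi_strictMono {p : ℝ} (hp : 0 < p) : StrictMono (Phi p) := by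
  intro a b hab
  have key : 0 < ∫ u in Ioi (0:ℝ), (g p b u - g p a u) := by
    rw [setIntegral_pos_iff_support_of_nonneg_ae]
    · have hsub : Ioi (0:ℝ) ⊆ Function.support (fun u => g p b u - g p a u) ∩ Ioi 0 := by
        intro u hu
        refine ⟨?_, hu⟩
        have : g p a u < g p b u := by
          unfold g
          exact mul_lt_mul_of_pos_left
            (Real.exp_lt_exp.2 (by nlinarith [mem_Ioi.1 hu])) (Real.rpow_pos_of_pos hu _)
        simpa [Function.mem_support] using sub_ne_zero.2 (ne_of_gt this)
      refine lt_of_lt_of_le ?_ (measure_mono hsub)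
      simp [Real.volume_Ioi]
    · filter_upwards [ae_restrict_mem measurableSet_Ioi] with u hu
      have : g p a u ≤ g p b u := by
        unfold g
        exact mul_le_mul_of_nonneg_left
          (Real.exp_le_exp.2 (by nlinarith [mem_Ioi.1 hu])) (Real.rpow_nonneg (le_of_lt hu) _)
      simpa using sub_nonneg.2 this
    · exact (g_integrable hp b).sub (g_integrable hp a)
  have := integral_sub (g_integrable hp b) (g_integrable hp a)
  unfold Phi
  rw [this] at key
  linarith

lemma Phi_continuous {p : ℝ} (hp : 0 < p) : Continuous (Phi p) := by
  rw [continuous_iff_continuousAt]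
  intro a₀
  refine continuousAt_of_dominated (F := fun a u => g p a u)
    (bound := g p (|a₀| + 1)) ?_ ?_ (g_integrable hp _) ?_
  · filter_upwards with a using g_meas p a
  · filter_upwards [Metric.ball_mem_nhds a₀ one_pos] with a ha
    filter_upwards [ae_restrict_mem measurableSet_Ioi] with u hu
    rw [Real.norm_of_nonneg (g_nonneg p a hu)]
    unfold g
    have : a * u ≤ (|a₀| + 1) * u := by
      have : a ≤ |a₀| + 1 := by
        have := abs_sub_abs_le_abs_sub a a₀
        rw [Metric.mem_ball, Real.dist_eq] at ha
        cases abs_cases a with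
        | inl h => linarith
        | inr h => linarith [abs_nonneg a₀]
      exact mul_le_mul_of_nonneg_right this (le_of_lt hu)
    exact mul_le_mul_of_nonneg_left (Real.exp_le_exp.2 (by linarith))
      (Real.rpow_nonneg (le_of_lt hu) _)
  · filter_upwards [ae_restrict_mem measurableSet_Ioi] with u _
    unfold g; fun_prop

lemma Phi_tendsto_atBot {p : ℝ} (hp : 0 < p) : Tendsto (Phi p) atBot (nhds 0) := by
  have h0 : (0:ℝ) = ∫ u in Ioi (0:ℝ), (0:ℝ) := by simp
  rw [h0]
  refine tendsto_integral_filter_of_dominated_convergence (bound := g p 0) ?_ ?_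
    (g_integrable hp 0) ?_
  · filter_upwards with a using g_meas p a
  · filter_upwards [eventually_le_atBot (0:ℝ)] with a ha
    filter_upwards [ae_restrict_mem measurableSet_Ioi] with u hu
    rw [Real.norm_of_nonneg (g_nonneg p a hu)]
    unfold g
    refine mul_le_mul_of_nonneg_left (Real.exp_le_exp.2 ?_) (Real.rpow_nonneg (le_of_lt hu) _)
    nlinarith [mem_Ioi.1 hu]
  · filter_upwards [ae_restrict_mem measurableSet_Ioi] with u hu
    have h1 : Tendsto (fun a : ℝ => a * u - u ^ 2 / 2) atBot atBot :=
      (tendsto_atBot_add_const_right _ _ (tendsto_id.atBot_mul_const (mem_Ioi.1 hu)))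
    have h2 : Tendsto (fun a : ℝ => Real.exp (a * u - u ^ 2 / 2)) atBot (nhds 0) :=
      Real.tendsto_exp_atBot.comp h1
    have := h2.const_mul (u ^ (p - 1))
    simpa [g] using this

lemma Phi_tendsto_atTop {p : ℝ} (hp : 0 < p) : Tendsto (Phi p) atTop atTop := by
  refine tendsto_atTop_mono' atTop
    (f₁ := fun a => min 1 (2 ^ (p - 1)) * Real.exp (a - 2)) ?_ ?_
  · filter_upwards [eventually_ge_atTop (0:ℝ)] with a ha
    have := Phi_lower hp a
    rw [min_eq_left (show a ≤ 2 * a by linarith)] at this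
    exact this
  · exact (tendsto_exp_atTop.comp (tendsto_atTop_add_const_right _ _ tendsto_id)).const_mul_atTop
      min_pos

end Stmt2Aux

open Stmt2Aux

/-- ψ = F/G is strictly positive, strictly increasing, ψ → 0 at −∞,
ψ → +∞ at +∞; consequently ψ is a continuous bijection from ℝ onto (0, +∞). -/
theorem stmt2
    (μ σ θ r c_s c_b : ℝ)
    (hμ : 0 < μ) (hσ : 0 < σ) (hr : 0 < r) (hcs : 0 < c_s) (hcb : 0 < c_b)
    (F G : ℝ → ℝ)
    (hF : ∀ x : ℝ, F x = ∫ u in Ioi (0:ℝ),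
        u ^ (r / μ - 1) * Real.exp (Real.sqrt (2 * μ / σ ^ 2) * (x - θ) * u - u ^ 2 / 2))
    (hG : ∀ x : ℝ, G x = ∫ u in Ioi (0:ℝ),
        u ^ (r / μ - 1) * Real.exp (Real.sqrt (2 * μ / σ ^ 2) * (θ - x) * u - u ^ 2 / 2))
    (ψ : ℝ → ℝ) (hψ : ∀ x, ψ x = F x / G x) :
    (∀ x, 0 < ψ x) ∧ StrictMono ψ ∧
    Filter.Tendsto ψ Filter.atBot (nhds 0) ∧
    Filter.Tendsto ψ Filter.atTop Filter.atTop ∧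
    Continuous ψ ∧ Set.range ψ = Ioi (0:ℝ) := by
  have hp : 0 < r / μ := div_pos hr hμ
  have hk : 0 < Real.sqrt (2 * μ / σ ^ 2) := Real.sqrt_pos.2 (by positivity)
  set p : ℝ := r / μ
  set k : ℝ := Real.sqrt (2 * μ / σ ^ 2)
  have hFx : ∀ x, F x = Phi p (k * (x - θ)) := fun x => (hF x).trans rfl
  have hGx : ∀ x, G x = Phi p (k * (θ - x)) := fun x => (hG x).trans rfl
  have hFpos : ∀ x, 0 < F x := fun x => (hFx x) ▸ Phi_pos hp _
  have hGpos : ∀ x, 0 < G x := fun x => (hGx x) ▸ Phi_pos hp _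
  have hFmono : StrictMono F := fun a b hab => by
    rw [hFx a, hFx b]; exact Phi_strictMono hp (by nlinarith)
  have hGanti : StrictAnti G := fun a b hab => by
    rw [hGx a, hGx b]; exact Phi_strictMono hp (by nlinarith)
  have hpos : ∀ x, 0 < ψ x := fun x => (hψ x) ▸ div_pos (hFpos x) (hGpos x)
  have hmono : StrictMono ψ := by
    intro a b hab
    rw [hψ a, hψ b]
    calc F a / G a < F b / G a := (div_lt_div_iff_of_pos_right (hGpos a)).2 (hFmono hab)
      _ < F b / G b := div_lt_div_of_pos_left (hFpos b) (hGpos b) (hGanti hab)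
  -- F tendsto
  have hlbot : Tendsto (fun x : ℝ => k * (x - θ)) atBot atBot := by
    refine Tendsto.const_mul_atBot hk ?_
    exact (tendsto_atBot_add_const_right atBot (-θ) tendsto_id).congr (fun x => by simp only [id_eq]; ring)
  have hltop : Tendsto (fun x : ℝ => k * (x - θ)) atTop atTop := by
    refine Tendsto.const_mul_atTop hk ?_
    exact (tendsto_atTop_add_const_right atTop (-θ) tendsto_id).congr (fun x => by simp only [id_eq]; ring)
  have hFbot : Tendsto F atBot (nhds 0) := by
    have := (Phi_tendsto_atBot hp).comp hlbot
    exact this.congr (fun x => (hFx x).symm)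
  have hFtop : Tendsto F atTop atTop := by
    have := (Phi_tendsto_atTop hp).comp hltop
    exact this.congr (fun x => (hFx x).symm)
  -- ψ tendsto at −∞
  have hbot : Tendsto ψ atBot (nhds 0) := by
    have hup : Tendsto (fun x => F x / G 0) atBot (nhds 0) := by
      simpa using hFbot.div_const (G 0)
    refine tendsto_of_tendsto_of_tendsto_of_le_of_le' tendsto_const_nhds hup ?_ ?_
    · filter_upwards with x using (hpos x).le
    · filter_upwards [eventually_le_atBot (0:ℝ)] with x hx
      rw [hψ x]
      rcases eq_or_lt_of_le hx with h | h
      · rw [h]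
      · exact div_le_div_of_nonneg_left (hFpos x).le (hGpos 0) (hGanti h).le
  -- ψ tendsto at +∞
  have htop : Tendsto ψ atTop atTop := by
    refine tendsto_atTop_mono' atTop ?_ (hFtop.atTop_div_const (hGpos 0))
    filter_upwards [eventually_ge_atTop (0:ℝ)] with x hx
    rw [hψ x]
    rcases eq_or_lt_of_le hx with h | h
    · rw [← h]
    · exact div_le_div_of_nonneg_left (hFpos x).le (hGpos x) (hGanti h).le
  -- continuity
  have hFc : Continuous F := by
    rw [funext hFx]
    exact (Phi_continuous hp).comp (by fun_prop)
  have hGc : Continuous G := by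
    rw [funext hGx]
    exact (Phi_continuous hp).comp (by fun_prop)
  have hcont : Continuous ψ := by
    rw [funext hψ]
    exact hFc.div hGc (fun x => (hGpos x).ne')
  refine ⟨hpos, hmono, hbot, htop, hcont, ?_⟩
  apply Set.eq_of_subset_of_subset
  · rintro y ⟨x, rfl⟩; exact hpos x
  · intro y hy
    obtain ⟨a, ha⟩ := (hbot.eventually_lt_const (mem_Ioi.1 hy)).exists
    obtain ⟨b, hb⟩ := (htop.eventually_gt_atTop y).exists
    have hab : a ≤ b := (hmono.lt_iff_lt.1 (ha.trans hb)).le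
    obtain ⟨x, _, hx⟩ := intermediate_value_Icc hab hcont.continuousOn ⟨ha.le, hb.le⟩
    exact ⟨x, hx⟩
end

section
/- Set x* = θ + σ²/(2μ) − r/μ − 1. The equation f_b(x) = 0 has two distinct roots if and only if μ·e^{x*} > r·c_b, exactly one root if and only if μ·e^{x*} = r·c_b, and no root if and only if μ·e^{x*} < r·c_b. In the two-root case, denoting the roots x_{b1} < x_{b2}, one has x_{b1} < x* < x_{b2} < x_s, and f_b(x) < 0 for x ∈ (−∞, x_{b1}) ∪ (x_{b2}, +∞) while f_b(x) > 0 for x ∈ (x_{b1}, x_{b2}). -/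
open Real Set


private noncomputable def Faux (A μ c : ℝ) (x : ℝ) : ℝ := A - μ * x - c * Real.exp (-x)

private lemma Faux_def (A μ c x : ℝ) : Faux A μ c x = A - μ * x - c * Real.exp (-x) := rfl

private lemma contFaux (A μ c : ℝ) : Continuous (Faux A μ c) := by
  unfold Faux; fun_prop

private lemma hasDerivFaux (A μ c : ℝ) (x : ℝ) :
    HasDerivAt (Faux A μ c) (-μ + c * Real.exp (-x)) x := by
  have h1 : HasDerivAt (fun x : ℝ => Real.exp (-x)) (Real.exp (-x) * (-1)) x :=
    (Real.hasDerivAt_exp (-x)).comp x (hasDerivAt_neg x)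
  have h2 : HasDerivAt (Faux A μ c) (0 - μ * 1 - c * (Real.exp (-x) * -1)) x := ((hasDerivAt_const x A).sub ((hasDerivAt_id x).const_mul μ)).sub (h1.const_mul c)
  convert h2 using 1
  ring

private lemma monoFaux (A : ℝ) {μ c : ℝ} (hμ : 0 < μ) (hc : 0 < c) (m : ℝ)
    (hm : c * Real.exp (-m) = μ) : StrictMonoOn (Faux A μ c) (Iic m) := by
  apply strictMonoOn_of_deriv_pos (convex_Iic m) (contFaux A μ c).continuousOn
  intro x hx
  rw [interior_Iic] at hx
  rw [(hasDerivFaux A μ c x).deriv]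
  have h : Real.exp (-m) < Real.exp (-x) := Real.exp_lt_exp.2 (by simp only [mem_Iio] at hx; linarith)
  nlinarith [mul_lt_mul_of_pos_left h hc]

private lemma antiFaux (A : ℝ) {μ c : ℝ} (hμ : 0 < μ) (hc : 0 < c) (m : ℝ)
    (hm : c * Real.exp (-m) = μ) : StrictAntiOn (Faux A μ c) (Ici m) := by
  apply strictAntiOn_of_deriv_neg (convex_Ici m) (contFaux A μ c).continuousOn
  intro x hx
  rw [interior_Ici] at hx
  rw [(hasDerivFaux A μ c x).deriv]
  have h : Real.exp (-x) < Real.exp (-m) := Real.exp_lt_exp.2 (by simp only [mem_Ioi] at hx; linarith)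
  nlinarith [mul_lt_mul_of_pos_left h hc]

private lemma maxFaux (A : ℝ) {μ c : ℝ} (hμ : 0 < μ) (hc : 0 < c) (m : ℝ)
    (hm : c * Real.exp (-m) = μ) : ∀ x, x ≠ m → Faux A μ c x < Faux A μ c m := by
  intro x hx
  rcases lt_or_gt_of_ne hx with h | h
  · exact monoFaux A hμ hc m hm (le_of_lt h) (le_refl m) h
  · exact antiFaux A hμ hc m hm (le_refl m) (le_of_lt h) h

private lemma quadExp : ∀ t : ℝ, 0 ≤ t → t ^ 2 / 4 ≤ Real.exp t := by
  intro t ht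
  have h1 := Real.add_one_le_exp (t / 2)
  have h2 : Real.exp (t / 2) * Real.exp (t / 2) = Real.exp t := by
    rw [← Real.exp_add]; ring_nf
  nlinarith [Real.exp_pos (t / 2)]

private lemma twoRootsFaux (A : ℝ) {μ c : ℝ} (hμ : 0 < μ) (hc : 0 < c) (m : ℝ)
    (hm : c * Real.exp (-m) = μ) (hpos : 0 < Faux A μ c m) :
    ∃ x1 x2, x1 < m ∧ m < x2 ∧ Faux A μ c x1 = 0 ∧ Faux A μ c x2 = 0 := by
  -- right root
  set b := max m (A / μ) + 1 with hb
  have hb1 : m < b := lt_of_le_of_lt (le_max_left _ _) (lt_add_one _)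
  have hb2 : Faux A μ c b < 0 := by
    have h1 : A / μ < b := lt_of_le_of_lt (le_max_right _ _) (lt_add_one _)
    have h2 : A < b * μ := (div_lt_iff₀ hμ).mp h1
    have h3 := Real.exp_pos (-b)
    rw [Faux_def]; nlinarith
  obtain ⟨x2, hx2mem, hx2⟩ := intermediate_value_Icc' (le_of_lt hb1)
    (contFaux A μ c).continuousOn ⟨le_of_lt hb2, le_of_lt hpos⟩
  -- left root
  set a := min m (-(4 * (|A| + μ + 1) / c + 1)) with ha
  have ham : a ≤ m := min_le_left _ _
  have haX : a ≤ -(4 * (|A| + μ + 1) / c + 1) := min_le_right _ _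
  have hfrac : 0 ≤ 4 * (|A| + μ + 1) / c := by positivity
  have ha1 : a ≤ -1 := by linarith
  have ha2 : 4 * (|A| + μ + 1) ≤ (-a) * c := by
    have : 4 * (|A| + μ + 1) / c ≤ -a := by linarith
    exact (div_le_iff₀ hc).mp this
  have hFa : Faux A μ c a < 0 := by
    have hq := quadExp (-a) (by linarith)
    have habs := le_abs_self A
    have h5 : (-a) * (4 * (|A| + μ + 1)) ≤ (-a) * ((-a) * c) :=
      mul_le_mul_of_nonneg_left ha2 (by linarith)
    have h6 : c * ((-a) ^ 2 / 4) ≤ c * Real.exp (-a) :=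
      mul_le_mul_of_nonneg_left hq (le_of_lt hc)
    have h7 : a * |A| ≤ -|A| := by nlinarith [abs_nonneg A]
    rw [Faux_def]
    nlinarith [abs_nonneg A]
  obtain ⟨x1, hx1mem, hx1⟩ := intermediate_value_Icc ham
    (contFaux A μ c).continuousOn ⟨le_of_lt hFa, le_of_lt hpos⟩
  refine ⟨x1, x2, ?_, ?_, hx1, hx2⟩
  · rcases lt_or_eq_of_le hx1mem.2 with h | h
    · exact h
    · exfalso; rw [h] at hx1; linarith
  · rcases lt_or_eq_of_le hx2mem.1 with h | h
    · exact h
    · exfalso; rw [← h] at hx2; linarith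

/-- With x* = θ + σ²/(2μ) − r/μ − 1, the equation f_b = 0 has two
distinct roots iff μ·e^{x*} > r·c_b, exactly one root iff μ·e^{x*} = r·c_b, and no
root iff μ·e^{x*} < r·c_b. In the two-root case with roots x_{b1} < x_{b2}, one
has x_{b1} < x* < x_{b2} < x_s, f_b < 0 outside [x_{b1}, x_{b2}] and f_b > 0 on
(x_{b1}, x_{b2}). -/
theorem stmt4
    (μ σ θ r c_s c_b : ℝ)
    (hμ : 0 < μ) (hσ : 0 < σ) (hr : 0 < r) (hcs : 0 < c_s) (hcb : 0 < c_b)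
    (f_s f_b : ℝ → ℝ)
    (hfs : ∀ x : ℝ, f_s x = (μ * θ + σ ^ 2 / 2 - r) - μ * x + r * c_s * Real.exp (-x))
    (hfb : ∀ x : ℝ, f_b x = (μ * θ + σ ^ 2 / 2 - r) - μ * x - r * c_b * Real.exp (-x))
    (x_s : ℝ) (hxs : f_s x_s = 0) (hxs_uniq : ∀ y, f_s y = 0 → y = x_s) :
    ((∃ x1 x2 : ℝ, x1 < x2 ∧ f_b x1 = 0 ∧ f_b x2 = 0) ↔
        r * c_b < μ * Real.exp (θ + σ ^ 2 / (2 * μ) - r / μ - 1)) ∧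
    ((∃! x : ℝ, f_b x = 0) ↔
        μ * Real.exp (θ + σ ^ 2 / (2 * μ) - r / μ - 1) = r * c_b) ∧
    ((∀ x : ℝ, f_b x ≠ 0) ↔
        μ * Real.exp (θ + σ ^ 2 / (2 * μ) - r / μ - 1) < r * c_b) ∧
    (∀ x1 x2 : ℝ, x1 < x2 → f_b x1 = 0 → f_b x2 = 0 →
      x1 < θ + σ ^ 2 / (2 * μ) - r / μ - 1 ∧
      θ + σ ^ 2 / (2 * μ) - r / μ - 1 < x2 ∧ x2 < x_s ∧
      (∀ x, x < x1 ∨ x2 < x → f_b x < 0) ∧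
      (∀ x, x1 < x → x < x2 → 0 < f_b x)) := by
  have hc0 : 0 < r * c_b := mul_pos hr hcb
  set c := r * c_b with hcdef
  set A := μ * θ + σ ^ 2 / 2 - r with hA
  set xstar := θ + σ ^ 2 / (2 * μ) - r / μ - 1 with hxstar
  have hfbe : f_b = Faux A μ c := funext hfb
  subst hfbe
  set m := Real.log (c / μ) with hmdef
  have hym : Real.exp (-m) = μ / c := by
    rw [hmdef, ← Real.log_inv, Real.exp_log (by positivity), inv_div]
  have hmexp : c * Real.exp (-m) = μ := by
    rw [hym]; field_simp
  have hμx : μ * xstar = A - μ := by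
    rw [hxstar, hA]; field_simp
  clear_value c A xstar m
  have hFm : Faux A μ c m = μ * (xstar - m) := by
    rw [Faux_def, hmexp]; linear_combination -hμx
  have hlog : m < xstar ↔ c < μ * Real.exp xstar := by
    rw [hmdef, Real.log_lt_iff_lt_exp (by positivity), div_lt_iff₀ hμ, mul_comm]
  have hlog2 : xstar < m ↔ μ * Real.exp xstar < c := by
    rw [hmdef, Real.lt_log_iff_exp_lt (by positivity), lt_div_iff₀ hμ, mul_comm]
  have hlog3 : m = xstar ↔ μ * Real.exp xstar = c := by
    constructor
    · intro h
      rw [← h, hmdef, Real.exp_log (by positivity)]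
      field_simp
    · intro h
      have hx : Real.exp xstar = c / μ := by
        rw [eq_div_iff (ne_of_gt hμ)]; linarith [h, mul_comm μ (Real.exp xstar)]
      rw [hmdef, ← hx, Real.log_exp]
  have hsign1 : 0 < Faux A μ c m ↔ m < xstar := by
    rw [hFm]; constructor <;> intro h <;> nlinarith
  have hsign2 : Faux A μ c m = 0 ↔ m = xstar := by
    rw [hFm]; constructor <;> intro h
    · rcases mul_eq_zero.mp h with h' | h'
      · linarith
      · linarith
    · rw [h]; ring
  have hsign3 : Faux A μ c m < 0 ↔ xstar < m := by
    rw [hFm]; constructor <;> intro h <;> nlinarith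
  have hmax := maxFaux A hμ hc0 m hmexp
  have hmono := monoFaux A hμ hc0 m hmexp
  have hanti := antiFaux A hμ hc0 m hmexp
  have htwo_pos : ∀ x1 x2 : ℝ, x1 < x2 → Faux A μ c x1 = 0 → Faux A μ c x2 = 0 →
      x1 < m ∧ m < x2 ∧ 0 < Faux A μ c m := by
    intro x1 x2 h12 h1 h2
    have hx1m : x1 < m := by
      by_contra h
      push_neg at h
      have := hanti (mem_Ici.mpr h) (mem_Ici.mpr (le_trans h (le_of_lt h12))) h12
      linarith
    have hx2m : m < x2 := by
      by_contra h
      push_neg at h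
      have := hmono (mem_Iic.mpr (le_trans (le_of_lt h12) h)) (mem_Iic.mpr h) h12
      linarith
    exact ⟨hx1m, hx2m, by have := hmax x1 (ne_of_lt hx1m); linarith⟩
  have hfs_anti : StrictAnti f_s := by
    intro x y hxy
    rw [hfs x, hfs y]
    have hE : Real.exp (-y) < Real.exp (-x) := Real.exp_lt_exp.2 (by linarith)
    have hpos : 0 < r * c_s := mul_pos hr hcs
    nlinarith
  refine ⟨?_, ?_, ?_, ?_⟩
  · constructor
    · rintro ⟨x1, x2, h12, h1, h2⟩
      obtain ⟨_, _, hFm0⟩ := htwo_pos x1 x2 h12 h1 h2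
      exact hlog.mp (hsign1.mp hFm0)
    · intro h
      obtain ⟨x1, x2, h1m, hm2, hF1, hF2⟩ :=
        twoRootsFaux A hμ hc0 m hmexp (hsign1.mpr (hlog.mpr h))
      exact ⟨x1, x2, lt_trans h1m hm2, hF1, hF2⟩
  · constructor
    · rintro ⟨x0, hx0, huniq⟩
      rcases lt_trichotomy (Faux A μ c m) 0 with hlt | heq | hgt
      · exfalso
        rcases eq_or_ne x0 m with h | h
        · rw [h] at hx0; linarith
        · have := hmax x0 h; linarith
      · exact hlog3.mp (hsign2.mp heq)
      · exfalso
        obtain ⟨x1, x2, h1, h2, hF1, hF2⟩ := twoRootsFaux A hμ hc0 m hmexp hgt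
        have e1 := huniq x1 hF1
        have e2 := huniq x2 hF2
        have : x1 = x2 := e1.trans e2.symm
        linarith
    · intro h
      have hFm0 : Faux A μ c m = 0 := hsign2.mpr (hlog3.mpr h)
      refine ⟨m, hFm0, ?_⟩
      intro y hy
      by_contra hne
      have := hmax y hne
      rw [hFm0] at this
      linarith
  · constructor
    · intro h
      rcases lt_trichotomy (Faux A μ c m) 0 with hlt | heq | hgt
      · exact hlog2.mp (hsign3.mp hlt)
      · exact absurd heq (h m)
      · obtain ⟨x1, x2, _, _, hF1, _⟩ := twoRootsFaux A hμ hc0 m hmexp hgt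
        exact absurd hF1 (h x1)
    · intro h x
      have hm0 : Faux A μ c m < 0 := hsign3.mpr (hlog2.mpr h)
      rcases eq_or_ne x m with he | hne
      · rw [he]; exact ne_of_lt hm0
      · have := hmax x hne
        exact ne_of_lt (by linarith)
  · intro x1 x2 h12 hF1 hF2
    obtain ⟨hx1m, hmx2, hFm0⟩ := htwo_pos x1 x2 h12 hF1 hF2
    have hmxs : m < xstar := hsign1.mp hFm0
    have hFxs : 0 < Faux A μ c xstar := by
      rw [Faux_def]
      have h1 : Real.exp (-xstar) < Real.exp (-m) := Real.exp_lt_exp.2 (by linarith)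
      nlinarith [mul_lt_mul_of_pos_left h1 hc0]
    have hxsx2 : xstar < x2 := by
      by_contra h
      push_neg at h
      rcases lt_or_eq_of_le h with h' | h'
      · have := hanti (mem_Ici.mpr (le_of_lt hmx2)) (mem_Ici.mpr (le_of_lt hmxs)) h'
        linarith
      · rw [h'] at hF2; linarith
    have hfsx2 : 0 < f_s x2 := by
      rw [hfs x2]
      have h0 := hF2
      rw [Faux_def] at h0
      linarith [mul_pos (mul_pos hr hcs) (Real.exp_pos (-x2)),
        mul_pos hc0 (Real.exp_pos (-x2))]
    have hx2xs : x2 < x_s := by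
      by_contra h
      push_neg at h
      rcases lt_or_eq_of_le h with h' | h'
      · have := hfs_anti h'
        linarith
      · rw [h'] at hxs; linarith
    refine ⟨by linarith, hxsx2, hx2xs, ?_, ?_⟩
    · intro x hx
      rcases hx with h | h
      · have := hmono (mem_Iic.mpr (le_of_lt (lt_trans h hx1m))) (mem_Iic.mpr (le_of_lt hx1m)) h
        linarith
      · have := hanti (mem_Ici.mpr (le_of_lt hmx2)) (mem_Ici.mpr (le_of_lt (lt_trans hmx2 h))) h
        linarith
    · intro x hx1x hxx2
      rcases le_total x m with h | h
      · have := hmono (mem_Iic.mpr (le_of_lt hx1m)) (mem_Iic.mpr h) hx1x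
        linarith
      · have := hanti (mem_Ici.mpr h) (mem_Ici.mpr (le_of_lt hmx2)) hxx2
        linarith
end

section
/- For every x ∈ ℝ the integrals ∫_{−∞}^x Ψ(s)·e^s·f_s(s) ds and ∫_x^{+∞} Φ(s)·e^s·f_s(s) ds converge, and the representation e^x − c_s = −G(x)·∫_{−∞}^x Ψ(s)·e^s·f_s(s) ds − F(x)·∫_x^{+∞} Φ(s)·e^s·f_s(s) ds holds. -/
open Real MeasureTheory Set Filter Topology


noncomputable def Jf (s a : ℝ) : ℝ := ∫ u in Ioi (0:ℝ), u ^ s * Real.exp (a*u - u^2/2)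


lemma Jf_meas (s a : ℝ) :
    AEStronglyMeasurable (fun u : ℝ => u ^ s * Real.exp (a*u - u^2/2)) (volume.restrict (Ioi 0)) := by
  refine (ContinuousOn.aestronglyMeasurable ?_ measurableSet_Ioi)
  exact ((continuousOn_id.rpow_const (fun x hx => Or.inl (ne_of_gt hx))).mul
    (Continuous.continuousOn (by continuity)))

lemma Jf_integrable {s : ℝ} (hs : -1 < s) (a : ℝ) :
    IntegrableOn (fun u : ℝ => u ^ s * Real.exp (a*u - u^2/2)) (Ioi 0) := by
  have hdom : Integrable (fun u : ℝ => Real.exp (a^2) * (u ^ s * Real.exp (-(1/4 : ℝ)*u^2)))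
      (volume.restrict (Ioi 0)) :=
    (((integrable_rpow_mul_exp_neg_mul_sq (by norm_num) hs).const_mul _).restrict)
  refine Integrable.mono' hdom (Jf_meas s a) ?_
  filter_upwards [ae_restrict_mem measurableSet_Ioi] with u hu
  have hu0 : (0:ℝ) < u := hu
  have h1 : (0:ℝ) ≤ u ^ s := Real.rpow_nonneg hu0.le s
  rw [Real.norm_eq_abs, abs_of_nonneg (by positivity)]
  have : Real.exp (a*u - u^2/2) ≤ Real.exp (a^2) * Real.exp (-(1/4:ℝ)*u^2) := by
    rw [← Real.exp_add]
    apply Real.exp_le_exp.2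
    nlinarith [sq_nonneg (a - u/2)]
  calc u ^ s * Real.exp (a*u - u^2/2) ≤ u ^ s * (Real.exp (a^2) * Real.exp (-(1/4:ℝ)*u^2)) :=
        mul_le_mul_of_nonneg_left this h1
    _ = Real.exp (a^2) * (u ^ s * Real.exp (-(1/4:ℝ)*u^2)) := by ring




lemma Jf_hasDerivAt {s : ℝ} (hs : -1 < s) (a : ℝ) :
    HasDerivAt (fun b => Jf s b) (Jf (s+1) a) a := by
  have hs1 : (-1:ℝ) < s + 1 := by linarith
  have key := hasDerivAt_integral_of_dominated_loc_of_deriv_le (μ := volume.restrict (Ioi 0))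
    (F := fun b u => u ^ s * Real.exp (b*u - u^2/2))
    (F' := fun b u => u ^ (s+1) * Real.exp (b*u - u^2/2))
    (bound := fun u => u ^ (s+1) * Real.exp ((a+1)*u - u^2/2))
    (Metric.ball_mem_nhds a one_pos)
    (Eventually.of_forall fun b => Jf_meas s b)
    (Jf_integrable hs a)
    (Jf_meas (s+1) a)
    ?_ ((Jf_integrable hs1 (a+1)))
    ?_
  · exact key.2
  · filter_upwards [ae_restrict_mem measurableSet_Ioi] with u hu b hb
    have hu0 : (0:ℝ) < u := hu
    rw [Real.norm_eq_abs, abs_of_nonneg (by positivity)]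
    have hb1 : b ≤ a + 1 := by
      have := abs_lt.1 (mem_ball_iff_norm.1 hb); linarith [this.2]
    have : Real.exp (b*u - u^2/2) ≤ Real.exp ((a+1)*u - u^2/2) := by
      apply Real.exp_le_exp.2; nlinarith
    exact mul_le_mul_of_nonneg_left this (Real.rpow_nonneg hu0.le _)
  · filter_upwards [ae_restrict_mem measurableSet_Ioi] with u hu b hb
    have hu0 : (0:ℝ) < u := hu
    have h1 : HasDerivAt (fun b : ℝ => b*u - u^2/2) u b := by
      simpa using ((hasDerivAt_id b).mul_const u).sub_const (u^2/2)
    have h2 : HasDerivAt (fun b : ℝ => Real.exp (b*u - u^2/2))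
        (Real.exp (b*u - u^2/2) * u) b := h1.exp
    have := h2.const_mul (u ^ s)
    refine this.congr_deriv ?_
    rw [Real.rpow_add_one (ne_of_gt hu0)]; ring

lemma Jf_tendsto_atBot {s : ℝ} (hs : -1 < s) :
    Tendsto (fun a => Jf s a) atBot (𝓝 0) := by
  have h0 : (0:ℝ) = ∫ u in Ioi (0:ℝ), (0:ℝ) := by simp
  rw [h0]
  apply tendsto_integral_filter_of_dominated_convergence
    (fun u => u ^ s * Real.exp (0*u - u^2/2))
  · exact Eventually.of_forall fun b => Jf_meas s b
  · filter_upwards [eventually_le_atBot (0:ℝ)] with b hb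
    filter_upwards [ae_restrict_mem measurableSet_Ioi] with u hu
    have hu0 : (0:ℝ) < u := hu
    rw [Real.norm_eq_abs, abs_of_nonneg (by positivity)]
    refine mul_le_mul_of_nonneg_left (Real.exp_le_exp.2 ?_) (Real.rpow_nonneg hu0.le _)
    nlinarith
  · exact Jf_integrable hs 0
  · filter_upwards [ae_restrict_mem measurableSet_Ioi] with u hu
    have hu0 : (0:ℝ) < u := hu
    have h1 : Tendsto (fun b : ℝ => b*u - u^2/2) atBot atBot := by
      apply tendsto_atBot_add_const_right
      exact Tendsto.atBot_mul_const hu0 tendsto_id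
    have h2 : Tendsto (fun b : ℝ => u ^ s * Real.exp (b*u - u^2/2)) atBot (𝓝 (u^s * 0)) :=
      (Real.tendsto_exp_atBot.comp h1).const_mul _
    simpa using h2

lemma Jf_nonneg (s a : ℝ) : 0 ≤ Jf s a := by
  apply setIntegral_nonneg measurableSet_Ioi
  intro u hu
  have hu0 : (0:ℝ) < u := hu
  positivity

lemma Jf_mono (s : ℝ) (hs : -1 < s) {a b : ℝ} (hab : a ≤ b) : Jf s a ≤ Jf s b := by
  apply setIntegral_mono_on (Jf_integrable hs a) (Jf_integrable hs b) measurableSet_Ioi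
  intro u hu
  have hu0 : (0:ℝ) < u := hu
  refine mul_le_mul_of_nonneg_left (Real.exp_le_exp.2 ?_) (Real.rpow_nonneg hu0.le _)
  nlinarith



lemma Jf_ode {q : ℝ} (hq : 0 < q) (a : ℝ) : Jf (q+1) a = q * Jf (q-1) a + a * Jf q a := by
  have hqm : (-1:ℝ) < q - 1 := by linarith
  have hq0 : (-1:ℝ) < q := by linarith
  have hq1 : (-1:ℝ) < q + 1 := by linarith
  set g : ℝ → ℝ := fun u => u ^ q * Real.exp (a*u - u^2/2) with hg
  set g' : ℝ → ℝ := fun u => q * (u ^ (q-1) * Real.exp (a*u - u^2/2))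
      + (a * (u ^ q * Real.exp (a*u - u^2/2)) - u ^ (q+1) * Real.exp (a*u - u^2/2)) with hg'
  have hderiv : ∀ u ∈ Ioi (0:ℝ), HasDerivAt g (g' u) u := by
    intro u hu
    have hu0 : (0:ℝ) < u := hu
    have h1 : HasDerivAt (fun u : ℝ => u ^ q) (q * u ^ (q-1)) u := by
      simpa [mul_comm] using Real.hasDerivAt_rpow_const (p := q) (Or.inl (ne_of_gt hu0))
    have h2 : HasDerivAt (fun u : ℝ => Real.exp (a*u - u^2/2))
        (Real.exp (a*u - u^2/2) * (a - u)) u := by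
      have : HasDerivAt (fun u : ℝ => a*u - u^2/2) (a - u) u := by
        have ha : HasDerivAt (fun u : ℝ => a*u) a u := by
          simpa using (hasDerivAt_id u).const_mul a
        have hb : HasDerivAt (fun u : ℝ => u^2/2) u u := by
          have := (hasDerivAt_pow 2 u).div_const 2
          simpa using this
        exact ha.sub hb
      exact this.exp
    have := h1.mul h2
    refine this.congr_deriv ?_
    have hrw : u ^ (q+1) = u ^ q * u := Real.rpow_add_one (ne_of_gt hu0) q
    simp only [hg', hrw]
    ring
  have hcont : ContinuousWithinAt g (Ici 0) 0 := by
    apply ContinuousAt.continuousWithinAt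
    exact ((Real.continuousAt_rpow_const 0 q (Or.inr hq.le)).mul (by fun_prop))
  have hint : IntegrableOn g' (Ioi 0) := by
    exact (((Jf_integrable hqm a).const_mul q).add
      (((Jf_integrable hq0 a).const_mul a).sub (Jf_integrable hq1 a)))
  have htop : Tendsto g atTop (𝓝 0) := by
    have hub : ∀ᶠ u in atTop, g u ≤ Real.exp (-u) := by
      filter_upwards [eventually_ge_atTop (1:ℝ), eventually_ge_atTop (2*(q+|a|+1))] with u h1 h2
      have hu0 : (0:ℝ) < u := by linarith
      have hpow : u ^ q ≤ Real.exp (q*u) := by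
        rw [Real.rpow_def_of_pos hu0]
        apply Real.exp_le_exp.2
        have : Real.log u ≤ u := (Real.log_le_sub_one_of_pos hu0).trans (by linarith)
        nlinarith
      have : g u ≤ Real.exp (q*u) * Real.exp (a*u - u^2/2) :=
        mul_le_mul_of_nonneg_right hpow (Real.exp_nonneg _)
      rw [← Real.exp_add] at this
      refine this.trans (Real.exp_le_exp.2 ?_)
      have hau : a*u ≤ |a| * u := mul_le_mul_of_nonneg_right (le_abs_self a) hu0.le
      nlinarith [abs_nonneg a]
    have hlb : ∀ᶠ u in atTop, (0:ℝ) ≤ g u := by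
      filter_upwards [eventually_gt_atTop (0:ℝ)] with u hu
      positivity
    have hexp : Tendsto (fun u : ℝ => Real.exp (-u)) atTop (𝓝 0) :=
      Real.tendsto_exp_atBot.comp tendsto_neg_atTop_atBot
    exact tendsto_of_tendsto_of_tendsto_of_le_of_le' tendsto_const_nhds hexp hlb hub
  have hFTC : ∫ u in Ioi (0:ℝ), g' u = 0 - g 0 := by
    exact integral_Ioi_of_hasDerivAt_of_tendsto hcont hderiv hint htop
  have hg0 : g 0 = 0 := by
    simp [hg, Real.zero_rpow (ne_of_gt hq)]
  rw [hg0, sub_zero] at hFTC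
  have hI2 : IntegrableOn (fun u : ℝ => a * (u ^ q * Real.exp (a*u - u^2/2))
      - u ^ (q+1) * Real.exp (a*u - u^2/2)) (Ioi 0) :=
    ((Jf_integrable hq0 a).const_mul a).sub (Jf_integrable hq1 a)
  have hsplit : ∫ u in Ioi (0:ℝ), g' u =
      q * Jf (q-1) a + (a * Jf q a - Jf (q+1) a) := by
    rw [hg']
    rw [integral_add ((Jf_integrable hqm a).const_mul q) hI2,
      integral_sub ((Jf_integrable hq0 a).const_mul a) (Jf_integrable hq1 a),
      MeasureTheory.integral_const_mul, MeasureTheory.integral_const_mul]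
    rfl
  rw [hsplit] at hFTC
  linarith


lemma integrable_exp_quadratic {α : ℝ} (hα : 0 < α) (b c : ℝ) :
    Integrable (fun s : ℝ => Real.exp (-α*s^2 + b*s + c)) := by
  have h := (integrable_cexp_quadratic (b := (α:ℂ)) (by simpa using hα) (b:ℂ) (c:ℂ)).norm
  refine h.congr (Eventually.of_forall fun s => ?_)
  have h2 : (-(α:ℂ) * (s:ℂ)^2 + (b:ℂ)*(s:ℂ) + (c:ℂ)) = ((-α*s^2 + b*s + c : ℝ) : ℂ) := by
    push_cast; ring
  show ‖Complex.exp _‖ = _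
  rw [Complex.norm_exp, h2, Complex.ofReal_re]

lemma integrable_exp_lin_quad {α : ℝ} (hα : 0 < α) (c θ : ℝ) :
    Integrable (fun s : ℝ => Real.exp (c*s - α*(s-θ)^2)) := by
  have : (fun s : ℝ => Real.exp (c*s - α*(s-θ)^2))
      = fun s : ℝ => Real.exp (-α*s^2 + (c+2*α*θ)*s + (-(α*θ^2))) := by
    funext s; congr 1; ring
  rw [this]; exact integrable_exp_quadratic hα _ _

lemma tendsto_exp_lin_quad {α : ℝ} (hα : 0 < α) (c θ : ℝ) :
    Tendsto (fun s : ℝ => Real.exp (c*s - α*(s-θ)^2)) atTop (𝓝 0) := by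
  have hub : ∀ᶠ s in atTop, Real.exp (c*s - α*(s-θ)^2) ≤ Real.exp (-s) := by
    filter_upwards [eventually_ge_atTop (2*|θ|+1), eventually_ge_atTop (4*(|c|+1)/α)]
      with s h1 h2
    apply Real.exp_le_exp.2
    have hθ : |θ| ≤ (s-1)/2 := by linarith
    have hs1 : (1:ℝ) ≤ s := by have := abs_nonneg θ; linarith
    have hsθ : s/2 ≤ s - θ := by have := (abs_le.1 (le_refl |θ|)); have := le_abs_self θ; linarith
    have h3 : α * (s/2)^2 ≤ α * (s-θ)^2 := by
      apply mul_le_mul_of_nonneg_left _ hα.le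
      have : (0:ℝ) ≤ s/2 := by linarith
      nlinarith
    have h4 : 4*(|c|+1) ≤ α * s := by
      rw [div_le_iff₀ hα] at h2; linarith [mul_comm s α]
    have h5 : (|c|+1)*s ≤ α * (s/2)^2 := by nlinarith
    have h6 : c*s ≤ (|c|)*s := mul_le_mul_of_nonneg_right (le_abs_self c) (by linarith)
    nlinarith
  have hlb : ∀ᶠ s in atTop, (0:ℝ) ≤ Real.exp (c*s - α*(s-θ)^2) :=
    Eventually.of_forall fun s => (Real.exp_pos _).le
  exact tendsto_of_tendsto_of_tendsto_of_le_of_le' tendsto_const_nhds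
    (Real.tendsto_exp_atBot.comp tendsto_neg_atTop_atBot) hlb hub

lemma abs_le_exp_add_exp (s : ℝ) : |s| ≤ Real.exp s + Real.exp (-s) := by
  have h1 : s ≤ Real.exp s := by linarith [Real.add_one_le_exp s, Real.exp_pos s]
  have h2 : -s ≤ Real.exp (-s) := by linarith [Real.add_one_le_exp (-s)]
  have := Real.exp_pos s; have := Real.exp_pos (-s)
  rw [abs_le]; constructor <;> linarith


set_option maxHeartbeats 1000000 in
/-- For every x, the integrals ∫_{−∞}^x Ψ·e^s·f_s and
∫_x^{+∞} Φ·e^s·f_s converge, and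
e^x − c_s = −G(x)·∫_{−∞}^x Ψ(s)e^s f_s(s) ds − F(x)·∫_x^{+∞} Φ(s)e^s f_s(s) ds. -/
theorem stmt5
    (μ σ θ r c_s c_b : ℝ)
    (hμ : 0 < μ) (hσ : 0 < σ) (hr : 0 < r) (hcs : 0 < c_s) (hcb : 0 < c_b)
    (F G : ℝ → ℝ)
    (hF : ∀ x : ℝ, F x = ∫ u in Ioi (0:ℝ),
        u ^ (r / μ - 1) * Real.exp (Real.sqrt (2 * μ / σ ^ 2) * (x - θ) * u - u ^ 2 / 2))
    (hG : ∀ x : ℝ, G x = ∫ u in Ioi (0:ℝ),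
        u ^ (r / μ - 1) * Real.exp (Real.sqrt (2 * μ / σ ^ 2) * (θ - x) * u - u ^ 2 / 2))
    (f_s : ℝ → ℝ)
    (hfs : ∀ x : ℝ, f_s x = (μ * θ + σ ^ 2 / 2 - r) - μ * x + r * c_s * Real.exp (-x))
    (W Ψ Φ : ℝ → ℝ)
    (hW : ∀ x, W x = deriv F x * G x - F x * deriv G x)
    (hWpos : ∀ x, 0 < W x)
    (hΨ : ∀ x, Ψ x = 2 * F x / (σ ^ 2 * W x))
    (hΦ : ∀ x, Φ x = 2 * G x / (σ ^ 2 * W x)) :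
    (∀ x : ℝ, IntegrableOn (fun s => Ψ s * Real.exp s * f_s s) (Iic x)) ∧
    (∀ x : ℝ, IntegrableOn (fun s => Φ s * Real.exp s * f_s s) (Ioi x)) ∧
    (∀ x : ℝ, Real.exp x - c_s =
      -G x * (∫ s in Iic x, Ψ s * Real.exp s * f_s s)
        - F x * ∫ s in Ioi x, Φ s * Real.exp s * f_s s) := by
  have hσ2 : (0:ℝ) < σ^2 := by positivity
  set k : ℝ := Real.sqrt (2*μ/σ^2) with hkdef
  have hk2 : k^2 = 2*μ/σ^2 := Real.sq_sqrt (by positivity)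
  have hk : 0 < k := Real.sqrt_pos.2 (by positivity)
  set q : ℝ := r/μ with hqdef
  have hq : 0 < q := div_pos hr hμ
  have hqμ : q * μ = r := by rw [hqdef]; field_simp
  have hqm : (-1:ℝ) < q - 1 := by linarith
  have hq0 : (-1:ℝ) < q := by linarith
  have hμk : μ = k^2*σ^2/2 := by rw [hk2]; field_simp
  have hrk : r = q*k^2*σ^2/2 := by rw [← hqμ, hμk]; ring
  -- F, G in terms of Jf
  have hFJ : ∀ x, F x = Jf (q-1) (k*(x-θ)) := fun x => by rw [hF x]; rfl
  have hGJ : ∀ x, G x = Jf (q-1) (-(k*(x-θ))) := by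
    intro x; rw [hG x]
    have h : ∀ u : ℝ, k*(θ-x)*u - u^2/2 = (-(k*(x-θ)))*u - u^2/2 := fun u => by ring
    simp only [Jf, h]
  -- derivatives
  have hlinA : ∀ x : ℝ, HasDerivAt (fun x : ℝ => k*(x-θ)) k x := fun x => by
    simpa using ((hasDerivAt_id x).sub_const θ).const_mul k
  have hlinB : ∀ x : ℝ, HasDerivAt (fun x : ℝ => -(k*(x-θ))) (-k) x := fun x => (hlinA x).neg
  have hq1 : q - 1 + 1 = q := by ring
  have hA0 : ∀ s : ℝ, HasDerivAt (fun s => Jf (q-1) (k*(s-θ))) (k * Jf q (k*(s-θ))) s := by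
    intro s
    have h := (Jf_hasDerivAt hqm (k*(s-θ))).comp s (hlinA s)
    rw [hq1] at h
    exact h.congr_deriv (mul_comm _ _)
  have hB0 : ∀ s : ℝ, HasDerivAt (fun s => Jf (q-1) (-(k*(s-θ)))) (-(k * Jf q (-(k*(s-θ))))) s := by
    intro s
    have h := (Jf_hasDerivAt hqm (-(k*(s-θ)))).comp s (hlinB s)
    rw [hq1] at h
    exact h.congr_deriv (by ring)
  have hA1 : ∀ s : ℝ, HasDerivAt (fun s => k * Jf q (k*(s-θ))) (k^2 * Jf (q+1) (k*(s-θ))) s := by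
    intro s
    have h := ((Jf_hasDerivAt hq0 (k*(s-θ))).comp s (hlinA s)).const_mul k
    exact h.congr_deriv (by ring)
  have hB1 : ∀ s : ℝ, HasDerivAt (fun s => -(k * Jf q (-(k*(s-θ)))))
      (k^2 * Jf (q+1) (-(k*(s-θ)))) s := by
    intro s
    have h := (((Jf_hasDerivAt hq0 (-(k*(s-θ)))).comp s (hlinB s)).const_mul k).neg
    exact h.congr_deriv (by ring)
  have hFder : ∀ x, HasDerivAt F (k * Jf q (k*(x-θ))) x := by
    rw [show F = fun x => Jf (q-1) (k*(x-θ)) from funext hFJ]; exact hA0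
  have hGder : ∀ x, HasDerivAt G (-(k * Jf q (-(k*(x-θ))))) x := by
    rw [show G = fun x => Jf (q-1) (-(k*(x-θ))) from funext hGJ]; exact hB0
  have hderivF : ∀ x, deriv F x = k * Jf q (k*(x-θ)) := fun x => (hFder x).deriv
  have hderivG : ∀ x, deriv G x = -(k * Jf q (-(k*(x-θ)))) := fun x => (hGder x).deriv
  -- Wronskian ODE and explicit formula
  have hWfun : W = fun s => (k * Jf q (k*(s-θ))) * Jf (q-1) (-(k*(s-θ)))
      - Jf (q-1) (k*(s-θ)) * (-(k * Jf q (-(k*(s-θ))))) :=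
    funext fun s => by rw [hW s, hderivF s, hderivG s, hFJ s, hGJ s]
  have hWder : ∀ s, HasDerivAt W ((2*μ/σ^2)*(s-θ)*W s) s := by
    intro s
    have h := ((hA1 s).mul (hB0 s)).sub ((hA0 s).mul (hB1 s))
    rw [hWfun]
    refine h.congr_deriv ?_
    rw [Jf_ode hq (k*(s-θ)), Jf_ode hq (-(k*(s-θ))), ← hk2]
    ring
  set α : ℝ := μ/σ^2 with hα
  have hαpos : 0 < α := by positivity
  have h2α : 2*μ/σ^2 = 2*α := by rw [hα]; ring
  have hWformula : ∀ s, W s = W θ * Real.exp (α*(s-θ)^2) := by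
    have hRder : ∀ s, HasDerivAt (fun s => W s * Real.exp (-(α*(s-θ)^2))) 0 s := by
      intro s
      have hin : HasDerivAt (fun s : ℝ => -(α*(s-θ)^2)) (-(α*(2*(s-θ)))) s := by
        have h1 : HasDerivAt (fun s : ℝ => (s-θ)^2) (2*(s-θ)) s := by
          exact (((hasDerivAt_id s).sub_const θ).pow 2).congr_deriv (by simp)
        exact (h1.const_mul α).neg
      have h := (hWder s).mul hin.exp
      refine h.congr_deriv ?_
      rw [h2α]; ring
    have hconst := is_const_of_deriv_eq_zero (f := fun s => W s * Real.exp (-(α*(s-θ)^2)))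
      (fun x => (hRder x).differentiableAt) (fun x => (hRder x).deriv)
    intro s
    have h := hconst s θ
    simp only [sub_self] at h
    norm_num at h
    rw [Real.exp_neg] at h
    field_simp at h
    linarith [h]
  have hWθ : 0 < W θ := hWpos θ
  have hWlb : ∀ s, W θ ≤ W s := by
    intro s; rw [hWformula s]
    nlinarith [Real.one_le_exp (by positivity : (0:ℝ) ≤ α*(s-θ)^2)]
  -- continuity
  have hFcont : Continuous F := continuous_iff_continuousAt.2 fun x => (hFder x).continuousAt
  have hGcont : Continuous G := continuous_iff_continuousAt.2 fun x => (hGder x).continuousAt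
  have hWcont : Continuous W := continuous_iff_continuousAt.2 fun x => (hWder x).continuousAt
  have hσWne : ∀ s, σ^2 * W s ≠ 0 := fun s => ne_of_gt (by
    have := hWpos s; positivity)
  have hΨcont : Continuous Ψ := by
    rw [show Ψ = fun x => 2 * F x / (σ ^ 2 * W x) from funext hΨ]
    exact (continuous_const.mul hFcont).div (continuous_const.mul hWcont) hσWne
  have hΦcont : Continuous Φ := by
    rw [show Φ = fun x => 2 * G x / (σ ^ 2 * W x) from funext hΦ]
    exact (continuous_const.mul hGcont).div (continuous_const.mul hWcont) hσWne
  have hfscont : Continuous f_s := by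
    rw [funext hfs]; fun_prop
  have hΨJ : ∀ s, Ψ s = 2 * Jf (q-1) (k*(s-θ)) / (σ ^ 2 * W s) := fun s => by
    rw [hΨ s, hFJ s]
  have hΦJ : ∀ s, Φ s = 2 * Jf (q-1) (-(k*(s-θ))) / (σ ^ 2 * W s) := fun s => by
    rw [hΦ s, hGJ s]
  -- P and Q, their derivatives
  set P : ℝ → ℝ := fun s =>
    (F s * Real.exp s - (k * Jf q (k*(s-θ))) * (Real.exp s - c_s)) / W s with hPdef
  set Q : ℝ → ℝ := fun s =>
    (G s * Real.exp s - (-(k * Jf q (-(k*(s-θ))))) * (Real.exp s - c_s)) / W s with hQdef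
  have hPder : ∀ s, HasDerivAt P (Ψ s * Real.exp s * f_s s) s := by
    intro s
    have hNder : HasDerivAt (fun s => F s * Real.exp s - (k * Jf q (k*(s-θ))) * (Real.exp s - c_s))
        ((k * Jf q (k*(s-θ))) * Real.exp s + F s * Real.exp s
          - ((k^2 * Jf (q+1) (k*(s-θ))) * (Real.exp s - c_s)
            + (k * Jf q (k*(s-θ))) * Real.exp s)) s :=
      ((hFder s).mul (Real.hasDerivAt_exp s)).sub
        ((hA1 s).mul ((Real.hasDerivAt_exp s).sub_const c_s))
    have h := hNder.div (hWder s) (ne_of_gt (hWpos s))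
    refine h.congr_deriv ?_
    rw [hΨ s, hfs s, hFJ s, Jf_ode hq (k*(s-θ)), Real.exp_neg, hrk, hμk]
    have hWne := (hWpos s).ne'
    have hexp := (Real.exp_pos s).ne'
    field_simp
    ring
  have hQder : ∀ s, HasDerivAt Q (Φ s * Real.exp s * f_s s) s := by
    intro s
    have hNder : HasDerivAt
        (fun s => G s * Real.exp s - (-(k * Jf q (-(k*(s-θ))))) * (Real.exp s - c_s))
        ((-(k * Jf q (-(k*(s-θ))))) * Real.exp s + G s * Real.exp s
          - ((k^2 * Jf (q+1) (-(k*(s-θ)))) * (Real.exp s - c_s)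
            + (-(k * Jf q (-(k*(s-θ))))) * Real.exp s)) s :=
      ((hGder s).mul (Real.hasDerivAt_exp s)).sub
        ((hB1 s).mul ((Real.hasDerivAt_exp s).sub_const c_s))
    have h := hNder.div (hWder s) (ne_of_gt (hWpos s))
    refine h.congr_deriv ?_
    rw [hΦ s, hfs s, hGJ s, Jf_ode hq (-(k*(s-θ))), Real.exp_neg, hrk, hμk]
    have hWne := (hWpos s).ne'
    have hexp := (Real.exp_pos s).ne'
    field_simp
    ring
  -- limits
  have hlinBot : Tendsto (fun s : ℝ => k*(s-θ)) atBot atBot := by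
    apply Tendsto.const_mul_atBot hk
    simpa [sub_eq_add_neg] using tendsto_atBot_add_const_right atBot (-θ) tendsto_id
  have hlinTop : Tendsto (fun s : ℝ => -(k*(s-θ))) atTop atBot := by
    apply tendsto_neg_atTop_atBot.comp
    apply Tendsto.const_mul_atTop hk
    simpa [sub_eq_add_neg] using tendsto_atTop_add_const_right atTop (-θ) tendsto_id
  have hPlim : Tendsto P atBot (𝓝 0) := by
    set N : ℝ → ℝ := fun s => F s * Real.exp s - (k * Jf q (k*(s-θ))) * (Real.exp s - c_s)
      with hN
    have hFlim : Tendsto F atBot (𝓝 0) := by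
      rw [show F = fun s => Jf (q-1) (k*(s-θ)) from funext hFJ]
      exact (Jf_tendsto_atBot hqm).comp hlinBot
    have hJlim : Tendsto (fun s => k * Jf q (k*(s-θ))) atBot (𝓝 0) := by
      have := ((Jf_tendsto_atBot hq0).comp hlinBot).const_mul k
      simpa using this
    have hNlim : Tendsto N atBot (𝓝 0) := by
      have h1 := hFlim.mul Real.tendsto_exp_atBot
      have h2 := hJlim.mul (Real.tendsto_exp_atBot.sub_const c_s)
      simpa using h1.sub h2
    refine squeeze_zero_norm (fun s => ?_) (by simpa using (hNlim.abs).div_const (W θ) :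
      Tendsto (fun s => |N s| / W θ) atBot (𝓝 0))
    show ‖(F s * Real.exp s - (k * Jf q (k*(s-θ))) * (Real.exp s - c_s)) / W s‖ ≤ |N s| / W θ
    rw [norm_div, Real.norm_eq_abs, Real.norm_eq_abs, abs_of_pos (hWpos s)]
    exact div_le_div_of_nonneg_left (abs_nonneg _) hWθ (hWlb s)
  have hQlim : Tendsto Q atTop (𝓝 0) := by
    have hGlim : Tendsto G atTop (𝓝 0) := by
      rw [show G = fun s => Jf (q-1) (-(k*(s-θ))) from funext hGJ]
      exact (Jf_tendsto_atBot hqm).comp hlinTop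
    have hJlim : Tendsto (fun s => k * Jf q (-(k*(s-θ)))) atTop (𝓝 0) := by
      have := ((Jf_tendsto_atBot hq0).comp hlinTop).const_mul k
      simpa using this
    have hE : Tendsto (fun s => Real.exp (1*s - α*(s-θ)^2)) atTop (𝓝 0) :=
      tendsto_exp_lin_quad hαpos 1 θ
    have hD : Tendsto (fun s => Real.exp (-(α*(s-θ)^2))) atTop (𝓝 0) := by
      have := tendsto_exp_lin_quad hαpos 0 θ
      simpa using this
    have hbig : Tendsto (fun s => (G s * Real.exp (1*s - α*(s-θ)^2)
        + (k * Jf q (-(k*(s-θ)))) * Real.exp (1*s - α*(s-θ)^2)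
        - c_s * ((k * Jf q (-(k*(s-θ)))) * Real.exp (-(α*(s-θ)^2)))) / W θ)
        atTop (𝓝 0) := by
      have h1 := hGlim.mul hE
      have h2 := hJlim.mul hE
      have h3 := (hJlim.mul hD).const_mul c_s
      have := (h1.add h2).sub h3
      simpa using this.div_const (W θ)
    apply hbig.congr
    intro s
    have hne : Real.exp (α*(s-θ)^2) ≠ 0 := Real.exp_ne_zero _
    show _ = (G s * Real.exp s - (-(k * Jf q (-(k*(s-θ))))) * (Real.exp s - c_s)) / W s
    rw [hWformula s]
    rw [show (1:ℝ)*s - α*(s-θ)^2 = s - α*(s-θ)^2 by ring, Real.exp_sub, Real.exp_neg]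
    field_simp
    ring
  -- integrability
  have hIic : ∀ x : ℝ, IntegrableOn (fun s => Ψ s * Real.exp s * f_s s) (Iic x) := by
    intro x
    set A : ℝ := |μ * θ + σ ^ 2 / 2 - r| with hAdef
    set Fx : ℝ := Jf (q-1) (k*(x-θ)) with hFxdef
    have hFx0 : 0 ≤ Fx := Jf_nonneg _ _
    set C : ℝ := 2*Fx/(σ^2*W θ) with hCdef
    have hC0 : 0 ≤ C := by positivity
    set D : ℝ → ℝ := fun s => C * (A * Real.exp (1*s - α*(s-θ)^2)
        + μ * Real.exp (2*s - α*(s-θ)^2) + (μ + r*c_s) * Real.exp (0*s - α*(s-θ)^2)) with hDdef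
    have hDint : Integrable D := by
      refine Integrable.const_mul ?_ C
      exact (((integrable_exp_lin_quad hαpos 1 θ).const_mul A).add
        ((integrable_exp_lin_quad hαpos 2 θ).const_mul μ)).add
        ((integrable_exp_lin_quad hαpos 0 θ).const_mul (μ + r*c_s))
    have hcont : Continuous (fun s => Ψ s * Real.exp s * f_s s) :=
      (hΨcont.mul Real.continuous_exp).mul hfscont
    refine Integrable.mono' hDint.integrableOn hcont.aestronglyMeasurable ?_
    filter_upwards [ae_restrict_mem measurableSet_Iic] with s hs
    have hsx : s ≤ x := hs
    have hJs0 : 0 ≤ Jf (q-1) (k*(s-θ)) := Jf_nonneg _ _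
    have hJsx : Jf (q-1) (k*(s-θ)) ≤ Fx :=
      Jf_mono _ hqm (mul_le_mul_of_nonneg_left (by linarith) hk.le)
    have hΨs0 : 0 ≤ Ψ s := by
      rw [hΨJ s]
      exact div_nonneg (by linarith) (mul_nonneg (sq_nonneg σ) (hWpos s).le)
    have hrwΨ : Ψ s = 2*Jf (q-1) (k*(s-θ))/(σ^2*W θ) * Real.exp (-(α*(s-θ)^2)) := by
      rw [hΨJ s, hWformula s, Real.exp_neg]
      field_simp
    have hfb : |f_s s| ≤ A + μ*(Real.exp s + Real.exp (-s)) + r*c_s*Real.exp (-s) := by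
      rw [hfs s]
      have h3 := abs_le.1 (abs_le_exp_add_exp s)
      have hA1' := le_abs_self (μ * θ + σ ^ 2 / 2 - r)
      have hA2' := neg_abs_le (μ * θ + σ ^ 2 / 2 - r)
      have hrce : (0:ℝ) < r * c_s * Real.exp (-s) := by positivity
      rw [abs_le]
      constructor <;> [nlinarith [h3.1, h3.2]; nlinarith [h3.1, h3.2]]
    rw [Real.norm_eq_abs, abs_mul, abs_mul, abs_of_nonneg hΨs0,
      abs_of_pos (Real.exp_pos s)]
    calc Ψ s * Real.exp s * |f_s s|
        ≤ (C * Real.exp (-(α*(s-θ)^2))) * Real.exp s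
          * (A + μ*(Real.exp s + Real.exp (-s)) + r*c_s*Real.exp (-s)) := by
          have hΨb : Ψ s ≤ C * Real.exp (-(α*(s-θ)^2)) := by
            rw [hrwΨ, hCdef]
            gcongr
          exact mul_le_mul (mul_le_mul_of_nonneg_right hΨb (Real.exp_pos s).le) hfb
            (abs_nonneg _) (by positivity)
      _ = D s := by
          have E1 : Real.exp (1*s - α*(s-θ)^2) = Real.exp s * Real.exp (-(α*(s-θ)^2)) := by
            rw [← Real.exp_add]; congr 1; ring
          have E2 : Real.exp (2*s - α*(s-θ)^2)
              = Real.exp s * Real.exp s * Real.exp (-(α*(s-θ)^2)) := by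
            rw [← Real.exp_add, ← Real.exp_add]; congr 1; ring
          have E0 : Real.exp (0*s - α*(s-θ)^2) = Real.exp (-(α*(s-θ)^2)) := by
            congr 1; ring
          have Ess : Real.exp s * Real.exp (-s) = 1 := by
            rw [← Real.exp_add]; simp
          rw [hDdef]
          simp only [E1, E2, E0]
          linear_combination (C * μ * Real.exp (-(α*(s-θ)^2))
            + C * r * c_s * Real.exp (-(α*(s-θ)^2))) * Ess
  have hIoi : ∀ x : ℝ, IntegrableOn (fun s => Φ s * Real.exp s * f_s s) (Ioi x) := by
    intro x
    set A : ℝ := |μ * θ + σ ^ 2 / 2 - r| with hAdef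
    set Gx : ℝ := Jf (q-1) (-(k*(x-θ))) with hGxdef
    have hGx0 : 0 ≤ Gx := Jf_nonneg _ _
    set C : ℝ := 2*Gx/(σ^2*W θ) with hCdef
    have hC0 : 0 ≤ C := by positivity
    set D : ℝ → ℝ := fun s => C * (A * Real.exp (1*s - α*(s-θ)^2)
        + μ * Real.exp (2*s - α*(s-θ)^2) + (μ + r*c_s) * Real.exp (0*s - α*(s-θ)^2)) with hDdef
    have hDint : Integrable D := by
      refine Integrable.const_mul ?_ C
      exact (((integrable_exp_lin_quad hαpos 1 θ).const_mul A).add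
        ((integrable_exp_lin_quad hαpos 2 θ).const_mul μ)).add
        ((integrable_exp_lin_quad hαpos 0 θ).const_mul (μ + r*c_s))
    have hcont : Continuous (fun s => Φ s * Real.exp s * f_s s) :=
      (hΦcont.mul Real.continuous_exp).mul hfscont
    refine Integrable.mono' hDint.integrableOn hcont.aestronglyMeasurable ?_
    filter_upwards [ae_restrict_mem measurableSet_Ioi] with s hs
    have hsx : x ≤ s := le_of_lt hs
    have hJs0 : 0 ≤ Jf (q-1) (-(k*(s-θ))) := Jf_nonneg _ _
    have hJsx : Jf (q-1) (-(k*(s-θ))) ≤ Gx := by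
      refine Jf_mono _ hqm ?_
      have : k*(x-θ) ≤ k*(s-θ) := mul_le_mul_of_nonneg_left (by linarith) hk.le
      linarith
    have hΦs0 : 0 ≤ Φ s := by
      rw [hΦJ s]
      exact div_nonneg (by linarith) (mul_nonneg (sq_nonneg σ) (hWpos s).le)
    have hrwΦ : Φ s = 2*Jf (q-1) (-(k*(s-θ)))/(σ^2*W θ) * Real.exp (-(α*(s-θ)^2)) := by
      rw [hΦJ s, hWformula s, Real.exp_neg]
      field_simp
    have hfb : |f_s s| ≤ A + μ*(Real.exp s + Real.exp (-s)) + r*c_s*Real.exp (-s) := by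
      rw [hfs s]
      have h3 := abs_le.1 (abs_le_exp_add_exp s)
      have hA1' := le_abs_self (μ * θ + σ ^ 2 / 2 - r)
      have hA2' := neg_abs_le (μ * θ + σ ^ 2 / 2 - r)
      have hrce : (0:ℝ) < r * c_s * Real.exp (-s) := by positivity
      rw [abs_le]
      constructor <;> [nlinarith [h3.1, h3.2]; nlinarith [h3.1, h3.2]]
    rw [Real.norm_eq_abs, abs_mul, abs_mul, abs_of_nonneg hΦs0,
      abs_of_pos (Real.exp_pos s)]
    calc Φ s * Real.exp s * |f_s s|
        ≤ (C * Real.exp (-(α*(s-θ)^2))) * Real.exp s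
          * (A + μ*(Real.exp s + Real.exp (-s)) + r*c_s*Real.exp (-s)) := by
          have hΦb : Φ s ≤ C * Real.exp (-(α*(s-θ)^2)) := by
            rw [hrwΦ, hCdef]
            gcongr
          exact mul_le_mul (mul_le_mul_of_nonneg_right hΦb (Real.exp_pos s).le) hfb
            (abs_nonneg _) (by positivity)
      _ = D s := by
          have E1 : Real.exp (1*s - α*(s-θ)^2) = Real.exp s * Real.exp (-(α*(s-θ)^2)) := by
            rw [← Real.exp_add]; congr 1; ring
          have E2 : Real.exp (2*s - α*(s-θ)^2)
              = Real.exp s * Real.exp s * Real.exp (-(α*(s-θ)^2)) := by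
            rw [← Real.exp_add, ← Real.exp_add]; congr 1; ring
          have E0 : Real.exp (0*s - α*(s-θ)^2) = Real.exp (-(α*(s-θ)^2)) := by
            congr 1; ring
          have Ess : Real.exp s * Real.exp (-s) = 1 := by
            rw [← Real.exp_add]; simp
          rw [hDdef]
          simp only [E1, E2, E0]
          linear_combination (C * μ * Real.exp (-(α*(s-θ)^2))
            + C * r * c_s * Real.exp (-(α*(s-θ)^2))) * Ess
  refine ⟨hIic, hIoi, ?_⟩
  intro x
  have hintIic : ∫ s in Iic x, Ψ s * Real.exp s * f_s s = P x - 0 :=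
    integral_Iic_of_hasDerivAt_of_tendsto' (f := P)
      (f' := fun s => Ψ s * Real.exp s * f_s s) (fun s _ => hPder s) (hIic x) hPlim
  have hintIoi : ∫ s in Ioi x, Φ s * Real.exp s * f_s s = 0 - Q x :=
    integral_Ioi_of_hasDerivAt_of_tendsto' (f := Q)
      (f' := fun s => Φ s * Real.exp s * f_s s) (fun s _ => hQder s) (hIoi x) hQlim
  rw [hintIic, hintIoi]
  have hWx := hWpos x
  have hWxe : W x = (k * Jf q (k*(x-θ))) * G x - F x * (-(k * Jf q (-(k*(x-θ))))) := by
    rw [hW x, hderivF x, hderivG x]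
  have hWne := hWx.ne'
  have hWne' : (k * Jf q (k*(x-θ))) * G x - F x * (-(k * Jf q (-(k*(x-θ))))) ≠ 0 := by
    rw [← hWxe]; exact hWne
  have hPx : P x = (F x * Real.exp x - (k * Jf q (k*(x-θ))) * (Real.exp x - c_s)) / W x := rfl
  have hQx : Q x = (G x * Real.exp x - (-(k * Jf q (-(k*(x-θ))))) * (Real.exp x - c_s)) / W x := rfl
  rw [hPx, hQx, sub_zero, zero_sub]
  have key : F x * (G x * Real.exp x - (-(k * Jf q (-(k*(x-θ))))) * (Real.exp x - c_s))
      - G x * (F x * Real.exp x - (k * Jf q (k*(x-θ))) * (Real.exp x - c_s))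
      = (Real.exp x - c_s) * W x := by
    linear_combination (Real.exp x - c_s) * hWxe.symm
  have hsplit : -G x * ((F x * Real.exp x - (k * Jf q (k*(x-θ))) * (Real.exp x - c_s)) / W x)
      - F x * (-((G x * Real.exp x - (-(k * Jf q (-(k*(x-θ))))) * (Real.exp x - c_s)) / W x))
      = (F x * (G x * Real.exp x - (-(k * Jf q (-(k*(x-θ))))) * (Real.exp x - c_s))
        - G x * (F x * Real.exp x - (k * Jf q (k*(x-θ))) * (Real.exp x - c_s))) / W x := by
    field_simp
    ring
  rw [hsplit, key, mul_div_assoc, div_self hWne, mul_one]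
end

section
/- For every x ∈ ℝ, the derivative of the function x ↦ (e^x + c_b)/F(x) satisfies ((e^x + c_b)/F(x))' = (W(x)/F(x)²)·∫_{−∞}^x Ψ(s)·e^s·f_b(s) ds, where the integral converges. -/
open Real MeasureTheory Set Filter


open Topology
section Stmt7Aux

noncomputable def Stmt7J (q a : ℝ) : ℝ := ∫ u in Ioi (0:ℝ), u ^ q * Real.exp (a * u - u ^ 2 / 2)

lemma stmt7_contOn (q a : ℝ) : ContinuousOn (fun u : ℝ => u ^ q * Real.exp (a * u - u ^ 2 / 2)) (Ioi 0) := by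
  apply ContinuousOn.mul
  · exact fun u hu => (Real.continuousAt_rpow_const u q (Or.inl (ne_of_gt hu))).continuousWithinAt
  · exact (Continuous.continuousOn (by continuity))

lemma stmt7_integrableOn_J (q a : ℝ) (hq : -1 < q) :
    IntegrableOn (fun u : ℝ => u ^ q * Real.exp (a * u - u ^ 2 / 2)) (Ioi 0) := by
  have key : IntegrableOn (fun u : ℝ => Real.exp ((a+1)^2/2) * (Real.exp (-u) * u ^ ((q+1) - 1))) (Ioi 0) :=
    (Real.GammaIntegral_convergent (by linarith)).const_mul _
  refine key.mono' ((stmt7_contOn q a).aestronglyMeasurable measurableSet_Ioi) ?_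
  rw [ae_restrict_iff' measurableSet_Ioi]
  filter_upwards with u hu
  have hu0 : (0:ℝ) < u := hu
  have h1 : (0:ℝ) ≤ u ^ q := Real.rpow_nonneg hu0.le q
  rw [norm_mul, norm_of_nonneg h1, Real.norm_eq_abs, Real.abs_exp]
  have : Real.exp (a * u - u ^ 2 / 2) ≤ Real.exp ((a+1)^2/2) * Real.exp (-u) := by
    rw [← Real.exp_add]
    apply Real.exp_le_exp.2
    nlinarith [sq_nonneg (u - (a+1))]
  calc u ^ q * Real.exp (a * u - u ^ 2 / 2)
      ≤ u ^ q * (Real.exp ((a+1)^2/2) * Real.exp (-u)) := by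
        exact mul_le_mul_of_nonneg_left this h1
    _ = Real.exp ((a+1)^2/2) * (Real.exp (-u) * u ^ ((q+1) - 1)) := by
        rw [add_sub_cancel_right]; ring

lemma stmt7_J_pos (q a : ℝ) (hq : -1 < q) : 0 < Stmt7J q a := by
  rw [Stmt7J]
  rw [setIntegral_pos_iff_support_of_nonneg_ae]
  · have hsub : Ioi (0:ℝ) ⊆ Function.support (fun u : ℝ => u ^ q * Real.exp (a * u - u ^ 2 / 2)) := by
      intro u hu
      have : (0:ℝ) < u ^ q * Real.exp (a * u - u ^ 2 / 2) :=
        mul_pos (Real.rpow_pos_of_pos hu q) (Real.exp_pos _)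
      exact ne_of_gt this
    rw [Set.inter_eq_right.2 hsub]
    simp
  · rw [EventuallyLE, ae_restrict_iff' measurableSet_Ioi]
    filter_upwards with u hu
    exact le_of_lt (mul_pos (Real.rpow_pos_of_pos hu q) (Real.exp_pos _))
  · exact stmt7_integrableOn_J q a hq

lemma stmt7_J_mono (q : ℝ) (hq : -1 < q) {a a' : ℝ} (h : a ≤ a') : Stmt7J q a ≤ Stmt7J q a' := by
  rw [Stmt7J, Stmt7J]
  apply setIntegral_mono_on (stmt7_integrableOn_J q a hq) (stmt7_integrableOn_J q a' hq) measurableSet_Ioi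
  intro u hu
  have hu0 : (0:ℝ) < u := hu
  have h1 : (0:ℝ) ≤ u ^ q := Real.rpow_nonneg hu0.le q
  apply mul_le_mul_of_nonneg_left _ h1
  apply Real.exp_le_exp.2
  nlinarith

lemma stmt7_hasDerivAt_J (q : ℝ) (hq : -1 < q) (a : ℝ) :
    HasDerivAt (Stmt7J q) (Stmt7J (q+1) a) a := by
  have hq1 : -1 < q + 1 := by linarith
  have := hasDerivAt_integral_of_dominated_loc_of_deriv_le (μ := volume.restrict (Ioi 0))
    (F := fun x u => u ^ q * Real.exp (x * u - u ^ 2 / 2))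
    (F' := fun x u => u ^ (q+1) * Real.exp (x * u - u ^ 2 / 2))
    (x₀ := a)
    (bound := fun u => u ^ (q+1) * Real.exp ((|a|+1) * u - u ^ 2 / 2))
    (Metric.ball_mem_nhds a one_pos)
    (Eventually.of_forall fun x => (stmt7_contOn q x).aestronglyMeasurable measurableSet_Ioi)
    (stmt7_integrableOn_J q a hq)
    ((stmt7_contOn (q+1) a).aestronglyMeasurable measurableSet_Ioi)
    ?_ (stmt7_integrableOn_J (q+1) (|a|+1) hq1) ?_
  · exact this.2
  · rw [ae_restrict_iff' measurableSet_Ioi]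
    filter_upwards with u hu x hx
    have hu0 : (0:ℝ) < u := hu
    have h1 : (0:ℝ) ≤ u ^ (q+1) := Real.rpow_nonneg hu0.le _
    rw [norm_mul, norm_of_nonneg h1, Real.norm_eq_abs, Real.abs_exp]
    apply mul_le_mul_of_nonneg_left _ h1
    apply Real.exp_le_exp.2
    have hx1 : x ≤ |a| + 1 := by
      have := abs_lt.1 (mem_ball_iff_norm.1 hx)
      cases abs_le.1 (le_refl |a|) with
      | intro h l => nlinarith [le_abs_self a]
    nlinarith
  · rw [ae_restrict_iff' measurableSet_Ioi]
    filter_upwards with u hu x _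
    have hu0 : (0:ℝ) < u := hu
    have inner : HasDerivAt (fun x : ℝ => x * u - u ^ 2 / 2) u x := by
      simpa using ((hasDerivAt_id x).mul_const u).sub_const (u ^ 2 / 2)
    have : HasDerivAt (fun x : ℝ => u ^ q * Real.exp (x * u - u ^ 2 / 2))
        (u ^ q * (Real.exp (x * u - u ^ 2 / 2) * u)) x := (inner.exp).const_mul _
    refine this.congr_deriv (Eq.symm ?_)
    rw [Real.rpow_add_one (ne_of_gt hu0)]
    ring

lemma stmt7_J_tendsto_atBot (q : ℝ) (hq : -1 < q) : Tendsto (Stmt7J q) atBot (𝓝 0) := by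
  have h0 : (∫ u in Ioi (0:ℝ), (0:ℝ)) = 0 := by simp
  rw [show (0:ℝ) = ∫ u in Ioi (0:ℝ), (0:ℝ) from h0.symm]
  apply tendsto_integral_filter_of_dominated_convergence
    (bound := fun u : ℝ => u ^ q * Real.exp (0 * u - u ^ 2 / 2))
  · exact Eventually.of_forall fun x => (stmt7_contOn q x).aestronglyMeasurable measurableSet_Ioi
  · filter_upwards [eventually_le_atBot (0:ℝ)] with x hx
    rw [ae_restrict_iff' measurableSet_Ioi]
    filter_upwards with u hu
    have hu0 : (0:ℝ) < u := hu
    have h1 : (0:ℝ) ≤ u ^ q := Real.rpow_nonneg hu0.le _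
    rw [norm_mul, norm_of_nonneg h1, Real.norm_eq_abs, Real.abs_exp]
    apply mul_le_mul_of_nonneg_left _ h1
    apply Real.exp_le_exp.2
    nlinarith
  · exact stmt7_integrableOn_J q 0 hq
  · rw [ae_restrict_iff' measurableSet_Ioi]
    filter_upwards with u hu
    have hu0 : (0:ℝ) < u := hu
    have h1 : Tendsto (fun x : ℝ => x * u - u ^ 2 / 2) atBot atBot := by
      apply tendsto_atBot_add_const_right
      exact Tendsto.atBot_mul_const hu0 tendsto_id
    have h2 : Tendsto (fun x : ℝ => u ^ q * Real.exp (x * u - u ^ 2 / 2)) atBot (𝓝 (u ^ q * 0)) :=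
      (Real.tendsto_exp_atBot.comp h1).const_mul _
    simpa using h2

lemma stmt7_J_ode (q a : ℝ) (hq : -1 < q) : Stmt7J (q+2) a = (q+1) * Stmt7J q a + a * Stmt7J (q+1) a := by
  have hq0 : (0:ℝ) < q + 1 := by linarith
  have h1i : IntegrableOn (fun u : ℝ => (q+1) * (u ^ q * Real.exp (a * u - u ^ 2 / 2))) (Ioi 0) :=
    (stmt7_integrableOn_J q a hq).const_mul _
  have h2i : IntegrableOn (fun u : ℝ => a * (u ^ (q+1) * Real.exp (a * u - u ^ 2 / 2))) (Ioi 0) :=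
    (stmt7_integrableOn_J (q+1) a (by linarith)).const_mul _
  have h12i : IntegrableOn (fun u : ℝ => (q+1) * (u ^ q * Real.exp (a * u - u ^ 2 / 2))
      + a * (u ^ (q+1) * Real.exp (a * u - u ^ 2 / 2))) (Ioi 0) := h1i.add h2i
  have h3i : IntegrableOn (fun u : ℝ => u ^ (q+2) * Real.exp (a * u - u ^ 2 / 2)) (Ioi 0) :=
    stmt7_integrableOn_J (q+2) a (by linarith)
  have hint : IntegrableOn (fun u : ℝ =>
      (q+1) * (u ^ q * Real.exp (a * u - u ^ 2 / 2))
      + a * (u ^ (q+1) * Real.exp (a * u - u ^ 2 / 2))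
      - u ^ (q+2) * Real.exp (a * u - u ^ 2 / 2)) (Ioi 0) := h12i.sub h3i
  have hexp : Continuous fun u : ℝ => Real.exp (a * u - u ^ 2 / 2) := by continuity
  have hderiv : ∀ u ∈ Ioi (0:ℝ),
      HasDerivAt (fun u : ℝ => u ^ (q+1) * Real.exp (a * u - u ^ 2 / 2))
      ((q+1) * (u ^ q * Real.exp (a * u - u ^ 2 / 2))
      + a * (u ^ (q+1) * Real.exp (a * u - u ^ 2 / 2))
      - u ^ (q+2) * Real.exp (a * u - u ^ 2 / 2)) u := by
    intro u hu
    have hu0 : (0:ℝ) < u := hu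
    have e1 : u ^ (q+1) = u ^ q * u := Real.rpow_add_one (ne_of_gt hu0) q
    have e2 : u ^ (q+2) = u ^ q * u * u := by
      rw [show q + 2 = (q+1) + 1 by ring, Real.rpow_add_one (ne_of_gt hu0), e1]
    have h1 : HasDerivAt (fun u : ℝ => u ^ (q+1)) ((q+1) * u ^ q) u := by
      have := Real.hasDerivAt_rpow_const (x := u) (p := q+1) (Or.inl (ne_of_gt hu0))
      simpa [add_sub_cancel_right] using this
    have h2 : HasDerivAt (fun u : ℝ => a * u - u ^ 2 / 2) (a - u) u := by
      have : HasDerivAt (fun u : ℝ => a * u - u ^ 2 / 2) (a * 1 - (2 * u ^ 1) / 2) u :=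
        ((hasDerivAt_id u).const_mul a).sub ((hasDerivAt_pow 2 u).div_const 2)
      simpa using this
    have := h1.mul h2.exp
    refine this.congr_deriv (Eq.symm ?_)
    rw [e1, e2]
    ring
  have hcont : ContinuousWithinAt (fun u : ℝ => u ^ (q+1) * Real.exp (a * u - u ^ 2 / 2)) (Ici 0) 0 :=
    (((Real.continuousAt_rpow_const 0 (q+1) (Or.inr hq0.le)).mul
      hexp.continuousAt)).continuousWithinAt
  have htop : Tendsto (fun u : ℝ => u ^ (q+1) * Real.exp (a * u - u ^ 2 / 2)) atTop (𝓝 0) := by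
    have heq : ∀ᶠ u in atTop, (fun u : ℝ => u ^ (q+1) * Real.exp (a * u - u ^ 2 / 2)) u
        = Real.exp ((q+1) * Real.log u + (a * u - u ^ 2 / 2)) := by
      filter_upwards [eventually_gt_atTop (0:ℝ)] with u hu
      rw [Real.rpow_def_of_pos hu, ← Real.exp_add, mul_comm (Real.log u)]
    rw [tendsto_congr' heq]
    apply Real.tendsto_exp_atBot.comp
    have hb : Tendsto (fun u : ℝ => (q+1) * u + (a * u - u ^ 2 / 2)) atTop atBot := by
      have h3 : Tendsto (fun u : ℝ => -(u / 2)) atTop atBot :=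
        tendsto_neg_atTop_atBot.comp (tendsto_id.atTop_div_const (by norm_num : (0:ℝ) < 2))
      have : Tendsto (fun u : ℝ => u * ((q + 1 + a) + -(u / 2))) atTop atBot :=
        Tendsto.atTop_mul_atBot₀ tendsto_id (tendsto_atBot_add_const_left _ _ h3)
      refine this.congr fun u => by ring
    apply tendsto_atBot_mono' _ _ hb
    filter_upwards [eventually_ge_atTop (1:ℝ)] with u hu
    have hlog : Real.log u ≤ u := (Real.log_le_sub_one_of_pos (by linarith)).trans (by linarith)
    nlinarith
  have key := integral_Ioi_of_hasDerivAt_of_tendsto hcont hderiv hint htop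
  rw [Real.zero_rpow (ne_of_gt hq0), zero_mul, sub_zero] at key
  rw [integral_sub h12i h3i, integral_add h1i h2i, integral_const_mul, integral_const_mul] at key
  have : (q+1) * Stmt7J q a + a * Stmt7J (q+1) a - Stmt7J (q+2) a = 0 := key
  linarith

lemma stmt7_poly_bound (b θ : ℝ) (hb : 0 < b) (s : ℝ) :
    1 + |s| ≤ (1+|θ|)*(1+2/b) * Real.exp (b/2*(s-θ)^2) := by
  have h1 : 1 ≤ Real.exp (b/2*(s-θ)^2) := Real.one_le_exp (by positivity)
  have ht : |s| ≤ |θ| + |s - θ| := by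
    calc |s| = |θ + (s - θ)| := by ring_nf
    _ ≤ |θ| + |s-θ| := abs_add_le _ _
  have hbn : 0 < 2/b := by positivity
  rcases le_or_gt (|s - θ|) (2/b) with h | h
  · nlinarith [abs_nonneg θ, abs_nonneg (s-θ), abs_nonneg s,
      mul_nonneg (abs_nonneg θ) hbn.le]
  · have h2 : 1 + b/2*(s-θ)^2 ≤ Real.exp (b/2*(s-θ)^2) := by
      have := Real.add_one_le_exp (b/2*(s-θ)^2); linarith
    have h3 : |s-θ| ≤ b/2*(s-θ)^2 := by
      have h4 : (s-θ)^2 = |s-θ|^2 := (sq_abs _).symm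
      rw [h4]
      have h5 : 2/b ≤ |s-θ| := h.le
      have h6 : 1 ≤ b/2 * |s-θ| := by
        rw [div_le_iff₀ hb] at h5
        nlinarith
      nlinarith [abs_nonneg (s-θ)]
    have c1 : 1 + |s| ≤ (1+|θ|)*(1+|s-θ|) := by nlinarith [abs_nonneg θ, abs_nonneg (s-θ), mul_nonneg (abs_nonneg θ) (abs_nonneg (s-θ))]
    have c2 : (1:ℝ) + |s-θ| ≤ Real.exp (b/2*(s-θ)^2) := by linarith
    have c3 : (1+|θ|)*(1+|s-θ|) ≤ (1+|θ|)*Real.exp (b/2*(s-θ)^2) :=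
      mul_le_mul_of_nonneg_left c2 (by positivity)
    have c4 : (1+|θ|)*Real.exp (b/2*(s-θ)^2) ≤ (1+|θ|)*(1+2/b)*Real.exp (b/2*(s-θ)^2) := by
      nlinarith [Real.exp_pos (b/2*(s-θ)^2), abs_nonneg θ, mul_nonneg (abs_nonneg θ) hbn.le]
    linarith

end Stmt7Aux

set_option maxHeartbeats 1000000 in
/-- For every x, the derivative of x ↦ (e^x + c_b)/F(x) equals
(W(x)/F(x)²)·∫_{−∞}^x Ψ(s)·e^s·f_b(s) ds, where the integral converges. -/
theorem stmt7
    (μ σ θ r c_s c_b : ℝ)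
    (hμ : 0 < μ) (hσ : 0 < σ) (hr : 0 < r) (hcs : 0 < c_s) (hcb : 0 < c_b)
    (F G : ℝ → ℝ)
    (hF : ∀ x : ℝ, F x = ∫ u in Ioi (0:ℝ),
        u ^ (r / μ - 1) * Real.exp (Real.sqrt (2 * μ / σ ^ 2) * (x - θ) * u - u ^ 2 / 2))
    (hG : ∀ x : ℝ, G x = ∫ u in Ioi (0:ℝ),
        u ^ (r / μ - 1) * Real.exp (Real.sqrt (2 * μ / σ ^ 2) * (θ - x) * u - u ^ 2 / 2))
    (f_b : ℝ → ℝ)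
    (hfb : ∀ x : ℝ, f_b x = (μ * θ + σ ^ 2 / 2 - r) - μ * x - r * c_b * Real.exp (-x))
    (W Ψ : ℝ → ℝ)
    (hW : ∀ x, W x = deriv F x * G x - F x * deriv G x)
    (hWpos : ∀ x, 0 < W x)
    (hΨ : ∀ x, Ψ x = 2 * F x / (σ ^ 2 * W x)) :
    (∀ x : ℝ, IntegrableOn (fun s => Ψ s * Real.exp s * f_b s) (Iic x)) ∧
    (∀ x : ℝ, HasDerivAt (fun y => (Real.exp y + c_b) / F y)
      (W x / (F x) ^ 2 * ∫ s in Iic x, Ψ s * Real.exp s * f_b s) x) := by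
  have hσ2 : (0:ℝ) < σ ^ 2 := by positivity
  have hk2' : (0:ℝ) < 2 * μ / σ ^ 2 := by positivity
  set k := Real.sqrt (2 * μ / σ ^ 2) with hk_def
  have hkpos : 0 < k := Real.sqrt_pos.2 hk2'
  have hk2 : k ^ 2 = 2 * μ / σ ^ 2 := by rw [hk_def]; exact Real.sq_sqrt hk2'.le
  set p := r / μ - 1 with hp_def
  have hrμ : 0 < r / μ := div_pos hr hμ
  have hp : -1 < p := by rw [hp_def]; linarith
  have hp1 : -1 < p + 1 := by linarith
  have hp1' : p + 1 = r / μ := by rw [hp_def]; ring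
  have hFJ : ∀ x, F x = Stmt7J p (k * (x - θ)) := by
    intro x; rw [hF x, Stmt7J]
  have hGJ : ∀ x, G x = Stmt7J p (k * (θ - x)) := by
    intro x; rw [hG x, Stmt7J]
  have hinnerA : ∀ x : ℝ, HasDerivAt (fun x : ℝ => k * (x - θ)) k x := by
    intro x
    have := ((hasDerivAt_id x).sub_const θ).const_mul k
    simpa using this
  have hinnerB : ∀ x : ℝ, HasDerivAt (fun x : ℝ => k * (θ - x)) (-k) x := by
    intro x
    have := ((hasDerivAt_id x).const_sub θ).const_mul k
    refine this.congr_deriv (Eq.symm ?_)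
    ring
  have hJA : ∀ (q : ℝ), -1 < q → ∀ x : ℝ,
      HasDerivAt (fun x : ℝ => Stmt7J q (k * (x - θ))) (k * Stmt7J (q+1) (k * (x - θ))) x := by
    intro q hq x
    have := (stmt7_hasDerivAt_J q hq (k * (x - θ))).comp x (hinnerA x)
    exact this.congr_deriv (mul_comm _ _)
  have hJB : ∀ (q : ℝ), -1 < q → ∀ x : ℝ,
      HasDerivAt (fun x : ℝ => Stmt7J q (k * (θ - x))) (-(k * Stmt7J (q+1) (k * (θ - x)))) x := by
    intro q hq x
    have := (stmt7_hasDerivAt_J q hq (k * (θ - x))).comp x (hinnerB x)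
    refine this.congr_deriv (Eq.symm ?_)
    ring
  have hFd : ∀ x, HasDerivAt F (k * Stmt7J (p+1) (k * (x - θ))) x := by
    intro x
    rw [show F = fun x => Stmt7J p (k * (x - θ)) from funext hFJ]
    exact hJA p hp x
  have hGd : ∀ x, HasDerivAt G (-(k * Stmt7J (p+1) (k * (θ - x)))) x := by
    intro x
    rw [show G = fun x => Stmt7J p (k * (θ - x)) from funext hGJ]
    exact hJB p hp x
  have hderivF : deriv F = fun x => k * Stmt7J (p+1) (k * (x - θ)) := funext fun x => (hFd x).deriv
  have hderivG : deriv G = fun x => -(k * Stmt7J (p+1) (k * (θ - x))) := funext fun x => (hGd x).deriv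
  have hFd2 : ∀ x, HasDerivAt (deriv F) (k ^ 2 * Stmt7J (p+2) (k * (x - θ))) x := by
    intro x
    rw [hderivF]
    have := (hJA (p+1) hp1 x).const_mul k
    refine this.congr_deriv (Eq.symm ?_)
    rw [show p+1+1 = p+2 from by ring]
    ring
  have hWJ : ∀ x, W x = k * (Stmt7J (p+1) (k * (x - θ)) * Stmt7J p (k * (θ - x))
      + Stmt7J p (k * (x - θ)) * Stmt7J (p+1) (k * (θ - x))) := by
    intro x
    rw [hW x]
    simp only [hderivF, hderivG, hFJ x, hGJ x]
    ring
  have hWd : ∀ x, HasDerivAt W (2 * μ / σ ^ 2 * (x - θ) * W x) x := by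
    intro x
    rw [show W = fun x => k * (Stmt7J (p+1) (k * (x - θ)) * Stmt7J p (k * (θ - x))
      + Stmt7J p (k * (x - θ)) * Stmt7J (p+1) (k * (θ - x))) from funext hWJ]
    have t1 := (((hJA (p+1) hp1 x).mul (hJB p hp x)).add
      ((hJA p hp x).mul (hJB (p+1) hp1 x))).const_mul k
    refine t1.congr_deriv (Eq.symm ?_)
    rw [show p+1+1 = p+2 from by ring]
    rw [stmt7_J_ode p (k * (x - θ)) hp, stmt7_J_ode p (k * (θ - x)) hp, ← hk2]
    beta_reduce
    ring
  have hQd : ∀ x, HasDerivAt (fun x => W x * Real.exp (-(μ / σ ^ 2) * (x - θ) ^ 2)) 0 x := by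
    intro x
    have hin : HasDerivAt (fun x : ℝ => -(μ / σ ^ 2) * (x - θ) ^ 2) (-(μ / σ ^ 2) * (2 * (x - θ))) x := by
      have := (((hasDerivAt_id x).sub_const θ).pow 2).const_mul (-(μ / σ ^ 2))
      refine this.congr_deriv (Eq.symm ?_)
      norm_num
    have := (hWd x).mul hin.exp
    refine this.congr_deriv (Eq.symm ?_)
    ring
  have hQc := is_const_of_deriv_eq_zero
      (f := fun x => W x * Real.exp (-(μ / σ ^ 2) * (x - θ) ^ 2))
      (fun x => (hQd x).differentiableAt) (fun x => (hQd x).deriv)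
  have hWval : ∀ x, W x = W θ * Real.exp ((μ / σ ^ 2) * (x - θ) ^ 2) := by
    intro x
    have h2 : W x * Real.exp (-(μ / σ ^ 2) * (x - θ) ^ 2) = W θ := by
      have h1 := hQc x θ
      simpa using h1
    calc W x = W x * (Real.exp (-(μ / σ ^ 2) * (x - θ) ^ 2) * Real.exp ((μ / σ ^ 2) * (x - θ) ^ 2)) := by
          rw [← Real.exp_add]; simp
    _ = (W x * Real.exp (-(μ / σ ^ 2) * (x - θ) ^ 2)) * Real.exp ((μ / σ ^ 2) * (x - θ) ^ 2) := by ring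
    _ = W θ * Real.exp ((μ / σ ^ 2) * (x - θ) ^ 2) := by rw [h2]
  have hWlb : ∀ x, W θ ≤ W x := by
    intro x
    rw [hWval x]
    nlinarith [Real.one_le_exp (show 0 ≤ (μ / σ ^ 2) * (x - θ) ^ 2 by positivity), hWpos θ]
  have hFpos : ∀ y, 0 < F y := by
    intro y; rw [hFJ y]; exact stmt7_J_pos p _ hp
  have hF2eq : ∀ x, k ^ 2 * Stmt7J (p+2) (k * (x - θ))
      = 2 * r / σ ^ 2 * F x + 2 * μ / σ ^ 2 * (x - θ) * deriv F x := by
    intro x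
    rw [stmt7_J_ode p (k * (x - θ)) hp]
    simp only [hderivF, hFJ x]
    rw [hp1', hk2]
    field_simp
  have hFdiv : ∀ x, HasDerivAt (fun y => Real.exp y * F y - (Real.exp y + c_b) * deriv F y)
      (2 * F x / σ ^ 2 * Real.exp x * f_b x
        + 2 * μ / σ ^ 2 * (x - θ) * (Real.exp x * F x - (Real.exp x + c_b) * deriv F x)) x := by
    intro x
    have h1 := (Real.hasDerivAt_exp x).mul (hFd x)
    have h2 := ((Real.hasDerivAt_exp x).add_const c_b).mul (hFd2 x)
    have h3 := h1.sub h2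
    refine h3.congr_deriv (Eq.symm ?_)
    rw [hF2eq x, hfb x]
    simp only [hderivF, Real.exp_neg]
    have hex := Real.exp_ne_zero x
    field_simp
    ring
  have hgd : ∀ s, HasDerivAt (fun y => (Real.exp y * F y - (Real.exp y + c_b) * deriv F y) / W y)
      (Ψ s * Real.exp s * f_b s) s := by
    intro s
    have := (hFdiv s).div (hWd s) (hWpos s).ne'
    refine this.congr_deriv (Eq.symm ?_)
    rw [hΨ s]
    field_simp [(hWpos s).ne', hσ.ne']
    ring
  have hFbot : Tendsto F atBot (𝓝 0) := by
    rw [show F = fun x => Stmt7J p (k * (x - θ)) from funext hFJ]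
    apply (stmt7_J_tendsto_atBot p hp).comp
    apply Tendsto.const_mul_atBot hkpos
    exact tendsto_atBot_add_const_right _ _ tendsto_id
  have hFdbot : Tendsto (deriv F) atBot (𝓝 0) := by
    rw [hderivF]
    have h1 : Tendsto (fun x : ℝ => Stmt7J (p+1) (k * (x - θ))) atBot (𝓝 0) := by
      apply (stmt7_J_tendsto_atBot (p+1) hp1).comp
      apply Tendsto.const_mul_atBot hkpos
      exact tendsto_atBot_add_const_right _ _ tendsto_id
    simpa using h1.const_mul k
  have hwbot : Tendsto (fun y => Real.exp y * F y - (Real.exp y + c_b) * deriv F y) atBot (𝓝 0) := by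
    have h1 := Real.tendsto_exp_atBot.mul hFbot
    have h2 := (Real.tendsto_exp_atBot.add_const c_b).mul hFdbot
    simpa using h1.sub h2
  have hgbot : Tendsto (fun y => (Real.exp y * F y - (Real.exp y + c_b) * deriv F y) / W y)
      atBot (𝓝 0) := by
    have hn : Tendsto (fun y => ‖Real.exp y * F y - (Real.exp y + c_b) * deriv F y‖ / W θ)
        atBot (𝓝 0) := by
      simpa using hwbot.norm.div_const (W θ)
    apply squeeze_zero_norm _ hn
    intro y
    rw [norm_div, Real.norm_eq_abs (W y), abs_of_pos (hWpos y)]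
    exact div_le_div_of_nonneg_left (norm_nonneg _) (hWpos θ) (hWlb y)
  have hcontF : Continuous F := continuous_iff_continuousAt.mpr fun x => (hFd x).continuousAt
  have hcontW : Continuous W := by
    rw [show W = fun x => W θ * Real.exp ((μ / σ ^ 2) * (x - θ) ^ 2) from funext hWval]
    exact continuous_const.mul (Real.continuous_exp.comp
      (continuous_const.mul ((continuous_id.sub continuous_const).pow 2)))
  have hcontfb : Continuous f_b := by
    rw [show f_b = fun x => (μ * θ + σ ^ 2 / 2 - r) - μ * x - r * c_b * Real.exp (-x) from funext hfb]
    have hce : Continuous fun x : ℝ => Real.exp (-x) := Real.continuous_exp.comp continuous_neg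
    exact (continuous_const.sub (continuous_const.mul continuous_id)).sub
      (continuous_const.mul hce)
  have hcontΨ : Continuous Ψ := by
    rw [show Ψ = fun x => 2 * F x / (σ ^ 2 * W x) from funext hΨ]
    exact (continuous_const.mul hcontF).div (continuous_const.mul hcontW)
      (fun x => (mul_pos hσ2 (hWpos x)).ne')
  have hconth : Continuous (fun s => Ψ s * Real.exp s * f_b s) :=
    (hcontΨ.mul Real.continuous_exp).mul hcontfb
  have hIntegrable : ∀ x : ℝ, IntegrableOn (fun s => Ψ s * Real.exp s * f_b s) (Iic x) := by
    intro x
    set b := μ / σ ^ 2 with hb_def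
    have hb : 0 < b := by rw [hb_def]; positivity
    set A := μ * θ + σ ^ 2 / 2 - r with hA_def
    set C1 := Real.exp x * (|A| + μ) + r * c_b with hC1_def
    have hC1pos : 0 < C1 := by rw [hC1_def]; positivity
    set C2 := (1 + |θ|) * (1 + 2 / b) with hC2_def
    have hC2pos : 0 < C2 := by rw [hC2_def]; positivity
    set D := 2 * F x / (σ ^ 2 * W θ) with hD_def
    have hDpos : 0 < D := by
      rw [hD_def]
      apply div_pos (by linarith [hFpos x]) (mul_pos hσ2 (hWpos θ))
    set K := D * (C1 * C2) with hK_def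
    have hdom : Integrable (fun s : ℝ => K * Real.exp (-(b/2) * (s - θ) ^ 2)) := by
      apply Integrable.const_mul
      have := (integrable_exp_neg_mul_sq (show 0 < b/2 by positivity)).comp_sub_right θ
      simpa using this
    refine (hdom.integrableOn).mono' hconth.aestronglyMeasurable ?_
    rw [ae_restrict_iff' measurableSet_Iic]
    filter_upwards with s hs
    have hs' : s ≤ x := hs
    have hΨnn : 0 ≤ Ψ s := by
      rw [hΨ s]
      apply div_nonneg (by linarith [hFpos s]) (mul_pos hσ2 (hWpos s)).le
    have hfb1 : |Real.exp s * f_b s| ≤ C1 * (1 + |s|) := by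
      have e1 : Real.exp s * f_b s = Real.exp s * (A - μ * s) - r * c_b := by
        rw [hfb s, Real.exp_neg]
        have hex := Real.exp_ne_zero s
        field_simp
      rw [e1]
      have h2 : |Real.exp s * (A - μ * s) - r * c_b| ≤ Real.exp s * |A - μ * s| + r * c_b := by
        calc |Real.exp s * (A - μ * s) - r * c_b| ≤ |Real.exp s * (A - μ * s)| + |r * c_b| :=
              abs_sub _ _
        _ = Real.exp s * |A - μ * s| + r * c_b := by
              rw [abs_mul (Real.exp s), Real.abs_exp, abs_of_pos (mul_pos hr hcb)]
      have h3 : |A - μ * s| ≤ |A| + μ * |s| := by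
        calc |A - μ * s| ≤ |A| + |μ * s| := abs_sub _ _
        _ = |A| + μ * |s| := by rw [abs_mul, abs_of_pos hμ]
      have h4 : Real.exp s ≤ Real.exp x := Real.exp_le_exp.2 hs'
      have c1 : Real.exp s * |A - μ * s| ≤ Real.exp x * (|A| + μ * |s|) :=
        mul_le_mul h4 h3 (abs_nonneg _) (Real.exp_pos x).le
      have c2 : Real.exp x * (|A| + μ * |s|) ≤ Real.exp x * ((|A| + μ) * (1 + |s|)) := by
        apply mul_le_mul_of_nonneg_left _ (Real.exp_pos x).le
        nlinarith [abs_nonneg s, abs_nonneg A]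
      have c3 : r * c_b ≤ r * c_b * (1 + |s|) := by
        nlinarith [abs_nonneg s, mul_pos hr hcb]
      have : C1 * (1 + |s|) = Real.exp x * ((|A| + μ) * (1 + |s|)) + r * c_b * (1 + |s|) := by
        rw [hC1_def]; ring
      linarith
    have eq1 : Ψ s = 2 * F s / (σ ^ 2 * W θ) * Real.exp (-(b * (s - θ) ^ 2)) := by
      rw [hΨ s, hWval s, Real.exp_neg]
      field_simp [(hWpos θ).ne', hσ.ne', Real.exp_ne_zero]
    have hFs : F s ≤ F x := by
      rw [hFJ s, hFJ x]
      exact stmt7_J_mono p hp (by nlinarith [hkpos])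
    have hΨb : Ψ s ≤ D * Real.exp (-(b * (s - θ) ^ 2)) := by
      rw [eq1, hD_def]
      apply mul_le_mul_of_nonneg_right _ (Real.exp_pos _).le
      exact (div_le_div_iff_of_pos_right (mul_pos hσ2 (hWpos θ))).2 (by linarith [hFs])
    rw [Real.norm_eq_abs]
    have habs : |Ψ s * Real.exp s * f_b s| = Ψ s * |Real.exp s * f_b s| := by
      rw [mul_assoc, abs_mul, abs_of_nonneg hΨnn]
    rw [habs]
    have hee : Real.exp (-(b * (s - θ) ^ 2)) * Real.exp (b/2 * (s - θ) ^ 2)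
        = Real.exp (-(b/2) * (s - θ) ^ 2) := by
      rw [← Real.exp_add]; ring_nf
    have hpoly := stmt7_poly_bound b θ hb s
    calc Ψ s * |Real.exp s * f_b s|
        ≤ (D * Real.exp (-(b * (s - θ) ^ 2))) * (C1 * (1 + |s|)) :=
          mul_le_mul hΨb hfb1 (abs_nonneg _) (by positivity)
    _ ≤ (D * Real.exp (-(b * (s - θ) ^ 2))) * (C1 * (C2 * Real.exp (b/2 * (s - θ) ^ 2))) := by
          apply mul_le_mul_of_nonneg_left _ (by positivity)
          apply mul_le_mul_of_nonneg_left _ hC1pos.le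
          rw [hC2_def]
          exact hpoly
    _ = K * Real.exp (-(b/2) * (s - θ) ^ 2) := by
          rw [hK_def, ← hee]; ring
  refine ⟨hIntegrable, fun x => ?_⟩
  have heval : (∫ s in Iic x, Ψ s * Real.exp s * f_b s)
      = (Real.exp x * F x - (Real.exp x + c_b) * deriv F x) / W x := by
    have := integral_Iic_of_hasDerivAt_of_tendsto' (fun s _ => hgd s) (hIntegrable x) hgbot
    simpa using this
  have hFx : F x ≠ 0 := (hFpos x).ne'
  have hd := ((Real.hasDerivAt_exp x).add_const c_b).div (hFd x) hFx
  refine hd.congr_deriv (Eq.symm ?_)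
  rw [heval]
  simp only [hderivF]
  field_simp [(hWpos x).ne', hFx]
end

section
/- The ratio (e^x − c_s)/F(x) tends to 0 as x → +∞. -/
open Real MeasureTheory Set Filter

lemma aux_integrable (p a : ℝ) (hp : -1 < p) :
    IntegrableOn (fun u : ℝ => u ^ p * Real.exp (a * u - u ^ 2 / 2)) (Ioi 0) := by
  have hgamma : IntegrableOn (fun u : ℝ => Real.exp (-u) * u ^ ((p + 1) - 1)) (Ioi 0) :=
    Real.GammaIntegral_convergent (by linarith)
  refine Integrable.mono' (hgamma.const_mul (Real.exp ((a + 1) ^ 2 / 2))) ?_ ?_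
  · refine ContinuousOn.aestronglyMeasurable ?_ measurableSet_Ioi
    refine (continuousOn_id.rpow_const fun x hx => Or.inl (ne_of_gt hx)).mul ?_
    exact (Continuous.continuousOn (by continuity))
  · rw [ae_restrict_iff' measurableSet_Ioi]
    refine ae_of_all _ fun u hu => ?_
    have hu0 : (0 : ℝ) < u := hu
    have h1 : 0 ≤ u ^ p := Real.rpow_nonneg hu0.le p
    rw [Real.norm_eq_abs, abs_of_nonneg (mul_nonneg h1 (Real.exp_pos _).le)]
    have hle : Real.exp (a * u - u ^ 2 / 2) ≤ Real.exp ((a + 1) ^ 2 / 2) * Real.exp (-u) := by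
      rw [← Real.exp_add]
      apply Real.exp_le_exp.mpr
      nlinarith [sq_nonneg (u - (a + 1))]
    calc u ^ p * Real.exp (a * u - u ^ 2 / 2)
        ≤ u ^ p * (Real.exp ((a + 1) ^ 2 / 2) * Real.exp (-u)) :=
          mul_le_mul_of_nonneg_left hle h1
      _ = Real.exp ((a + 1) ^ 2 / 2) * (Real.exp (-u) * u ^ ((p + 1) - 1)) := by
          rw [add_sub_cancel_right]; ring

/-- (e^x − c_s)/F(x) → 0 as x → +∞. -/
theorem stmt8
    (μ σ θ r c_s c_b : ℝ)
    (hμ : 0 < μ) (hσ : 0 < σ) (hr : 0 < r) (hcs : 0 < c_s) (hcb : 0 < c_b)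
    (F : ℝ → ℝ)
    (hF : ∀ x : ℝ, F x = ∫ u in Ioi (0:ℝ),
        u ^ (r / μ - 1) * Real.exp (Real.sqrt (2 * μ / σ ^ 2) * (x - θ) * u - u ^ 2 / 2)) :
    Filter.Tendsto (fun x => (Real.exp x - c_s) / F x) Filter.atTop (nhds 0) := by
  set k := Real.sqrt (2 * μ / σ ^ 2) with hkdef
  have hk0 : 0 < k := Real.sqrt_pos.mpr (by positivity)
  set p := r / μ - 1 with hpdef
  have hp1 : -1 < p := by
    have : 0 < r / μ := div_pos hr hμ
    rw [hpdef]; linarith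
  set M := 1 + 2 / k with hMdef
  have hM1 : (1 : ℝ) ≤ M := by
    have : 0 < 2 / k := by positivity
    rw [hMdef]; linarith
  have hkM : k * M = k + 2 := by
    rw [hMdef]; field_simp
  set c := Real.exp (-(|p| * Real.log (M + 1))) with hcdef
  have hc0 : 0 < c := Real.exp_pos _
  clear_value c M p k
  -- Lower bound on F
  have hFlb : ∀ x : ℝ, θ ≤ x →
      c * Real.exp (k * (x - θ) * M - (M + 1) ^ 2 / 2) ≤ F x := by
    intro x hx
    rw [hF x]
    have hint : IntegrableOn
        (fun u : ℝ => u ^ p * Real.exp (k * (x - θ) * u - u ^ 2 / 2)) (Ioi 0) :=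
      aux_integrable p (k * (x - θ)) hp1
    have hsub : Ioc M (M + 1) ⊆ Ioi (0 : ℝ) := fun u hu => lt_of_lt_of_le
      (by linarith : (0 : ℝ) < M) hu.1.le
    have step1 : (∫ u in Ioc M (M + 1), u ^ p * Real.exp (k * (x - θ) * u - u ^ 2 / 2))
        ≤ ∫ u in Ioi (0 : ℝ), u ^ p * Real.exp (k * (x - θ) * u - u ^ 2 / 2) := by
      apply setIntegral_mono_set hint
      · filter_upwards [ae_restrict_mem measurableSet_Ioi] with u hu
        exact mul_nonneg (Real.rpow_nonneg (le_of_lt hu) _) (Real.exp_pos _).le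
      · exact hsub.eventuallyLE
    have hvol : (volume (Ioc M (M + 1))).toReal = 1 := by
      rw [Real.volume_Ioc, show M + 1 - M = 1 by ring]
      simp
    have step2 : c * Real.exp (k * (x - θ) * M - (M + 1) ^ 2 / 2)
          * (volume (Ioc M (M + 1))).toReal
        ≤ ∫ u in Ioc M (M + 1), u ^ p * Real.exp (k * (x - θ) * u - u ^ 2 / 2) := by
      apply setIntegral_ge_of_const_le_real measurableSet_Ioc measure_Ioc_lt_top.ne
      · intro u hu
        have hu0 : (0 : ℝ) < u := hsub hu
        have huM : M < u := hu.1
        have huM1 : u ≤ M + 1 := hu.2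
        have h1 : c ≤ u ^ p := by
          rw [Real.rpow_def_of_pos hu0, hcdef]
          apply Real.exp_le_exp.mpr
          have hlogu : 0 ≤ Real.log u := Real.log_nonneg (by linarith)
          have hlog_le : Real.log u ≤ Real.log (M + 1) :=
            Real.log_le_log hu0 (by linarith)
          have e1 : -|p| * Real.log u ≤ p * Real.log u :=
            mul_le_mul_of_nonneg_right (neg_abs_le p) hlogu
          have e2 : |p| * Real.log u ≤ |p| * Real.log (M + 1) :=
            mul_le_mul_of_nonneg_left hlog_le (abs_nonneg p)
          nlinarith
        have h2 : Real.exp (k * (x - θ) * M - (M + 1) ^ 2 / 2)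
            ≤ Real.exp (k * (x - θ) * u - u ^ 2 / 2) := by
          apply Real.exp_le_exp.mpr
          have e3 : k * (x - θ) * M ≤ k * (x - θ) * u :=
            mul_le_mul_of_nonneg_left huM.le (mul_nonneg hk0.le (by linarith))
          have e4 : u ^ 2 ≤ (M + 1) ^ 2 := by nlinarith
          linarith
        exact mul_le_mul h1 h2 (Real.exp_pos _).le (Real.rpow_nonneg hu0.le _)
      · exact hint.mono_set hsub
    calc c * Real.exp (k * (x - θ) * M - (M + 1) ^ 2 / 2)
        = c * Real.exp (k * (x - θ) * M - (M + 1) ^ 2 / 2)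
            * (volume (Ioc M (M + 1))).toReal := by rw [hvol, mul_one]
      _ ≤ _ := le_trans step2 step1
  -- Squeeze
  have hden_pos : ∀ x : ℝ, (0 : ℝ) <
      c * Real.exp (k * (x - θ) * M - (M + 1) ^ 2 / 2) := fun x =>
    mul_pos hc0 (Real.exp_pos _)
  apply squeeze_zero' (g := fun x =>
      Real.exp x / (c * Real.exp (k * (x - θ) * M - (M + 1) ^ 2 / 2)))
  · filter_upwards [eventually_ge_atTop θ, eventually_ge_atTop (Real.log c_s)]
      with x hx hx'
    have hnum : 0 ≤ Real.exp x - c_s := by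
      have := Real.exp_le_exp.mpr hx'
      rw [Real.exp_log hcs] at this
      linarith
    exact div_nonneg hnum (le_trans (hden_pos x).le (hFlb x hx))
  · filter_upwards [eventually_ge_atTop θ] with x hx
    exact div_le_div₀ (Real.exp_pos x).le (by linarith) (hden_pos x) (hFlb x hx)
  · have hexp : Tendsto (fun x : ℝ => (1 - k * M) * x + (k * M * θ + (M + 1) ^ 2 / 2))
        atTop atBot := by
      apply Tendsto.atBot_add _ tendsto_const_nhds
      apply Tendsto.const_mul_atTop_of_neg (by rw [hkM]; linarith) tendsto_id
    have := (Real.tendsto_exp_atBot.comp hexp).const_mul (1 / c)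
    rw [mul_zero] at this
    apply this.congr
    intro x
    simp only [Function.comp_apply]
    rw [show (1 - k * M) * x + (k * M * θ + (M + 1) ^ 2 / 2)
        = x - (k * (x - θ) * M - (M + 1) ^ 2 / 2) by ring, Real.exp_sub]
    field_simp
end

section
/- There exists a unique b* ∈ ℝ satisfying e^{b*}·F(b*) = (e^{b*} − c_s)·F'(b*). Moreover b* > x_s, b* > ln(c_s), the function x ↦ (e^x − c_s)/F(x) is strictly increasing on (−∞, b*) and strictly decreasing on (b*, +∞); in particular (e^x − c_s)/F(x) ≤ (e^{b*} − c_s)/F(b*) for all x ∈ ℝ. -/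
open Real MeasureTheory Set Filter

lemma stmt9_aux_integrable {q : ℝ} (hq : -1 < q) (c : ℝ) :
    IntegrableOn (fun u : ℝ => u ^ q * Real.exp (c * u - u ^ 2 / 2)) (Ioi 0) := by
  have hmeas : AEStronglyMeasurable (fun u : ℝ => u ^ q * Real.exp (c * u - u ^ 2 / 2))
      (volume.restrict (Ioi (0:ℝ))) := by
    apply ContinuousOn.aestronglyMeasurable _ measurableSet_Ioi
    intro u hu
    exact ((Real.continuousAt_rpow_const u q (Or.inl (ne_of_gt hu))).mul
      (Real.continuous_exp.continuousAt.comp (by fun_prop))).continuousWithinAt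
  refine Integrable.mono' ((integrableOn_rpow_mul_exp_neg_mul_sq (by norm_num : (0:ℝ) < 1/4) hq).const_mul
      (Real.exp (c ^ 2))) hmeas ?_
  filter_upwards [ae_restrict_mem measurableSet_Ioi] with u hu
  have hu0 : (0:ℝ) < u := hu
  rw [Real.norm_eq_abs, abs_of_nonneg (by positivity)]
  have h1 : c * u - u ^ 2 / 2 ≤ c ^ 2 + (-(1/4) * u ^ 2) := by nlinarith [sq_nonneg (c - u/2)]
  calc u ^ q * Real.exp (c * u - u ^ 2 / 2)
      ≤ u ^ q * Real.exp (c ^ 2 + (-(1/4) * u ^ 2)) := by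
        gcongr
    _ = Real.exp (c ^ 2) * (u ^ q * Real.exp (-(1/4) * u ^ 2)) := by
        rw [Real.exp_add]; ring

lemma stmt9_aux_pos {q : ℝ} (hq : -1 < q) (c : ℝ) :
    0 < ∫ u in Ioi (0:ℝ), u ^ q * Real.exp (c * u - u ^ 2 / 2) := by
  rw [MeasureTheory.setIntegral_pos_iff_support_of_nonneg_ae]
  · have : Ioi (0:ℝ) ⊆ Function.support (fun u : ℝ => u ^ q * Real.exp (c * u - u ^ 2 / 2)) ∩ Ioi 0 := by
      intro u hu
      have hu0 : (0:ℝ) < u := hu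
      exact ⟨by simp [Function.mem_support]; positivity, hu⟩
    calc (0:ENNReal) < volume (Ioi (0:ℝ)) := by simp
      _ ≤ _ := measure_mono this
  · filter_upwards [ae_restrict_mem measurableSet_Ioi] with u hu
    have hu0 : (0:ℝ) < u := hu
    positivity
  · exact stmt9_aux_integrable hq c

lemma stmt9_aux_meas (q c : ℝ) :
    AEStronglyMeasurable (fun u : ℝ => u ^ q * Real.exp (c * u - u ^ 2 / 2))
      (volume.restrict (Ioi (0:ℝ))) := by
  apply ContinuousOn.aestronglyMeasurable _ measurableSet_Ioi
  intro u hu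
  exact ((Real.continuousAt_rpow_const u q (Or.inl (ne_of_gt hu))).mul
    (Real.continuous_exp.continuousAt.comp (by fun_prop))).continuousWithinAt

lemma stmt9_aux_hasDeriv {q : ℝ} (hq : -1 < q) {a : ℝ} (ha : 0 < a) (θ x : ℝ) :
    HasDerivAt (fun y => ∫ u in Ioi (0:ℝ), u ^ q * Real.exp (a * (y - θ) * u - u ^ 2 / 2))
      (a * ∫ u in Ioi (0:ℝ), u ^ (q+1) * Real.exp (a * (x - θ) * u - u ^ 2 / 2)) x := by
  have hq1 : -1 < q + 1 := by linarith
  have key := hasDerivAt_integral_of_dominated_loc_of_deriv_le (μ := volume.restrict (Ioi (0:ℝ)))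
    (F := fun y u => u ^ q * Real.exp (a * (y - θ) * u - u ^ 2 / 2))
    (F' := fun y u => (a * u) * (u ^ q * Real.exp (a * (y - θ) * u - u ^ 2 / 2)))
    (x₀ := x) (s := Metric.ball x 1) (bound := fun u => a * (u ^ (q+1) * Real.exp ((a * (x - θ) + a) * u - u ^ 2 / 2)))
    (Metric.ball_mem_nhds x one_pos)
    (Eventually.of_forall fun y => stmt9_aux_meas q (a * (y - θ)))
    (stmt9_aux_integrable hq (a * (x - θ)))
    ?meas' ?bound ?bint ?diff
  case meas' =>
    exact (aestronglyMeasurable_id.const_mul a).restrict.mul (stmt9_aux_meas q (a * (x - θ)))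
  case bound =>
    filter_upwards [ae_restrict_mem measurableSet_Ioi] with u hu y hy
    have hu0 : (0:ℝ) < u := hu
    have hy1 : y < x + 1 := by
      have := abs_lt.mp (mem_ball_iff_norm.mp hy); linarith [this.1, this.2]
    rw [Real.norm_eq_abs, abs_of_nonneg (by positivity)]
    have huq : u ^ (q+1) = u ^ q * u := Real.rpow_add_one (ne_of_gt hu0) q
    rw [huq]
    have : a * (y - θ) * u - u ^ 2 / 2 ≤ (a * (x - θ) + a) * u - u ^ 2 / 2 := by
      nlinarith [mul_pos ha hu0]
    calc a * u * (u ^ q * Real.exp (a * (y - θ) * u - u ^ 2 / 2))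
        ≤ a * u * (u ^ q * Real.exp ((a * (x - θ) + a) * u - u ^ 2 / 2)) := by gcongr
      _ = a * (u ^ q * u * Real.exp ((a * (x - θ) + a) * u - u ^ 2 / 2)) := by ring
  case bint =>
    exact (stmt9_aux_integrable hq1 (a * (x - θ) + a)).const_mul a
  case diff =>
    filter_upwards [ae_restrict_mem measurableSet_Ioi] with u hu y hy
    have : HasDerivAt (fun y => a * (y - θ) * u - u ^ 2 / 2) (a * u) y := by
      simpa using (((hasDerivAt_id y).sub_const θ).const_mul a).mul_const u |>.sub_const (u ^ 2 / 2)
    have h2 := (this.exp).const_mul (u ^ q)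
    exact h2.congr_deriv (by ring)
  rcases key with ⟨-, hd⟩
  refine hd.congr_deriv (Eq.symm ?_)
  rw [← MeasureTheory.integral_const_mul]
  apply setIntegral_congr_fun measurableSet_Ioi
  intro u hu
  have hu0 : (0:ℝ) < u := hu
  simp only []
  rw [Real.rpow_add_one (ne_of_gt hu0) q]
  ring

lemma stmt9_aux_tendsto_zero (q c : ℝ) :
    Tendsto (fun u : ℝ => u ^ q * Real.exp (c * u - u ^ 2 / 2)) atTop (nhds 0) := by
  have hlim : Tendsto (fun u : ℝ => Real.exp (c ^ 2) * (u ^ q * Real.exp (-(1/4) * u ^ 2)))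
      atTop (nhds 0) := by
    have := (rpow_mul_exp_neg_mul_sq_isLittleO_exp_neg (by norm_num : (0:ℝ) < 1/4) q).tendsto_zero_of_tendsto
      (by have h := Real.tendsto_exp_neg_atTop_nhds_zero.comp (tendsto_id.const_mul_atTop (by norm_num : (0:ℝ) < 1/2)); simpa only [Function.comp_def, neg_mul, id] using h)
    simpa using this.const_mul (Real.exp (c ^ 2))
  apply squeeze_zero' _ _ hlim
  · filter_upwards [eventually_gt_atTop (0:ℝ)] with u hu; positivity
  · filter_upwards [eventually_gt_atTop (0:ℝ)] with u hu
    have h1 : c * u - u ^ 2 / 2 ≤ c ^ 2 + (-(1/4) * u ^ 2) := by nlinarith [sq_nonneg (c - u/2)]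
    calc u ^ q * Real.exp (c * u - u ^ 2 / 2)
        ≤ u ^ q * Real.exp (c ^ 2 + (-(1/4) * u ^ 2)) := by gcongr
      _ = Real.exp (c ^ 2) * (u ^ q * Real.exp (-(1/4) * u ^ 2)) := by rw [Real.exp_add]; ring

lemma stmt9_aux_ibp {q : ℝ} (hq : 0 < q) (c : ℝ) :
    q * (∫ u in Ioi (0:ℝ), u ^ (q-1) * Real.exp (c * u - u ^ 2 / 2))
      + c * (∫ u in Ioi (0:ℝ), u ^ q * Real.exp (c * u - u ^ 2 / 2))
      = ∫ u in Ioi (0:ℝ), u ^ (q+1) * Real.exp (c * u - u ^ 2 / 2) := by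
  set g : ℝ → ℝ := fun u => u ^ q * Real.exp (c * u - u ^ 2 / 2) with hg
  set D : ℝ → ℝ := fun u =>
    q * u ^ (q-1) * Real.exp (c * u - u ^ 2 / 2) + u ^ q * ((c - u) * Real.exp (c * u - u ^ 2 / 2))
    with hD
  have hq1 : (-1:ℝ) < q - 1 := by linarith
  have hq0 : (-1:ℝ) < q := by linarith
  have hq2 : (-1:ℝ) < q + 1 := by linarith
  have hderiv : ∀ u ∈ Ioi (0:ℝ), HasDerivAt g (D u) u := by
    intro u hu
    have h1 : HasDerivAt (fun u : ℝ => u ^ q) (q * u ^ (q-1)) u :=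
      Real.hasDerivAt_rpow_const (Or.inl (ne_of_gt hu))
    have h2 : HasDerivAt (fun u : ℝ => Real.exp (c * u - u ^ 2 / 2))
        ((c - u) * Real.exp (c * u - u ^ 2 / 2)) u := by
      have : HasDerivAt (fun u : ℝ => c * u - u ^ 2 / 2) (c - u) u := by
        have := ((hasDerivAt_id u).const_mul c).sub
          (((hasDerivAt_pow 2 u)).div_const 2)
        simpa [Pi.sub_def] using this
      simpa [mul_comm] using this.exp
    simpa [hD, hg, Pi.mul_def] using h1.mul h2
  have hDeq : (fun u => q * (u ^ (q-1) * Real.exp (c * u - u ^ 2 / 2))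
      + (c * (u ^ q * Real.exp (c * u - u ^ 2 / 2))
        - u ^ (q+1) * Real.exp (c * u - u ^ 2 / 2))) =ᵐ[volume.restrict (Ioi (0:ℝ))] D := by
    filter_upwards [ae_restrict_mem measurableSet_Ioi] with u hu
    have hu0 : (0:ℝ) < u := hu
    simp only [hD]
    rw [Real.rpow_add_one (ne_of_gt hu0) q]
    ring
  have hint : IntegrableOn D (Ioi (0:ℝ)) := by
    apply Integrable.congr _ hDeq
    exact (((stmt9_aux_integrable hq1 c).const_mul q).add
      (((stmt9_aux_integrable hq0 c).const_mul c).sub (stmt9_aux_integrable hq2 c)))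
  have hcont : ContinuousWithinAt g (Ici (0:ℝ)) 0 := by
    apply ContinuousWithinAt.mul
    · exact (Real.continuousAt_rpow_const 0 q (Or.inr (le_of_lt hq))).continuousWithinAt
    · exact (Real.continuous_exp.continuousAt.comp (by fun_prop)).continuousWithinAt
  have hibp := MeasureTheory.integral_Ioi_of_hasDerivAt_of_tendsto hcont hderiv hint
    (stmt9_aux_tendsto_zero q c)
  have hg0 : g 0 = 0 := by
    simp [hg, Real.zero_rpow (ne_of_gt hq)]
  rw [hg0, sub_zero] at hibp
  have hsplit : ∫ u in Ioi (0:ℝ), D u =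
      q * (∫ u in Ioi (0:ℝ), u ^ (q-1) * Real.exp (c * u - u ^ 2 / 2))
      + (c * (∫ u in Ioi (0:ℝ), u ^ q * Real.exp (c * u - u ^ 2 / 2))
        - ∫ u in Ioi (0:ℝ), u ^ (q+1) * Real.exp (c * u - u ^ 2 / 2)) := by
    calc ∫ u in Ioi (0:ℝ), D u
        = ∫ u in Ioi (0:ℝ), (q * (u ^ (q-1) * Real.exp (c * u - u ^ 2 / 2))
          + (c * (u ^ q * Real.exp (c * u - u ^ 2 / 2))
            - u ^ (q+1) * Real.exp (c * u - u ^ 2 / 2))) := (MeasureTheory.integral_congr_ae hDeq).symm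
      _ = _ := by
          have h2 : Integrable (fun u : ℝ => c * (u ^ q * Real.exp (c * u - u ^ 2 / 2))
              - u ^ (q+1) * Real.exp (c * u - u ^ 2 / 2)) (volume.restrict (Ioi 0)) :=
            ((stmt9_aux_integrable hq0 c).const_mul c).sub (stmt9_aux_integrable hq2 c)
          rw [MeasureTheory.integral_add ((stmt9_aux_integrable hq1 c).const_mul q) h2,
            MeasureTheory.integral_sub ((stmt9_aux_integrable hq0 c).const_mul c)
              (stmt9_aux_integrable hq2 c),
            MeasureTheory.integral_const_mul, MeasureTheory.integral_const_mul]
  rw [hibp] at hsplit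
  linarith [hsplit]

lemma stmt9_aux_tail {q a : ℝ} (hq : -1 < q) (ha : 0 < a) (θ R : ℝ) :
    ∃ x > R, 2 * (∫ u in Ioi (0:ℝ), u ^ q * Real.exp (a * (x - θ) * u - u ^ 2 / 2))
      ≤ a * ∫ u in Ioi (0:ℝ), u ^ (q+1) * Real.exp (a * (x - θ) * u - u ^ 2 / 2) := by
  set M : ℝ := 4 / a with hM
  have hM0 : 0 < M := by positivity
  -- constants
  set C : ℝ := ∫ u in Ioc (0:ℝ) M, u ^ q with hC
  set m : ℝ := min ((2*M) ^ q) ((2*M+1) ^ q) with hm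
  have hm0 : 0 < m := lt_min (by positivity) (by positivity)
  set D : ℝ := (2*M+1) ^ 2 / 2 with hDdef
  have hCint : IntegrableOn (fun u : ℝ => u ^ q) (Ioc (0:ℝ) M) := by
    exact (intervalIntegrable_iff_integrableOn_Ioc_of_le hM0.le).mp
      (intervalIntegral.intervalIntegrable_rpow' hq)
  have hC0 : 0 < C := by
    rw [hC, MeasureTheory.setIntegral_pos_iff_support_of_nonneg_ae]
    · have hsub2 : Ioc (0:ℝ) M ⊆ Function.support (fun u : ℝ => u ^ q) ∩ Ioc 0 M := by
        intro u hu
        refine ⟨?_, hu⟩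
        have hu0 : (0:ℝ) < u := hu.1
        simp only [Function.mem_support]
        exact ne_of_gt (by positivity)
      calc (0:ENNReal) < volume (Ioc (0:ℝ) M) := by simp [Real.volume_Ioc, hM0]
        _ ≤ _ := measure_mono hsub2
    · filter_upwards [ae_restrict_mem measurableSet_Ioc] with u hu
      have : (0:ℝ) < u := hu.1
      positivity
    · exact hCint
  -- choose the point
  set x : ℝ := max (R + 1) (θ + (D + |Real.log (C/m)| + 1) / (a * M)) with hx
  refine ⟨x, lt_of_lt_of_le (by linarith) (le_max_left _ _), ?_⟩
  set c : ℝ := a * (x - θ) with hc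
  have hcM : D + |Real.log (C/m)| + 1 ≤ M * c := by
    have h1 : θ + (D + |Real.log (C/m)| + 1) / (a * M) ≤ x := le_max_right _ _
    have h2 : (D + |Real.log (C/m)| + 1) / (a * M) ≤ x - θ := by linarith
    calc D + |Real.log (C/m)| + 1 = ((D + |Real.log (C/m)| + 1) / (a * M)) * (a * M) := by
          field_simp
      _ ≤ (x - θ) * (a * M) := by
          apply mul_le_mul_of_nonneg_right h2 (by positivity)
      _ = M * c := by rw [hc]; ring
  have hc0 : 0 < c := by
    have hD0 : 0 < D := by positivity
    nlinarith [abs_nonneg (Real.log (C/m)), hM0]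
  -- notation for the weight
  set w : ℝ → ℝ := fun u => u ^ q * Real.exp (c * u - u ^ 2 / 2) with hw
  have hwint : IntegrableOn w (Ioi 0) := stmt9_aux_integrable hq c
  have hwnn : ∀ u : ℝ, 0 < u → 0 ≤ w u := fun u hu => by rw [hw]; positivity
  set S : ℝ := ∫ u in Ioi M, w u with hS
  -- lower bound for S
  have hSlow : m * Real.exp (2*M*c - D) ≤ S := by
    have hsub : Ioc (2*M) (2*M+1) ⊆ Ioi M := fun u hu => by
      have := hu.1; simp only [mem_Ioi]; nlinarith
    have h1 : ∫ u in Ioc (2*M) (2*M+1), (m * Real.exp (2*M*c - D)) ≤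
        ∫ u in Ioc (2*M) (2*M+1), w u := by
      apply MeasureTheory.setIntegral_mono_on
      · exact integrableOn_const (by simp [Real.volume_Ioc])
      · exact hwint.mono_set (fun u hu => lt_trans hM0 (lt_of_le_of_lt (by linarith) hu.1) : Ioc (2*M) (2*M+1) ⊆ Ioi 0)
      · exact measurableSet_Ioc
      · intro u hu
        have hu1 : 2*M < u := hu.1
        have hu2 : u ≤ 2*M+1 := hu.2
        have hu0 : (0:ℝ) < u := by nlinarith
        have hrp : m ≤ u ^ q := by
          rcases le_total 0 q with h | h
          · exact le_trans (min_le_left _ _) (Real.rpow_le_rpow (by nlinarith) hu1.le h)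
          · exact le_trans (min_le_right _ _) (Real.rpow_le_rpow_of_nonpos hu0 hu2 h)
        have hexp : Real.exp (2*M*c - D) ≤ Real.exp (c * u - u ^ 2 / 2) := by
          apply Real.exp_le_exp.mpr
          rw [hDdef]
          have : 2*M*c ≤ c * u := by nlinarith
          nlinarith
        calc m * Real.exp (2*M*c - D) ≤ u ^ q * Real.exp (c * u - u ^ 2 / 2) := by
              apply mul_le_mul hrp hexp (Real.exp_pos _).le (by positivity)
          _ = w u := rfl
    have h2 : ∫ u in Ioc (2*M) (2*M+1), w u ≤ S := by
      apply MeasureTheory.setIntegral_mono_set (hwint.mono_set (fun u hu => lt_trans hM0 hu : Ioi M ⊆ Ioi 0))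
      · filter_upwards [ae_restrict_mem measurableSet_Ioi] with u hu
        exact hwnn u (lt_trans hM0 hu)
      · exact Filter.Eventually.of_forall hsub
    have h3 : ∫ u in Ioc (2*M) (2*M+1), (m * Real.exp (2*M*c - D)) = m * Real.exp (2*M*c - D) := by
      rw [MeasureTheory.setIntegral_const]
      simp [Real.volume_Ioc]
    linarith [h1, h2, h3.symm.le]
  -- upper bound for the near part
  have hnear : ∫ u in Ioc (0:ℝ) M, w u ≤ C * Real.exp (c * M) := by
    have h1 : ∫ u in Ioc (0:ℝ) M, w u ≤ ∫ u in Ioc (0:ℝ) M, u ^ q * Real.exp (c * M) := by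
      apply MeasureTheory.setIntegral_mono_on
      · exact hwint.mono_set Ioc_subset_Ioi_self
      · exact hCint.mul_const _
      · exact measurableSet_Ioc
      · intro u hu
        rw [hw]
        apply mul_le_mul_of_nonneg_left _ (by have := hu.1; positivity)
        apply Real.exp_le_exp.mpr
        have h1 : c * u ≤ c * M := mul_le_mul_of_nonneg_left hu.2 hc0.le
        nlinarith [sq_nonneg u]
    rw [MeasureTheory.integral_mul_const] at h1
    exact h1
  -- comparison: near part ≤ S
  have hCS : ∫ u in Ioc (0:ℝ) M, w u ≤ S := by
    have hlog : C / m ≤ Real.exp (|Real.log (C/m)|) := by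
      calc C / m = Real.exp (Real.log (C/m)) := (Real.exp_log (by positivity)).symm
        _ ≤ Real.exp (|Real.log (C/m)|) := Real.exp_le_exp.mpr (le_abs_self _)
    have h4 : C ≤ m * Real.exp (M*c - D) := by
      calc C = m * (C/m) := by field_simp
        _ ≤ m * Real.exp (|Real.log (C/m)|) := mul_le_mul_of_nonneg_left hlog hm0.le
        _ ≤ m * Real.exp (M*c - D) :=
            mul_le_mul_of_nonneg_left (Real.exp_le_exp.mpr (by linarith [hcM, abs_nonneg (Real.log (C/m))])) hm0.le
    refine le_trans hnear (le_trans ?_ hSlow)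
    calc C * Real.exp (c * M) ≤ (m * Real.exp (M*c - D)) * Real.exp (c * M) :=
          mul_le_mul_of_nonneg_right h4 (Real.exp_pos _).le
      _ = m * Real.exp (2*M*c - D) := by rw [mul_assoc, ← Real.exp_add]; congr 2; ring
  -- split the full integral
  have hsplit : ∫ u in Ioi (0:ℝ), w u = (∫ u in Ioc (0:ℝ) M, w u) + S := by
    rw [hS, ← MeasureTheory.setIntegral_union (Ioc_disjoint_Ioi le_rfl) measurableSet_Ioi
      (hwint.mono_set Ioc_subset_Ioi_self)
      (hwint.mono_set (fun u hu => lt_trans hM0 hu : Ioi M ⊆ Ioi 0)),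
      Ioc_union_Ioi_eq_Ioi hM0.le]
  -- lower bound for the (q+1) integral
  have hbig : M * S ≤ ∫ u in Ioi (0:ℝ), u ^ (q+1) * Real.exp (c * u - u ^ 2 / 2) := by
    have h1 : ∫ u in Ioi M, (M * w u) ≤ ∫ u in Ioi M, u ^ (q+1) * Real.exp (c * u - u ^ 2 / 2) := by
      apply MeasureTheory.setIntegral_mono_on
      · exact (hwint.mono_set (fun u hu => lt_trans hM0 hu : Ioi M ⊆ Ioi 0)).const_mul M
      · exact (stmt9_aux_integrable (by linarith : (-1:ℝ) < q+1) c).mono_set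
          (fun u hu => lt_trans hM0 hu : Ioi M ⊆ Ioi 0)
      · exact measurableSet_Ioi
      · intro u hu
        have hu0 : 0 < u := lt_trans hM0 hu
        rw [hw, Real.rpow_add_one (ne_of_gt hu0)]
        have : M * (u ^ q * Real.exp (c * u - u ^ 2 / 2)) = (M * u ^ q) * Real.exp (c*u - u^2/2) := by ring
        rw [this]
        have : u ^ q * u * Real.exp (c * u - u ^ 2 / 2) = (u * u ^ q) * Real.exp (c*u - u^2/2) := by ring
        rw [this]
        apply mul_le_mul_of_nonneg_right _ (Real.exp_pos _).le
        apply mul_le_mul_of_nonneg_right (le_of_lt hu) (by positivity)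
    have h2 : ∫ u in Ioi M, u ^ (q+1) * Real.exp (c * u - u ^ 2 / 2)
        ≤ ∫ u in Ioi (0:ℝ), u ^ (q+1) * Real.exp (c * u - u ^ 2 / 2) := by
      apply MeasureTheory.setIntegral_mono_set (stmt9_aux_integrable (by linarith : (-1:ℝ) < q+1) c)
      · filter_upwards [ae_restrict_mem measurableSet_Ioi] with u hu
        have : (0:ℝ) < u := hu
        positivity
      · exact Filter.Eventually.of_forall (fun u hu => lt_trans hM0 hu)
    have h3 : ∫ u in Ioi M, (M * w u) = M * S := by rw [hS, MeasureTheory.integral_const_mul]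
    linarith
  -- finish
  have hMc : a * M = 4 := by rw [hM]; field_simp
  have hfin : 2 * ((∫ u in Ioc (0:ℝ) M, w u) + S) ≤ 4 * S := by linarith
  calc 2 * (∫ u in Ioi (0:ℝ), u ^ q * Real.exp (a * (x - θ) * u - u ^ 2 / 2))
      = 2 * ((∫ u in Ioc (0:ℝ) M, w u) + S) := by rw [← hsplit]
    _ ≤ 4 * S := hfin
    _ = a * (M * S) := by rw [← hMc]; ring
    _ ≤ a * ∫ u in Ioi (0:ℝ), u ^ (q+1) * Real.exp (a * (x - θ) * u - u ^ 2 / 2) := by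
        exact mul_le_mul_of_nonneg_left hbig ha.le

/-- There is a unique b* with e^{b*}F(b*) = (e^{b*} − c_s)F'(b*);
moreover b* > x_s, b* > ln c_s, x ↦ (e^x − c_s)/F(x) is strictly increasing on
(−∞, b*), strictly decreasing on (b*, +∞), and maximized at b*. -/
theorem stmt9
    (μ σ θ r c_s c_b : ℝ)
    (hμ : 0 < μ) (hσ : 0 < σ) (hr : 0 < r) (hcs : 0 < c_s) (hcb : 0 < c_b)
    (F : ℝ → ℝ)
    (hF : ∀ x : ℝ, F x = ∫ u in Ioi (0:ℝ),
        u ^ (r / μ - 1) * Real.exp (Real.sqrt (2 * μ / σ ^ 2) * (x - θ) * u - u ^ 2 / 2))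
    (f_s : ℝ → ℝ)
    (hfs : ∀ x : ℝ, f_s x = (μ * θ + σ ^ 2 / 2 - r) - μ * x + r * c_s * Real.exp (-x))
    (x_s : ℝ) (hxs : f_s x_s = 0) (hxs_uniq : ∀ y, f_s y = 0 → y = x_s) :
    ∃ b : ℝ, (Real.exp b * F b = (Real.exp b - c_s) * deriv F b) ∧
      (∀ b', Real.exp b' * F b' = (Real.exp b' - c_s) * deriv F b' → b' = b) ∧
      x_s < b ∧ Real.log c_s < b ∧
      StrictMonoOn (fun x => (Real.exp x - c_s) / F x) (Iio b) ∧
      StrictAntiOn (fun x => (Real.exp x - c_s) / F x) (Ioi b) ∧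
      (∀ x, (Real.exp x - c_s) / F x ≤ (Real.exp b - c_s) / F b) := by
  have hσ2 : (0:ℝ) < 2 * μ / σ ^ 2 := by positivity
  set a : ℝ := Real.sqrt (2 * μ / σ ^ 2) with ha_def
  have ha : 0 < a := Real.sqrt_pos.mpr hσ2
  have ha2 : a ^ 2 = 2 * μ / σ ^ 2 := Real.sq_sqrt hσ2.le
  set p : ℝ := r / μ - 1 with hp_def
  have hp : (-1:ℝ) < p := by
    have : 0 < r / μ := div_pos hr hμ
    simp only [hp_def]; linarith
  have hp1 : p + 1 = r / μ := by simp [hp_def]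
  have hp1pos : 0 < p + 1 := by rw [hp1]; positivity
  set J : ℝ → ℝ → ℝ := fun s x => ∫ u in Ioi (0:ℝ), u ^ s * Real.exp (a * (x - θ) * u - u ^ 2 / 2)
    with hJ_def
  have hFfun : F = fun x => J p x := funext hF
  set F₁ : ℝ → ℝ := fun x => a * J (p+1) x with hF1_def
  set F₂ : ℝ → ℝ := fun x => (2 * μ / σ ^ 2) * J (p+2) x with hF2_def
  -- derivatives
  have hFd : ∀ x, HasDerivAt F (F₁ x) x := by
    intro x; rw [hFfun]; exact stmt9_aux_hasDeriv hp ha θ x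
  have hF1d : ∀ x, HasDerivAt F₁ (F₂ x) x := by
    intro x
    have h := (stmt9_aux_hasDeriv (by linarith : (-1:ℝ) < p + 1) ha θ x).const_mul a
    have he : p + 1 + 1 = p + 2 := by ring
    rw [he] at h
    have : a * (a * J (p+2) x) = (2 * μ / σ ^ 2) * J (p+2) x := by
      rw [← ha2]; ring
    rw [this] at h
    exact h
  have hderivF : ∀ x, deriv F x = F₁ x := fun x => (hFd x).deriv
  -- positivity
  have hFpos : ∀ x, 0 < F x := fun x => by rw [hFfun]; exact stmt9_aux_pos hp _
  have hF1pos : ∀ x, 0 < F₁ x := fun x => mul_pos ha (stmt9_aux_pos (by linarith) _)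
  -- the ODE
  have hODE : ∀ x, σ ^ 2 / 2 * F₂ x = r * F x + μ * (x - θ) * F₁ x := by
    intro x
    have h := stmt9_aux_ibp hp1pos (a * (x - θ))
    have e1 : p + 1 - 1 = p := by ring
    have e2 : p + 1 + 1 = p + 2 := by ring
    rw [e1, e2] at h
    have hμr : μ * (p + 1) = r := by rw [hp1]; field_simp
    have h' : (p+1) * J p x + a * (x - θ) * J (p+1) x = J (p+2) x := h
    rw [hFfun, hF1_def, hF2_def]
    simp only []
    have hσ0 : σ ^ 2 ≠ 0 := by positivity
    field_simp
    linear_combination (-μ) * h' + (J p x) * hμr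
  -- H and Φ
  set H : ℝ → ℝ := fun x => Real.exp x * F x - (Real.exp x - c_s) * F₁ x with hH_def
  set Q : ℝ → ℝ := fun x => μ * (x - θ) ^ 2 / σ ^ 2 with hQ_def
  set Φ : ℝ → ℝ := fun x => H x * Real.exp (-(Q x)) with hΦ_def
  have hHd : ∀ x, HasDerivAt H (Real.exp x * F x - (Real.exp x - c_s) * F₂ x) x := by
    intro x
    have h1 := ((Real.hasDerivAt_exp x).mul (hFd x)).sub
      (((Real.hasDerivAt_exp x).sub_const c_s).mul (hF1d x))
    exact h1.congr_deriv (by ring)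
  have hQd : ∀ x, HasDerivAt Q (2 * μ * (x - θ) / σ ^ 2) x := by
    intro x
    have h : HasDerivAt (fun y : ℝ => μ * (y - θ) ^ 2 / σ ^ 2)
        (μ * (2 * (x - θ) ^ 1 * 1) / σ ^ 2) x := by
      exact ((((hasDerivAt_id x).sub_const θ).pow 2).const_mul μ).div_const (σ ^ 2)
    have h2 : μ * (2 * (x - θ) ^ 1 * 1) / σ ^ 2 = 2 * μ * (x - θ) / σ ^ 2 := by ring
    rw [h2] at h
    exact h
  have hHval : ∀ x, H x = Real.exp x * F x - (Real.exp x - c_s) * F₁ x := fun _ => rfl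
  have hJval : ∀ s x, J s x = ∫ u in Ioi (0:ℝ), u ^ s * Real.exp (a * (x - θ) * u - u ^ 2 / 2) :=
    fun _ _ => rfl
  have hFval : ∀ x, F x = J p x := fun x => hF x
  have hF1val : ∀ x, F₁ x = a * J (p+1) x := fun _ => rfl
  have hQval : ∀ x, Q x = μ * (x - θ) ^ 2 / σ ^ 2 := fun _ => rfl
  have hΦfun : Φ = fun y => H y * Real.exp (-(Q y)) := rfl
  have hΦval : ∀ x, Φ x = H x * Real.exp (-(Q x)) := fun _ => rfl
  clear_value Φ Q H F₂ F₁ J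
  have hΦd : ∀ x, HasDerivAt Φ ((2 * Real.exp x * F x * f_s x / σ ^ 2) * Real.exp (-(Q x))) x := by
    intro x
    have h := (hHd x).mul ((hQd x).neg.exp)
    rw [hHval x] at h
    have hσ0 : σ ^ 2 ≠ 0 := by positivity
    have hode := hODE x
    have hexp : Real.exp (-x) * Real.exp x = 1 := by rw [← Real.exp_add]; simp
    have hN : σ ^ 2 * (σ ^ 2 : ℝ)⁻¹ = 1 := mul_inv_cancel₀ hσ0
    have key' : (Real.exp x * F x - (Real.exp x - c_s) * F₂ x) * Real.exp (-(Q x))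
        + (Real.exp x * F x - (Real.exp x - c_s) * F₁ x) * (Real.exp (-(Q x)) * -(2 * μ * (x - θ) / σ ^ 2))
        = (2 * Real.exp x * F x * f_s x / σ ^ 2) * Real.exp (-(Q x)) := by
      rw [hfs x]
      linear_combination (-(2*(Real.exp x - c_s)) * Real.exp (-(Q x)) * (σ^2:ℝ)⁻¹) * hode
        + (-(2*r*c_s*(F x)) * Real.exp (-(Q x)) * (σ^2:ℝ)⁻¹) * hexp
        + (-((Real.exp x * F x - (Real.exp x - c_s) * F₂ x) * Real.exp (-(Q x)))) * hN
    rw [hΦfun, ← key']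
    exact h
  -- f_s : strictly decreasing with unique root x_s
  have hfsfun : f_s = fun x => (μ * θ + σ ^ 2 / 2 - r) - μ * x + r * c_s * Real.exp (-x) :=
    funext hfs
  have hfsd : ∀ x, HasDerivAt f_s (-μ + r * c_s * (-Real.exp (-x))) x := by
    intro x
    rw [hfsfun]
    have h1 : HasDerivAt (fun x : ℝ => (μ * θ + σ ^ 2 / 2 - r) - μ * x) (-μ) x := by
      simpa [Pi.sub_def] using (hasDerivAt_const x (μ * θ + σ ^ 2 / 2 - r)).sub ((hasDerivAt_id x).const_mul μ)
    have h2 : HasDerivAt (fun x : ℝ => Real.exp (-x)) (-Real.exp (-x)) x := by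
      simpa using ((hasDerivAt_id x).neg).exp
    simpa [Pi.add_def] using h1.add (h2.const_mul (r * c_s))
  have hfs_anti : StrictAnti f_s := by
    apply strictAnti_of_deriv_neg
    intro x
    rw [(hfsd x).deriv]
    have := Real.exp_pos (-x)
    nlinarith [mul_pos (mul_pos hr hcs) this]
  have hfs_pos : ∀ x, x < x_s → 0 < f_s x := fun x hx => hxs ▸ hfs_anti hx
  have hfs_neg : ∀ x, x_s < x → f_s x < 0 := fun x hx => hxs ▸ hfs_anti hx
  -- Φ monotone on Iic x_s, antitone on Ici x_s
  have hΦdiff : Differentiable ℝ Φ := fun x => (hΦd x).differentiableAt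
  have hΦmono : StrictMonoOn Φ (Iic x_s) := by
    apply strictMonoOn_of_deriv_pos (convex_Iic x_s) hΦdiff.continuous.continuousOn
    intro x hx
    rw [interior_Iic] at hx
    rw [(hΦd x).deriv]
    have h1 : 0 < f_s x := hfs_pos x hx
    have h2 : 0 < F x := hFpos x
    have h3 := Real.exp_pos x
    have h4 := Real.exp_pos (-(Q x))
    have h5 : (0:ℝ) < σ ^ 2 := by positivity
    exact mul_pos (div_pos (by nlinarith [mul_pos (mul_pos h3 h2) h1]) h5) h4
  have hΦanti : StrictAntiOn Φ (Ici x_s) := by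
    apply strictAntiOn_of_deriv_neg (convex_Ici x_s) hΦdiff.continuous.continuousOn
    intro x hx
    rw [interior_Ici] at hx
    rw [(hΦd x).deriv]
    have h1 : f_s x < 0 := hfs_neg x hx
    have h2 : 0 < F x := hFpos x
    have h3 := Real.exp_pos x
    have h4 := Real.exp_pos (-(Q x))
    have h5 : (0:ℝ) < σ ^ 2 := by positivity
    exact mul_neg_of_neg_of_pos (div_neg_of_neg_of_pos
      (by nlinarith [mul_neg_of_pos_of_neg (mul_pos h3 h2) h1]) h5) h4
  -- H > 0 for x ≤ log c_s
  have hHlow : ∀ x, x ≤ Real.log c_s → 0 < H x := by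
    intro x hx
    have hex : Real.exp x ≤ c_s := by
      calc Real.exp x ≤ Real.exp (Real.log c_s) := Real.exp_le_exp.mpr hx
        _ = c_s := Real.exp_log hcs
    rw [hHval x]
    nlinarith [mul_nonneg (sub_nonneg.mpr hex) (hF1pos x).le,
      mul_pos (Real.exp_pos x) (hFpos x)]
  have hΦpos_low : ∀ x, x ≤ Real.log c_s → 0 < Φ x := fun x hx => by
    rw [hΦval x]; exact mul_pos (hHlow x hx) (Real.exp_pos _)
  set y : ℝ := max x_s (Real.log c_s) with hy_def
  have hΦy : 0 < Φ y :=  by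
    rcases le_or_gt x_s (Real.log c_s) with h | h
    · rw [hy_def, max_eq_right h]; exact hΦpos_low _ le_rfl
    · rw [hy_def, max_eq_left h.le]
      have hm := hΦmono (mem_Iic.mpr h.le) (mem_Iic.mpr le_rfl) h
      have := hΦpos_low (Real.log c_s) le_rfl
      linarith
  -- point where H is negative
  obtain ⟨x₀, hx₀gt, hx₀tail⟩ := stmt9_aux_tail hp ha θ (max y (Real.log (2 * c_s)))
  rw [← hJval p x₀, ← hJval (p+1) x₀] at hx₀tail
  have htail2 : 2 * F x₀ ≤ F₁ x₀ := by rw [hFval x₀, hF1val x₀]; exact hx₀tail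
  have hHx0 : H x₀ < 0 := by
    have h2cs : 2 * c_s < Real.exp x₀ := by
      have hlt : Real.log (2 * c_s) < x₀ := lt_of_le_of_lt (le_max_right _ _) hx₀gt
      calc 2 * c_s = Real.exp (Real.log (2 * c_s)) := (Real.exp_log (by positivity)).symm
        _ < Real.exp x₀ := Real.exp_lt_exp.mpr hlt
    rw [hHval x₀]
    have key1 : Real.exp x₀ * (2 * F x₀) ≤ Real.exp x₀ * F₁ x₀ :=
      mul_le_mul_of_nonneg_left htail2 (Real.exp_pos x₀).le
    have key2 : c_s * F₁ x₀ < (Real.exp x₀ / 2) * F₁ x₀ :=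
      mul_lt_mul_of_pos_right (by linarith) (hF1pos x₀)
    nlinarith
  have hΦx0 : Φ x₀ < 0 := by
    rw [hΦval x₀]; exact mul_neg_of_neg_of_pos hHx0 (Real.exp_pos _)
  have hyx0 : y < x₀ := lt_of_le_of_lt (le_max_left _ _) hx₀gt
  -- IVT gives the zero b
  obtain ⟨b, hbmem, hΦb⟩ : ∃ b ∈ Ioo y x₀, Φ b = 0 := by
    have hsub := intermediate_value_Ioo' hyx0.le hΦdiff.continuous.continuousOn
    obtain ⟨b, hb, hb0⟩ := hsub (show (0:ℝ) ∈ Ioo (Φ x₀) (Φ y) from ⟨hΦx0, hΦy⟩)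
    exact ⟨b, hb, hb0⟩
  have hHb : H b = 0 := by
    have h := hΦb
    rw [hΦval b] at h
    exact (mul_eq_zero.mp h).resolve_right (Real.exp_ne_zero _)
  have hxsb : x_s < b := lt_of_le_of_lt (le_max_left _ _) hbmem.1
  have hlogb : Real.log c_s < b := lt_of_le_of_lt (le_max_right _ _) hbmem.1
  have hbIci : b ∈ Ici x_s := mem_Ici.mpr hxsb.le
  -- sign of Φ and H
  have hΦposIio : ∀ x, x < b → 0 < Φ x := by
    intro x hx
    rcases le_or_gt x (Real.log c_s) with h | h
    · exact hΦpos_low x h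
    rcases le_or_gt x x_s with h2 | h2
    · have hm := hΦmono (mem_Iic.mpr (le_trans h.le h2)) (mem_Iic.mpr h2) h
      have := hΦpos_low (Real.log c_s) le_rfl
      linarith
    · have hm := hΦanti (mem_Ici.mpr h2.le) hbIci hx
      rw [hΦb] at hm
      exact hm
  have hΦnegIoi : ∀ x, b < x → Φ x < 0 := by
    intro x hx
    have hm := hΦanti hbIci (mem_Ici.mpr (le_trans hxsb.le hx.le)) hx
    rw [hΦb] at hm
    exact hm
  have hHsign : ∀ x, H x = Φ x * Real.exp (Q x) := by
    intro x
    rw [hΦval x, mul_assoc, ← Real.exp_add]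
    simp
  have hHpos : ∀ x, x < b → 0 < H x := fun x hx => by
    rw [hHsign x]; exact mul_pos (hΦposIio x hx) (Real.exp_pos _)
  have hHneg : ∀ x, b < x → H x < 0 := fun x hx => by
    rw [hHsign x]; exact mul_neg_of_neg_of_pos (hΦnegIoi x hx) (Real.exp_pos _)
  -- the ratio function
  have hGd : ∀ x, HasDerivAt (fun x => (Real.exp x - c_s) / F x) (H x / (F x) ^ 2) x := by
    intro x
    have h := ((Real.hasDerivAt_exp x).sub_const c_s).div (hFd x) (ne_of_gt (hFpos x))
    rw [hHval x]
    exact h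
  have hGdiff : Differentiable ℝ (fun x => (Real.exp x - c_s) / F x) :=
    fun x => (hGd x).differentiableAt
  have hGcont : Continuous (fun x => (Real.exp x - c_s) / F x) := hGdiff.continuous
  have hGmono : StrictMonoOn (fun x => (Real.exp x - c_s) / F x) (Iic b) := by
    apply strictMonoOn_of_deriv_pos (convex_Iic b) hGcont.continuousOn
    intro x hx
    rw [interior_Iic] at hx
    rw [(hGd x).deriv]
    exact div_pos (hHpos x hx) (pow_pos (hFpos x) 2)
  have hGanti : StrictAntiOn (fun x => (Real.exp x - c_s) / F x) (Ici b) := by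
    apply strictAntiOn_of_deriv_neg (convex_Ici b) hGcont.continuousOn
    intro x hx
    rw [interior_Ici] at hx
    rw [(hGd x).deriv]
    exact div_neg_of_neg_of_pos (hHneg x hx) (pow_pos (hFpos x) 2)
  -- conclusion
  refine ⟨b, ?_, ?_, hxsb, hlogb, hGmono.mono Iio_subset_Iic_self,
    hGanti.mono Ioi_subset_Ici_self, ?_⟩
  · rw [hderivF b]
    have h := hHb
    rw [hHval b] at h
    linarith
  · intro b' hb'
    rw [hderivF b'] at hb'
    have hHb' : H b' = 0 := by rw [hHval b']; linarith
    rcases lt_trichotomy b' b with h | h | h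
    · exact absurd hHb' (ne_of_gt (hHpos b' h))
    · exact h
    · exact absurd hHb' (ne_of_lt (hHneg b' h))
  · intro x
    rcases lt_trichotomy x b with h | h | h
    · exact (hGmono (mem_Iic.mpr h.le) (mem_Iic.mpr le_rfl) h).le
    · rw [h]
    · exact (hGanti (mem_Ici.mpr le_rfl) (mem_Ici.mpr h.le) h).le
end

section
/- The derivative H'(z) tends to 0 as z → +∞. -/
open Real MeasureTheory Set Filter

noncomputable def Jker (p t : ℝ) : ℝ → ℝ := fun u => u ^ p * Real.exp (t * u - u ^ 2 / 2)

noncomputable def J (p t : ℝ) : ℝ := ∫ u in Ioi (0:ℝ), Jker p t u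

lemma Jker_meas (p t : ℝ) : Measurable (Jker p t) := by
  unfold Jker
  fun_prop

lemma Jker_nonneg (p t : ℝ) {u : ℝ} (hu : 0 ≤ u) : 0 ≤ Jker p t u :=
  mul_nonneg (Real.rpow_nonneg hu p) (Real.exp_pos _).le

lemma J_integrable {p : ℝ} (hp : -1 < p) (t : ℝ) : IntegrableOn (Jker p t) (Ioi 0) := by
  have hg : Integrable (fun u : ℝ => Real.exp (t ^ 2) * (u ^ p * Real.exp (-(4⁻¹ : ℝ) * u ^ 2))) :=
    (integrable_rpow_mul_exp_neg_mul_sq (by norm_num) hp).const_mul _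
  refine Integrable.mono' hg.integrableOn ((Jker_meas p t).aestronglyMeasurable) ?_
  filter_upwards [ae_restrict_mem measurableSet_Ioi] with u hu
  have hu0 : (0:ℝ) < u := hu
  rw [Real.norm_of_nonneg (Jker_nonneg p t hu0.le)]
  unfold Jker
  rw [mul_comm (Real.exp (t ^ 2)) _, mul_assoc, ← Real.exp_add]
  refine mul_le_mul_of_nonneg_left (Real.exp_le_exp.2 ?_) (Real.rpow_nonneg hu0.le p)
  nlinarith [sq_nonneg (t - u / 2)]

lemma J_pos {p : ℝ} (hp : -1 < p) (t : ℝ) : 0 < J p t := by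
  rw [J, setIntegral_pos_iff_support_of_nonneg_ae ?_ (J_integrable hp t)]
  · have hsub : Ioi (0:ℝ) ⊆ Function.support (Jker p t) ∩ Ioi 0 := by
      intro u hu
      refine ⟨?_, hu⟩
      have hu0 : (0:ℝ) < u := hu
      exact ne_of_gt (mul_pos (Real.rpow_pos_of_pos hu0 p) (Real.exp_pos _))
    calc (0:ENNReal) < volume (Ioi (0:ℝ)) := by simp [Real.volume_Ioi]
    _ ≤ _ := measure_mono hsub
  · filter_upwards [ae_restrict_mem measurableSet_Ioi] with u hu
    exact Jker_nonneg p t (le_of_lt hu)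

lemma J_lb {p : ℝ} (hp : -1 < p) {c t : ℝ} (hc : 0 < c) (ht : 0 ≤ t) :
    min (c ^ p) ((c + 1) ^ p) * Real.exp (-(c + 1) ^ 2 / 2) * Real.exp (t * c) ≤ J p t := by
  set m := min (c ^ p) ((c + 1) ^ p) * Real.exp (-(c + 1) ^ 2 / 2) with hm
  have key : ∀ u ∈ Ioc c (c + 1), m * Real.exp (t * c) ≤ Jker p t u := by
    intro u hu
    have hu0 : 0 < u := lt_trans hc hu.1
    have h1 : min (c ^ p) ((c + 1) ^ p) ≤ u ^ p := by
      rcases le_or_gt 0 p with hp0 | hp0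
      · exact le_trans (min_le_left _ _) (Real.rpow_le_rpow hc.le hu.1.le hp0)
      · exact le_trans (min_le_right _ _) (Real.rpow_le_rpow_of_nonpos hu0 hu.2 hp0.le)
    have h2 : Real.exp (-(c + 1) ^ 2 / 2) * Real.exp (t * c) ≤ Real.exp (t * u - u ^ 2 / 2) := by
      rw [← Real.exp_add]
      refine Real.exp_le_exp.2 ?_
      have : t * c ≤ t * u := mul_le_mul_of_nonneg_left hu.1.le ht
      nlinarith [hu.2, hu0.le]
    calc m * Real.exp (t * c) = min (c ^ p) ((c + 1) ^ p) *
          (Real.exp (-(c + 1) ^ 2 / 2) * Real.exp (t * c)) := by rw [hm]; ring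
      _ ≤ u ^ p * Real.exp (t * u - u ^ 2 / 2) := by
          refine mul_le_mul h1 h2 (by positivity) ?_
          exact Real.rpow_nonneg hu0.le p
      _ = Jker p t u := rfl
  have hsub : Ioc c (c + 1) ⊆ Ioi (0:ℝ) := fun u hu => lt_trans hc hu.1
  have h3 : ∫ u in Ioc c (c + 1), Jker p t u ≤ J p t := by
    refine setIntegral_mono_set (J_integrable hp t) ?_ (HasSubset.Subset.eventuallyLE hsub)
    filter_upwards [ae_restrict_mem measurableSet_Ioi] with u hu
    exact Jker_nonneg p t (le_of_lt hu)
  have h4 := setIntegral_ge_of_const_le_real (μ := volume) measurableSet_Ioc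
      (by rw [Real.volume_Ioc]; exact ENNReal.ofReal_ne_top) key ((J_integrable hp t).mono_set hsub)
  have hvol : (volume (Ioc c (c + 1))).toReal = 1 := by
    rw [Real.volume_Ioc]
    norm_num
  rw [measureReal_def, hvol, mul_one] at h4
  exact le_trans h4 h3

lemma J_hasDerivAt {p : ℝ} (hp : -1 < p) (t₀ : ℝ) :
    HasDerivAt (fun t => J p t) (J (p + 1) t₀) t₀ := by
  have hp1 : (-1:ℝ) < p + 1 := by linarith
  have key := hasDerivAt_integral_of_dominated_loc_of_deriv_le
    (μ := volume.restrict (Ioi (0:ℝ))) (F := fun t u => Jker p t u)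
    (F' := fun t u => Jker (p + 1) t u)
    (bound := fun u => Jker (p + 1) (|t₀| + 1) u)
    (x₀ := t₀) (s := Metric.ball t₀ 1) (Metric.ball_mem_nhds t₀ one_pos)
    (Eventually.of_forall fun t => (Jker_meas p t).aestronglyMeasurable)
    (J_integrable hp t₀)
    ((Jker_meas (p + 1) t₀).aestronglyMeasurable)
    ?_ (J_integrable hp1 (|t₀| + 1)) ?_
  · exact key.2
  · filter_upwards [ae_restrict_mem measurableSet_Ioi] with u hu t ht
    have hu0 : (0:ℝ) < u := hu
    rw [Real.norm_of_nonneg (Jker_nonneg (p + 1) t hu0.le)]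
    unfold Jker
    refine mul_le_mul_of_nonneg_left (Real.exp_le_exp.2 ?_) (Real.rpow_nonneg hu0.le _)
    have hd : dist t t₀ < 1 := Metric.mem_ball.1 ht
    rw [Real.dist_eq] at hd
    have : t ≤ |t₀| + 1 := by
      have h1 := (abs_lt.1 hd).2
      linarith [le_abs_self t₀]
    have := mul_le_mul_of_nonneg_right this hu0.le
    linarith
  · filter_upwards [ae_restrict_mem measurableSet_Ioi] with u hu t _
    have hu0 : (0:ℝ) < u := hu
    have hinner : HasDerivAt (fun t : ℝ => t * u - u ^ 2 / 2) u t := by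
      simpa using ((hasDerivAt_id t).mul_const u).sub_const (u ^ 2 / 2)
    have hexp := hinner.exp
    have := hexp.const_mul (u ^ p)
    have heq : u ^ p * (Real.exp (t * u - u ^ 2 / 2) * u) = Jker (p + 1) t u := by
      unfold Jker
      rw [Real.rpow_add_one (ne_of_gt hu0)]
      ring
    rw [heq] at this
    exact this

lemma exp_div_J_tendsto {p k θ : ℝ} (hp : -1 < p) (hk : 0 < k) :
    Tendsto (fun x => Real.exp x / J p (k * (x - θ))) atTop (nhds 0) := by
  set c : ℝ := 2 / k with hcdef
  have hc : 0 < c := by positivity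
  set m : ℝ := min (c ^ p) ((c + 1) ^ p) * Real.exp (-(c + 1) ^ 2 / 2) with hmdef
  have hm : 0 < m := by
    refine mul_pos (lt_min ?_ ?_) (Real.exp_pos _)
    · exact Real.rpow_pos_of_pos hc p
    · exact Real.rpow_pos_of_pos (by linarith) p
  have hCb : Tendsto (fun x : ℝ => Real.exp (2 * θ) / m * Real.exp (-x)) atTop (nhds 0) := by
    have := Real.tendsto_exp_neg_atTop_nhds_zero.const_mul (Real.exp (2 * θ) / m)
    rw [mul_zero] at this
    exact this
  refine tendsto_of_tendsto_of_tendsto_of_le_of_le' tendsto_const_nhds hCb ?_ ?_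
  · filter_upwards with x
    exact div_nonneg (Real.exp_pos x).le (J_pos hp _).le
  · filter_upwards [eventually_ge_atTop θ] with x hx
    have ht : 0 ≤ k * (x - θ) := mul_nonneg hk.le (by linarith)
    have hlb : m * Real.exp (2 * (x - θ)) ≤ J p (k * (x - θ)) := by
      have h := J_lb hp hc ht
      rw [← hmdef] at h
      have harg : k * (x - θ) * c = 2 * (x - θ) := by
        rw [hcdef]
        field_simp
      rwa [harg] at h
    have hpos : 0 < m * Real.exp (2 * (x - θ)) := mul_pos hm (Real.exp_pos _)
    calc Real.exp x / J p (k * (x - θ)) ≤ Real.exp x / (m * Real.exp (2 * (x - θ))) := by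
          apply div_le_div_of_nonneg_left (Real.exp_pos x).le hpos hlb
      _ = Real.exp (2 * θ) / m * Real.exp (-x) := by
          have e1 : Real.exp x / Real.exp (2 * (x - θ)) = Real.exp (2 * θ) * Real.exp (-x) := by
            rw [← Real.exp_sub, ← Real.exp_add]
            congr 1
            ring
          calc Real.exp x / (m * Real.exp (2 * (x - θ)))
              = Real.exp x / Real.exp (2 * (x - θ)) / m := by ring
            _ = Real.exp (2 * θ) * Real.exp (-x) / m := by rw [e1]
            _ = Real.exp (2 * θ) / m * Real.exp (-x) := by ring

/-- H'(z) → 0 as z → +∞. -/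
theorem stmt11
    (μ σ θ r c_s c_b : ℝ)
    (hμ : 0 < μ) (hσ : 0 < σ) (hr : 0 < r) (hcs : 0 < c_s) (hcb : 0 < c_b)
    (F G : ℝ → ℝ)
    (hF : ∀ x : ℝ, F x = ∫ u in Ioi (0:ℝ),
        u ^ (r / μ - 1) * Real.exp (Real.sqrt (2 * μ / σ ^ 2) * (x - θ) * u - u ^ 2 / 2))
    (hG : ∀ x : ℝ, G x = ∫ u in Ioi (0:ℝ),
        u ^ (r / μ - 1) * Real.exp (Real.sqrt (2 * μ / σ ^ 2) * (θ - x) * u - u ^ 2 / 2))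
    (ψ : ℝ → ℝ) (hψ : ∀ x, ψ x = F x / G x)
    (ψinv : ℝ → ℝ)
    (hinv_left : ∀ x : ℝ, ψinv (ψ x) = x)
    (hinv_right : ∀ z : ℝ, 0 < z → ψ (ψinv z) = z)
    (H : ℝ → ℝ)
    (hH : ∀ z : ℝ, 0 < z → H z = (Real.exp (ψinv z) - c_s) / G (ψinv z))
    (hH0 : H 0 = 0) :
    Filter.Tendsto (deriv H) Filter.atTop (nhds 0) := by
  set k := Real.sqrt (2 * μ / σ ^ 2) with hkdef
  have hk : 0 < k := Real.sqrt_pos.2 (by positivity)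
  set p := r / μ - 1 with hpdef
  have hp : (-1:ℝ) < p := by
    have : 0 < r / μ := div_pos hr hμ
    rw [hpdef]; linarith
  have hp1 : (-1:ℝ) < p + 1 := by linarith
  -- F and G in terms of J
  have hFJ : ∀ x, F x = J p (k * (x - θ)) := by
    intro x; rw [hF x]; rfl
  have hGJ : ∀ x, G x = J p (k * (θ - x)) := by
    intro x; rw [hG x]; rfl
  set Fd : ℝ → ℝ := fun y => k * J (p + 1) (k * (y - θ)) with hFddef
  set Gd : ℝ → ℝ := fun y => -(k * J (p + 1) (k * (θ - y))) with hGddef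
  -- positivity
  have hFpos : ∀ x, 0 < F x := fun x => (hFJ x) ▸ J_pos hp _
  have hGpos : ∀ x, 0 < G x := fun x => (hGJ x) ▸ J_pos hp _
  have hFdpos : ∀ x, 0 < Fd x := fun x => mul_pos hk (J_pos hp1 _)
  have hGdneg : ∀ x, Gd x < 0 := fun x => neg_lt_zero.2 (mul_pos hk (J_pos hp1 _))
  -- derivatives of F and G
  have hFd : ∀ x, HasDerivAt F (Fd x) x := by
    intro x
    have hinner : HasDerivAt (fun y : ℝ => k * (y - θ)) k x := by
      simpa using ((hasDerivAt_id x).sub_const θ).const_mul k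
    have hcomp := (J_hasDerivAt hp (k * (x - θ))).comp x hinner
    have := hcomp.congr_of_eventuallyEq (Eventually.of_forall hFJ)
    simpa [hFddef, mul_comm] using this
  have hGd : ∀ x, HasDerivAt G (Gd x) x := by
    intro x
    have hinner : HasDerivAt (fun y : ℝ => k * (θ - y)) (-k) x := by
      simpa using ((hasDerivAt_const x θ).sub (hasDerivAt_id x)).const_mul k
    have hcomp := (J_hasDerivAt hp (k * (θ - x))).comp x hinner
    have := hcomp.congr_of_eventuallyEq (Eventually.of_forall hGJ)
    have heq : J (p + 1) (k * (θ - x)) * (-k) = Gd x := by rw [hGddef]; ring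
    rw [heq] at this
    exact this
  -- derivative of ψ
  have hψd : ∀ x, HasDerivAt ψ ((Fd x * G x - F x * Gd x) / (G x) ^ 2) x := by
    intro x
    exact ((hFd x).div (hGd x) (ne_of_gt (hGpos x))).congr_of_eventuallyEq
      (Eventually.of_forall hψ)
  have hden : ∀ x, 0 < Fd x * G x - F x * Gd x := by
    intro x
    nlinarith [hFdpos x, hGpos x, hFpos x, hGdneg x]
  have hψdpos : ∀ x, 0 < (Fd x * G x - F x * Gd x) / (G x) ^ 2 :=
    fun x => div_pos (hden x) (pow_pos (hGpos x) 2)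
  have hmono : StrictMono ψ :=
    strictMono_of_deriv_pos fun x => by rw [(hψd x).deriv]; exact hψdpos x
  have hψpos : ∀ x, 0 < ψ x := fun x => (hψ x) ▸ div_pos (hFpos x) (hGpos x)
  have hinv_gt : ∀ b z : ℝ, 0 < z → ψ b < z → b < ψinv z := by
    intro b z hz h
    have := hinv_right z hz
    exact hmono.lt_iff_lt.1 (by rw [this]; exact h)
  have hinv_lt : ∀ b z : ℝ, 0 < z → z < ψ b → ψinv z < b := by
    intro b z hz h
    have := hinv_right z hz
    exact hmono.lt_iff_lt.1 (by rw [this]; exact h)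
  have ψinv_atTop : Tendsto ψinv atTop atTop := by
    rw [tendsto_atTop]
    intro b
    filter_upwards [eventually_gt_atTop (max 0 (ψ b))] with z hz
    have hz0 : 0 < z := lt_of_le_of_lt (le_max_left _ _) hz
    exact (hinv_gt b z hz0 (lt_of_le_of_lt (le_max_right _ _) hz)).le
  have hcont : ∀ z : ℝ, 0 < z → ContinuousAt ψinv z := by
    intro z hz
    have hx : ψ (ψinv z) = z := hinv_right z hz
    rw [ContinuousAt]
    refine tendsto_order.2 ⟨?_, ?_⟩
    · intro a ha
      have h1 : ψ a < z := by rw [← hx]; exact hmono ha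
      filter_upwards [IsOpen.mem_nhds isOpen_Ioi (show z ∈ Ioi (ψ a) from h1)] with y hy
      exact hinv_gt a y (lt_trans (hψpos a) hy) hy
    · intro b hb
      have h1 : z < ψ b := by rw [← hx]; exact hmono hb
      filter_upwards [IsOpen.mem_nhds isOpen_Ioo (show z ∈ Ioo 0 (ψ b) from ⟨hz, h1⟩)] with y hy
      exact hinv_lt b y hy.1 hy.2
  have hinvd : ∀ z : ℝ, 0 < z → HasDerivAt ψinv
      (((Fd (ψinv z) * G (ψinv z) - F (ψinv z) * Gd (ψinv z)) / (G (ψinv z)) ^ 2))⁻¹ z := by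
    intro z hz
    refine HasDerivAt.of_local_left_inverse (hcont z hz) (hψd (ψinv z))
      (ne_of_gt (hψdpos _)) ?_
    filter_upwards [IsOpen.mem_nhds isOpen_Ioi (show z ∈ Ioi (0:ℝ) from hz)] with y hy
    exact hinv_right y hy
  set D : ℝ → ℝ := fun x =>
    (Real.exp x * G x - (Real.exp x - c_s) * Gd x) / (Fd x * G x - F x * Gd x) with hDdef
  have hHd : ∀ z : ℝ, 0 < z → HasDerivAt H (D (ψinv z)) z := by
    intro z hz
    set x := ψinv z with hxdef
    have hh : HasDerivAt (fun y => (Real.exp y - c_s) / G y)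
        ((Real.exp x * G x - (Real.exp x - c_s) * Gd x) / (G x) ^ 2) x :=
      ((Real.hasDerivAt_exp x).sub_const c_s).div (hGd x) (ne_of_gt (hGpos x))
    have hcomp := hh.comp z (hinvd z hz)
    have hHeq : H =ᶠ[nhds z] (fun y => (Real.exp y - c_s) / G y) ∘ ψinv := by
      filter_upwards [IsOpen.mem_nhds isOpen_Ioi (show z ∈ Ioi (0:ℝ) from hz)] with y hy
      exact hH y hy
    have hder := hcomp.congr_of_eventuallyEq hHeq
    have heq : (Real.exp x * G x - (Real.exp x - c_s) * Gd x) / (G x) ^ 2 *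
        ((Fd x * G x - F x * Gd x) / (G x) ^ 2)⁻¹ = D x := by
      rw [hDdef]
      have h1 : Fd x * G x - F x * Gd x ≠ 0 := ne_of_gt (hden x)
      have h2 : G x ≠ 0 := ne_of_gt (hGpos x)
      field_simp
    rw [heq] at hder
    exact hder
  -- bounds on D
  have hD0 : ∀ x : ℝ, c_s ≤ Real.exp x → 0 ≤ D x := by
    intro x hx
    refine div_nonneg ?_ (hden x).le
    nlinarith [hGpos x, hGdneg x, Real.exp_pos x]
  have hDle : ∀ x : ℝ, c_s ≤ Real.exp x →
      D x ≤ Real.exp x / F x + Real.exp x / Fd x := by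
    intro x hx
    have h1 : Real.exp x / F x + Real.exp x / Fd x
        = Real.exp x * (Fd x + F x) / (F x * Fd x) := by
      rw [div_add_div _ _ (ne_of_gt (hFpos x)) (ne_of_gt (hFdpos x))]
      congr 1
      ring
    rw [hDdef, h1, div_le_div_iff₀ (hden x) (mul_pos (hFpos x) (hFdpos x))]
    nlinarith [mul_pos (mul_pos (Real.exp_pos x) (mul_pos (hFdpos x) (hFdpos x))) (hGpos x),
      mul_pos (mul_pos (Real.exp_pos x) (mul_pos (hFpos x) (hFpos x))) (neg_pos.2 (hGdneg x)),
      mul_nonneg (mul_nonneg hcs.le (mul_pos (hFpos x) (hFdpos x)).le) (neg_pos.2 (hGdneg x)).le]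
  -- limits of the bounding functions
  have T1 : Tendsto (fun x => Real.exp x / F x) atTop (nhds 0) := by
    have := exp_div_J_tendsto (k := k) (θ := θ) hp hk
    refine this.congr fun x => ?_
    rw [hFJ x]
  have T2 : Tendsto (fun x => Real.exp x / Fd x) atTop (nhds 0) := by
    have h := (exp_div_J_tendsto (k := k) (θ := θ) hp1 hk).const_mul k⁻¹
    rw [mul_zero] at h
    refine h.congr fun x => ?_
    rw [hFddef]
    rw [div_eq_mul_inv, div_eq_mul_inv, mul_inv]
    ring
  -- final assembly
  have hfinal : ∀ᶠ z in atTop, 0 ≤ deriv H z ∧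
      deriv H z ≤ Real.exp (ψinv z) / F (ψinv z) + Real.exp (ψinv z) / Fd (ψinv z) := by
    filter_upwards [eventually_gt_atTop (0:ℝ),
      ψinv_atTop.eventually (eventually_ge_atTop (Real.log c_s))] with z hz hx
    have hcx : c_s ≤ Real.exp (ψinv z) := by
      calc c_s = Real.exp (Real.log c_s) := (Real.exp_log hcs).symm
      _ ≤ Real.exp (ψinv z) := Real.exp_le_exp.2 hx
    rw [(hHd z hz).deriv]
    exact ⟨hD0 _ hcx, hDle _ hcx⟩
  have hbound : Tendsto (fun z => Real.exp (ψinv z) / F (ψinv z)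
      + Real.exp (ψinv z) / Fd (ψinv z)) atTop (nhds 0) := by
    have := (T1.add T2).comp ψinv_atTop
    rw [add_zero] at this
    exact this
  exact tendsto_of_tendsto_of_tendsto_of_le_of_le' tendsto_const_nhds hbound
    (hfinal.mono fun z h => h.1) (hfinal.mono fun z h => h.2)
end
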